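/- arXiv:2104.07718 — 4 statements merged into one kernel-verified Lean document; each statement's English description precedes it below -/
import Mathlib

section
/- Let F and G be cumulative distribution functions on ℝ with F ≤_st G. Suppose (X,Y), (X^c,Y^c), (X',Y') are all pairs of random variables on an atomless probability space belonging to F^o_2(F,G), such that (X^c,Y^c) is comonotonic and (X',Y') is DL-coupled (its joint distribution function is D_*^{F,G}). Then X^c + Y^c ≤_cv X + Y ≤_cv X' + Y', i.e., the comonotonic sum is smallest and the DL-coupled sum is largest in concave order among all sums X+Y with (X,Y) ∈ F^o_2(F,G). -/
open MeasureTheory Set Filter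

noncomputable section

variable {Ω : Type*} [MeasurableSpace Ω]

/-- A cumulative distribution function on `ℝ`. -/
structure IsCDF (F : ℝ → ℝ) : Prop where
  mono : Monotone F
  right_cont : ∀ x, ContinuousWithinAt F (Set.Ici x) x
  tendsto_atBot : Filter.Tendsto F Filter.atBot (nhds 0)
  tendsto_atTop : Filter.Tendsto F Filter.atTop (nhds 1)

/-- The probability space is atomless. -/
def Atomless (μ : Measure Ω) : Prop :=
  ∀ s : Set Ω, MeasurableSet s → 0 < μ s →
    ∃ t : Set Ω, MeasurableSet t ∧ t ⊆ s ∧ 0 < μ t ∧ μ t < μ s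

/-- The distribution function of a random variable. -/
def distFun (μ : Measure Ω) (X : Ω → ℝ) : ℝ → ℝ :=
  fun x => (μ {ω | X ω ≤ x}).toReal

/-- `X` is a random variable distributed according to `F`. -/
def HasCDF (μ : Measure Ω) (X : Ω → ℝ) (F : ℝ → ℝ) : Prop :=
  Measurable X ∧ ∀ x, distFun μ X x = F x

/-- Stochastic order `F ≤_st G`, i.e. `G(x) ≤ F(x)` for all `x`. -/
def StOrder (F G : ℝ → ℝ) : Prop := ∀ x, G x ≤ F x

/-- The ordered-coupling set `F^o_2(F,G)`: `X ~ F`, `Y ~ G`, `X ≤ Y` a.s. -/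
def OrderedCoupling (μ : Measure Ω) (F G : ℝ → ℝ) (X Y : Ω → ℝ) : Prop :=
  HasCDF μ X F ∧ HasCDF μ Y G ∧ ∀ᵐ ω ∂μ, X ω ≤ Y ω

/-- The directional lower (DL) coupling distribution function `D_*^{F,G}`. -/
def DLdf (F G : ℝ → ℝ) (x y : ℝ) : ℝ :=
  if y ≤ x then G y else F x - sInf ((fun z => F z - G z) '' Set.Icc x y)

/-- `(X,Y)` is DL-coupled: its joint distribution function is `D_*^{F,G}`. -/
def IsDLCoupled (μ : Measure Ω) (F G : ℝ → ℝ) (X Y : Ω → ℝ) : Prop :=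
  ∀ x y : ℝ, (μ {ω | X ω ≤ x ∧ Y ω ≤ y}).toReal = DLdf F G x y

/-- `(X,Y)` is comonotonic. -/
def Comonotonic (μ : Measure Ω) (X Y : Ω → ℝ) : Prop :=
  ∃ (U : Ω → ℝ) (f g : ℝ → ℝ), Monotone f ∧ Monotone g ∧
    (∀ᵐ ω ∂μ, X ω = f (U ω)) ∧ (∀ᵐ ω ∂μ, Y ω = g (U ω))

/-- Concave order for random variables on the same space:
`E[u(X)] ≤ E[u(Y)]` for every concave `u` for which both expectations exist. -/
def ConcaveOrderRV (μ : Measure Ω) (X Y : Ω → ℝ) : Prop :=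
  ∀ u : ℝ → ℝ, ConcaveOn ℝ Set.univ u →
    Integrable (fun ω => u (X ω)) μ → Integrable (fun ω => u (Y ω)) μ →
    ∫ ω, u (X ω) ∂μ ≤ ∫ ω, u (Y ω) ∂μ

/-!
Write `H(a, b) = P(X ≤ a, Y ≤ b)`. With the marginals fixed, `H ≤ min (F a) (G b)`, with
equality for a comonotonic pair, and if `X ≤ Y` then `H ≥ D_*^{F,G}`: for `a < b`,
`F a - H(a, b) = P(X ≤ a, b < Y) ≤ P(X ≤ z < Y) = F z - G z` for every `z ∈ [a, b]`.
By Tonelli, `E (t - X - Y)⁺ = ∫ H(a, t - a) da` and `E (X + Y - t)⁺ = ∫ P(a < X, t - a < Y) da`,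
so both stop-loss transforms of `X + Y` are monotone in `H`.

Stop-loss order gives concave order. For `u` increasing and concave,
`u c - u (min s c) = ∫_{(s, c)} u'₊`, and the layer-cake formula in the antitone weight `u'₊`
writes this as a mixture of put payoffs `(t - s)⁺`; letting `c → ∞` handles `u`, reflection
handles decreasing `u`, and any other concave `u` is split at its maximum `m` into
`u (min s m)` and `u (max s m) - u m`.
-/

open scoped ENNReal Topology

section ConcaveFunctions

variable {u : ℝ → ℝ}

lemma ConcaveOn.min_le_of_le_of_le (hu : ConcaveOn ℝ univ u) {a b c : ℝ} (hab : a ≤ b)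
    (hbc : b ≤ c) : min (u a) (u c) ≤ u b :=
  hu.ge_on_segment (mem_univ a) (mem_univ c) <| by
    rw [segment_eq_Icc (hab.trans hbc)]
    exact ⟨hab, hbc⟩

lemma ConcaveOn.continuous (hu : ConcaveOn ℝ univ u) : Continuous u :=
  continuousOn_univ.1 (hu.continuousOn isOpen_univ)

lemma ConcaveOn.hasDerivWithinAt_rightDeriv (hu : ConcaveOn ℝ univ u) (x : ℝ) :
    HasDerivWithinAt u (derivWithin u (Ioi x) x) (Ioi x) x := by
  have h := hu.neg.differentiableWithinAt_Ioi_of_mem_interior (x := x) (by simp)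
  simpa using h.neg.hasDerivWithinAt

lemma ConcaveOn.antitone_rightDeriv (hu : ConcaveOn ℝ univ u) :
    Antitone fun x => derivWithin u (Ioi x) x := by
  intro x y hxy
  simpa [derivWithin.neg] using hu.neg.monotoneOn_rightDeriv (by simp) (by simp) hxy

lemma ConcaveOn.integral_rightDeriv_eq_sub (hu : ConcaveOn ℝ univ u) (a b : ℝ) :
    ∫ r in a..b, derivWithin u (Ioi r) r = u b - u a :=
  intervalIntegral.integral_eq_sub_of_hasDeriv_right hu.continuous.continuousOn
    (fun x _ => hu.hasDerivWithinAt_rightDeriv x) hu.antitone_rightDeriv.intervalIntegrable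

lemma ConcaveOn.ofReal_sub_comp_min_eq (hu : ConcaveOn ℝ univ u) (hmono : Monotone u) (s c : ℝ) :
    ENNReal.ofReal (u c - u (min s c)) =
      ∫⁻ r in Ioo s c, ENNReal.ofReal (derivWithin u (Ioi r) r) := by
  rcases le_or_gt c s with hcs | hsc
  · simp [min_eq_right hcs, Ioo_eq_empty_of_le hcs]
  rw [min_eq_left hsc.le, ← hu.integral_rightDeriv_eq_sub, intervalIntegral.integral_of_le hsc.le,
    integral_Ioc_eq_integral_Ioo]
  refine ofReal_integral_eq_lintegral_ofReal ?_
    (ae_of_all _ fun r => (hmono.monotoneOn (Ioi r)).derivWithin_nonneg)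
  exact hu.antitone_rightDeriv.intervalIntegrable.1.mono_set Ioo_subset_Ioc_self

lemma ConcaveOn.exists_forall_le_of_not_monotone_of_not_antitone (hu : ConcaveOn ℝ univ u)
    (hmono : ¬Monotone u) (hanti : ¬Antitone u) : ∃ m, ∀ x, u x ≤ u m := by
  obtain ⟨p, q, hpq, hdec⟩ : ∃ p q, p ≤ q ∧ u q < u p := by simpa [Monotone] using hmono
  obtain ⟨p', q', hpq', hinc⟩ : ∃ p q, p ≤ q ∧ u p < u q := by simpa [Antitone] using hanti
  have hK : min p' p ≤ max q q' := (min_le_right _ _).trans (hpq.trans (le_max_left _ _))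
  obtain ⟨m, -, hm⟩ := isCompact_Icc.exists_isMaxOn (nonempty_Icc.2 hK)
    hu.continuous.continuousOn
  refine ⟨m, fun x => ?_⟩
  rcases lt_or_ge x (min p' p) with hx | hx
  · have hxp' : u x ≤ u p' := ((min_le_iff.1 (hu.min_le_of_le_of_le
      (hx.le.trans (min_le_left _ _)) hpq')).resolve_right (not_le.2 hinc))
    exact hxp'.trans (hm ⟨min_le_left _ _, hpq'.trans (le_max_right _ _)⟩)
  rcases le_or_gt x (max q q') with hx' | hx'
  · exact hm ⟨hx, hx'⟩
  · have hxq : u x ≤ u q := ((min_le_iff.1 (hu.min_le_of_le_of_le hpq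
      ((le_max_left _ _).trans hx'.le))).resolve_left (not_le.2 hdec))
    exact hxq.trans (hm ⟨(min_le_right _ _).trans hpq, le_max_left _ _⟩)

lemma ConcaveOn.monotoneOn_Iic_of_forall_le (hu : ConcaveOn ℝ univ u) {m : ℝ}
    (hm : ∀ x, u x ≤ u m) : MonotoneOn u (Iic m) := fun x _ _ hy hxy => by
  simpa [min_eq_left (hm x)] using hu.min_le_of_le_of_le hxy hy

lemma ConcaveOn.antitoneOn_Ici_of_forall_le (hu : ConcaveOn ℝ univ u) {m : ℝ}
    (hm : ∀ x, u x ≤ u m) : AntitoneOn u (Ici m) := fun x hx y _ hxy => by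
  simpa [min_eq_right (hm y)] using hu.min_le_of_le_of_le hx hxy

lemma ConcaveOn.comp_min (hu : ConcaveOn ℝ univ u) {m : ℝ} (hmono : MonotoneOn u (Iic m)) :
    ConcaveOn ℝ univ fun s => u (min s m) := by
  refine (concaveOn_univ_piecewise_Iic_of_monotoneOn_Iic_antitoneOn_Ici
    (hu.subset (subset_univ _) (convex_Iic m)) (concaveOn_const (u m) (convex_Ici m)) hmono
    antitoneOn_const rfl).congr fun s _ => ?_
  by_cases h : s ≤ m <;> simp [piecewise, h, le_of_not_ge]

lemma ConcaveOn.comp_max (hu : ConcaveOn ℝ univ u) {m : ℝ} (hanti : AntitoneOn u (Ici m)) :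
    ConcaveOn ℝ univ fun s => u (max s m) := by
  refine (concaveOn_univ_piecewise_Ici_of_antitoneOn_Ici_monotoneOn_Iic
    (hu.subset (subset_univ _) (convex_Ici m)) (concaveOn_const (u m) (convex_Iic m)) hanti
    monotoneOn_const rfl).congr fun s _ => ?_
  by_cases h : m ≤ s <;> simp [piecewise, h, le_of_not_ge]

end ConcaveFunctions

def putValue (μ : Measure Ω) (S : Ω → ℝ) (t : ℝ) : ℝ≥0∞ :=
  ∫⁻ ω, ENNReal.ofReal (t - S ω) ∂μ

def callValue (μ : Measure Ω) (S : Ω → ℝ) (t : ℝ) : ℝ≥0∞ :=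
  ∫⁻ ω, ENNReal.ofReal (S ω - t) ∂μ

lemma callValue_eq_putValue_neg (μ : Measure Ω) (S : Ω → ℝ) (t : ℝ) :
    callValue μ S t = putValue μ (fun ω => -S ω) (-t) := by
  simp only [callValue, putValue, neg_sub_neg]

lemma measurable_measure_lt (μ : Measure Ω) (S : Ω → ℝ) : Measurable fun r => μ {ω | S ω < r} :=
  Monotone.measurable fun _ _ hrr' => measure_mono fun _ hω => lt_of_lt_of_le hω hrr'

lemma lintegral_measure_Ioi_eq (μ : Measure Ω) [SFinite μ] (ν : Measure ℝ) [SFinite ν]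
    {S : Ω → ℝ} (hS : Measurable S) :
    ∫⁻ ω, ν (Ioi (S ω)) ∂μ = ∫⁻ r, μ {ω | S ω < r} ∂ν := by
  have hE : MeasurableSet {p : Ω × ℝ | S p.1 < p.2} :=
    measurableSet_lt (hS.comp measurable_fst) measurable_snd
  exact (Measure.prod_apply hE).symm.trans (Measure.prod_apply_symm hE)

lemma putValue_eq_setLIntegral (μ : Measure Ω) [SFinite μ] {S : Ω → ℝ} (hS : Measurable S)
    (t : ℝ) : putValue μ S t = ∫⁻ r in Iio t, μ {ω | S ω < r} := by
  rw [← lintegral_measure_Ioi_eq μ _ hS]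
  refine lintegral_congr fun ω => ?_
  rw [Measure.restrict_apply measurableSet_Ioi, Ioi_inter_Iio, Real.volume_Ioo]

lemma setLIntegral_le_of_isLowerSet {w₁ w₂ : ℝ → ℝ≥0∞}
    (h : ∀ t, ∫⁻ r in Iio t, w₁ r ≤ ∫⁻ r in Iio t, w₂ r) {A : Set ℝ} (hA : IsLowerSet A)
    (hbdd : BddAbove A) : ∫⁻ r in A, w₁ r ≤ ∫⁻ r in A, w₂ r := by
  rcases A.eq_empty_or_nonempty with rfl | hne
  · simp
  have hIio : Iio (sSup A) ⊆ A := fun r hr =>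
    let ⟨_, haA, hra⟩ := exists_lt_of_lt_csSup hne hr
    hA hra.le haA
  calc ∫⁻ r in A, w₁ r ≤ ∫⁻ r in Iic (sSup A), w₁ r :=
        lintegral_mono_set fun r hr => le_csSup hbdd hr
    _ = ∫⁻ r in Iio (sSup A), w₁ r := setLIntegral_congr Iio_ae_eq_Iic.symm
    _ ≤ ∫⁻ r in Iio (sSup A), w₂ r := h _
    _ ≤ ∫⁻ r in A, w₂ r := lintegral_mono_set hIio

lemma setLIntegral_mul_le_of_antitone {w₁ w₂ : ℝ → ℝ≥0∞} (hw₁ : Measurable w₁)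
    (hw₂ : Measurable w₂) (h : ∀ t, ∫⁻ r in Iio t, w₁ r ≤ ∫⁻ r in Iio t, w₂ r) {g : ℝ → ℝ}
    (hg : Antitone g) (hg₀ : ∀ r, 0 ≤ g r) (c : ℝ) :
    ∫⁻ r in Iio c, w₁ r * ENNReal.ofReal (g r) ≤ ∫⁻ r in Iio c, w₂ r * ENNReal.ofReal (g r) := by
  have hlevel : ∀ v, MeasurableSet {r | v < g r} := fun v =>
    measurableSet_lt measurable_const hg.measurable
  have layer : ∀ w : ℝ → ℝ≥0∞, Measurable w → ∫⁻ r in Iio c, w r * ENNReal.ofReal (g r) =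
      ∫⁻ v in Ioi 0, ∫⁻ r in {r | v < g r} ∩ Iio c, w r := by
    intro w hw
    calc ∫⁻ r in Iio c, w r * ENNReal.ofReal (g r)
        = ∫⁻ r, ENNReal.ofReal (g r) ∂(volume.restrict (Iio c)).withDensity w :=
          (lintegral_withDensity_eq_lintegral_mul _ hw
            (ENNReal.measurable_ofReal.comp hg.measurable)).symm
      _ = ∫⁻ v in Ioi 0, (volume.restrict (Iio c)).withDensity w {r | v < g r} :=
          lintegral_eq_lintegral_meas_lt _ (ae_of_all _ hg₀) hg.measurable.aemeasurable
      _ = _ := lintegral_congr fun v => by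
          rw [withDensity_apply _ (hlevel v), Measure.restrict_restrict (hlevel v)]
  rw [layer w₁ hw₁, layer w₂ hw₂]
  refine lintegral_mono fun v => setLIntegral_le_of_isLowerSet h ?_ ⟨c, fun r hr => hr.2.le⟩
  exact fun a b hba ha => ⟨ha.1.trans_le (hg hba), hba.trans_lt ha.2⟩

section StopLossOrder

variable {μ : Measure Ω} {u : ℝ → ℝ} {S₁ S₂ : Ω → ℝ}

lemma ConcaveOn.lintegral_ofReal_sub_comp_min_eq [SFinite μ] (hu : ConcaveOn ℝ univ u)
    (hmono : Monotone u) {S : Ω → ℝ} (hS : Measurable S) (c : ℝ) :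
    ∫⁻ ω, ENNReal.ofReal (u c - u (min (S ω) c)) ∂μ =
      ∫⁻ r in Iio c, μ {ω | S ω < r} * ENNReal.ofReal (derivWithin u (Ioi r) r) := by
  set ν := (volume.restrict (Iio c)).withDensity fun r => ENNReal.ofReal (derivWithin u (Ioi r) r)
  have hν : ∀ s, ν (Ioi s) = ENNReal.ofReal (u c - u (min s c)) := fun s => by
    rw [withDensity_apply _ measurableSet_Ioi, Measure.restrict_restrict measurableSet_Ioi,
      Ioi_inter_Iio, hu.ofReal_sub_comp_min_eq hmono]
  simp_rw [← hν]
  rw [lintegral_measure_Ioi_eq μ ν hS, lintegral_withDensity_eq_lintegral_mul _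
    hu.antitone_rightDeriv.measurable.ennreal_ofReal (measurable_measure_lt μ S)]
  simp only [Pi.mul_apply, mul_comm]

lemma MeasureTheory.Integrable.of_forall_eq_or_eq_const [IsFiniteMeasure μ] {f g : Ω → ℝ}
    (hg : Integrable g μ) (hf : AEStronglyMeasurable f μ) (c : ℝ)
    (h : ∀ ω, f ω = g ω ∨ f ω = c) : Integrable f μ :=
  Integrable.mono' (hg.norm.add (integrable_const ‖c‖)) hf <| ae_of_all _ fun ω => by
    rcases h ω with h | h <;> simp [h]

lemma MeasureTheory.Integrable.comp_min_const [IsFiniteMeasure μ] (hu : Continuous u)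
    {S : Ω → ℝ} (hS : Measurable S) (hI : Integrable (fun ω => u (S ω)) μ) (c : ℝ) :
    Integrable (fun ω => u (min (S ω) c)) μ :=
  hI.of_forall_eq_or_eq_const (hu.measurable.comp (hS.min measurable_const)).aestronglyMeasurable
    (u c) fun ω => (min_choice (S ω) c).imp (congrArg u) (congrArg u)

lemma MeasureTheory.Integrable.comp_max_const [IsFiniteMeasure μ] (hu : Continuous u)
    {S : Ω → ℝ} (hS : Measurable S) (hI : Integrable (fun ω => u (S ω)) μ) (c : ℝ) :
    Integrable (fun ω => u (max (S ω) c)) μ :=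
  hI.of_forall_eq_or_eq_const (hu.measurable.comp (hS.max measurable_const)).aestronglyMeasurable
    (u c) fun ω => (max_choice (S ω) c).imp (congrArg u) (congrArg u)

lemma integral_comp_min_le_of_putValue_le [IsFiniteMeasure μ] (hS₁ : Measurable S₁)
    (hS₂ : Measurable S₂) (hput : ∀ t, putValue μ S₁ t ≤ putValue μ S₂ t)
    (hu : ConcaveOn ℝ univ u) (hmono : Monotone u) (hI₁ : Integrable (fun ω => u (S₁ ω)) μ)
    (hI₂ : Integrable (fun ω => u (S₂ ω)) μ) (c : ℝ) :
    ∫ ω, u (min (S₂ ω) c) ∂μ ≤ ∫ ω, u (min (S₁ ω) c) ∂μ := by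
  have hmin₁ := hI₁.comp_min_const hu.continuous hS₁ c
  have hmin₂ := hI₂.comp_min_const hu.continuous hS₂ c
  have hnonneg : ∀ S : Ω → ℝ, 0 ≤ᵐ[μ] fun ω => u c - u (min (S ω) c) := fun S =>
    ae_of_all _ fun ω => sub_nonneg.2 (hmono (min_le_right _ _))
  have hlin : ∫⁻ ω, ENNReal.ofReal (u c - u (min (S₁ ω) c)) ∂μ ≤
      ∫⁻ ω, ENNReal.ofReal (u c - u (min (S₂ ω) c)) ∂μ := by
    rw [hu.lintegral_ofReal_sub_comp_min_eq hmono hS₁,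
      hu.lintegral_ofReal_sub_comp_min_eq hmono hS₂]
    refine setLIntegral_mul_le_of_antitone (measurable_measure_lt μ S₁)
      (measurable_measure_lt μ S₂) (fun t => ?_) hu.antitone_rightDeriv
      (fun r => (hmono.monotoneOn (Ioi r)).derivWithin_nonneg) c
    rw [← putValue_eq_setLIntegral μ hS₁, ← putValue_eq_setLIntegral μ hS₂]
    exact hput t
  have hint₁ : Integrable (fun ω => u c - u (min (S₁ ω) c)) μ :=
    (integrable_const _).sub hmin₁
  have hint₂ : Integrable (fun ω => u c - u (min (S₂ ω) c)) μ :=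
    (integrable_const _).sub hmin₂
  rw [← ofReal_integral_eq_lintegral_ofReal hint₁ (hnonneg S₁),
    ← ofReal_integral_eq_lintegral_ofReal hint₂ (hnonneg S₂),
    ENNReal.ofReal_le_ofReal_iff (integral_nonneg_of_ae (hnonneg S₂)),
    integral_sub (integrable_const _) hmin₁,
    integral_sub (integrable_const _) hmin₂] at hlin
  linarith

lemma integral_comp_le_of_putValue_le_of_monotone [IsFiniteMeasure μ] (hS₁ : Measurable S₁)
    (hS₂ : Measurable S₂) (hput : ∀ t, putValue μ S₁ t ≤ putValue μ S₂ t)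
    (hu : ConcaveOn ℝ univ u) (hmono : Monotone u) (hI₁ : Integrable (fun ω => u (S₁ ω)) μ)
    (hI₂ : Integrable (fun ω => u (S₂ ω)) μ) :
    ∫ ω, u (S₂ ω) ∂μ ≤ ∫ ω, u (S₁ ω) ∂μ := by
  have hlim : ∀ S, Measurable S → Integrable (fun ω => u (S ω)) μ →
      Tendsto (fun n : ℕ => ∫ ω, u (min (S ω) n) ∂μ) atTop (𝓝 (∫ ω, u (S ω) ∂μ)) := by
    intro S hS hI
    refine integral_tendsto_of_tendsto_of_monotone
      (fun n => hI.comp_min_const hu.continuous hS n) hI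
      (ae_of_all _ fun ω n m hnm => hmono (min_le_min_left _ (Nat.cast_le.2 hnm)))
      (ae_of_all _ fun ω => tendsto_atTop_of_eventually_const (i₀ := ⌈S ω⌉₊) fun n hn => ?_)
    rw [min_eq_left ((Nat.le_ceil _).trans (Nat.cast_le.2 hn))]
  exact le_of_tendsto_of_tendsto' (hlim S₂ hS₂ hI₂) (hlim S₁ hS₁ hI₁)
    fun n => integral_comp_min_le_of_putValue_le hS₁ hS₂ hput hu hmono hI₁ hI₂ n

lemma integral_comp_le_of_callValue_le_of_antitone [IsFiniteMeasure μ] (hS₁ : Measurable S₁)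
    (hS₂ : Measurable S₂) (hcall : ∀ t, callValue μ S₁ t ≤ callValue μ S₂ t)
    (hu : ConcaveOn ℝ univ u) (hanti : Antitone u) (hI₁ : Integrable (fun ω => u (S₁ ω)) μ)
    (hI₂ : Integrable (fun ω => u (S₂ ω)) μ) :
    ∫ ω, u (S₂ ω) ∂μ ≤ ∫ ω, u (S₁ ω) ∂μ := by
  have hu_neg : ConcaveOn ℝ univ fun s => u (-s) := hu.comp_linearMap (-LinearMap.id)
  simpa only [neg_neg] using integral_comp_le_of_putValue_le_of_monotone
    (S₁ := fun ω => -S₁ ω) (S₂ := fun ω => -S₂ ω) hS₁.neg hS₂.neg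
    (fun t => by simpa only [callValue_eq_putValue_neg, neg_neg] using hcall (-t)) hu_neg
    (fun a b hab => hanti (neg_le_neg hab)) (by simpa only [neg_neg] using hI₁)
    (by simpa only [neg_neg] using hI₂)

theorem ConcaveOrderRV.of_putValue_le_of_callValue_le [IsProbabilityMeasure μ]
    (hS₁ : Measurable S₁) (hS₂ : Measurable S₂)
    (hput : ∀ t, putValue μ S₁ t ≤ putValue μ S₂ t)
    (hcall : ∀ t, callValue μ S₁ t ≤ callValue μ S₂ t) : ConcaveOrderRV μ S₂ S₁ := by
  intro u hu hI₂ hI₁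
  by_cases hmono : Monotone u
  · exact integral_comp_le_of_putValue_le_of_monotone hS₁ hS₂ hput hu hmono hI₁ hI₂
  by_cases hanti : Antitone u
  · exact integral_comp_le_of_callValue_le_of_antitone hS₁ hS₂ hcall hu hanti hI₁ hI₂
  obtain ⟨m, hm⟩ := hu.exists_forall_le_of_not_monotone_of_not_antitone hmono hanti
  have hmonoOn := hu.monotoneOn_Iic_of_forall_le hm
  have hantiOn := hu.antitoneOn_Ici_of_forall_le hm
  have hsplit : ∀ s, u s = u (min s m) + u (max s m) - u m := fun s => by
    rcases le_total s m with h | h <;> simp [h]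
  have hmin₁ := hI₁.comp_min_const hu.continuous hS₁ m
  have hmin₂ := hI₂.comp_min_const hu.continuous hS₂ m
  have hmax₁ := hI₁.comp_max_const hu.continuous hS₁ m
  have hmax₂ := hI₂.comp_max_const hu.continuous hS₂ m
  have hinc := integral_comp_le_of_putValue_le_of_monotone hS₁ hS₂ hput (hu.comp_min hmonoOn)
    (fun a b hab => hmonoOn (min_le_right a m) (min_le_right b m) (min_le_min_right m hab))
    hmin₁ hmin₂
  have hdec := integral_comp_le_of_callValue_le_of_antitone hS₁ hS₂ hcall (hu.comp_max hantiOn)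
    (fun a b hab => hantiOn (le_max_right a m) (le_max_right b m) (max_le_max_right m hab))
    hmax₁ hmax₂
  have hint : ∀ S : Ω → ℝ, Integrable (fun ω => u (min (S ω) m)) μ →
      Integrable (fun ω => u (max (S ω) m)) μ →
      ∫ ω, u (S ω) ∂μ = ∫ ω, u (min (S ω) m) ∂μ + ∫ ω, u (max (S ω) m) ∂μ - u m :=
    fun S h₁ h₂ => by
      have h : Integrable (fun ω => u (min (S ω) m) + u (max (S ω) m)) μ := h₁.add h₂
      rw [integral_congr_ae (ae_of_all _ fun ω => hsplit (S ω)),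
        integral_sub h (integrable_const _), integral_add h₁ h₂]
      simp
  rw [hint S₁ hmin₁ hmax₁, hint S₂ hmin₂ hmax₂]
  linarith

end StopLossOrder

section JointDistribution

variable {μ : Measure Ω}

lemma HasCDF.measure_le_eq [IsFiniteMeasure μ] {X X' : Ω → ℝ} {F : ℝ → ℝ} (hX : HasCDF μ X F)
    (hX' : HasCDF μ X' F) (a : ℝ) : μ {ω | X ω ≤ a} = μ {ω | X' ω ≤ a} :=
  (ENNReal.toReal_eq_toReal_iff' (measure_ne_top μ _) (measure_ne_top μ _)).1
    ((hX.2 a).trans (hX'.2 a).symm)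

lemma putValue_add_eq [SFinite μ] {X Y : Ω → ℝ} (hX : Measurable X) (hY : Measurable Y) (t : ℝ) :
    putValue μ (fun ω => X ω + Y ω) t = ∫⁻ a, μ {ω | X ω ≤ a ∧ Y ω ≤ t - a} := by
  have hE : MeasurableSet {p : Ω × ℝ | X p.1 ≤ p.2 ∧ Y p.1 ≤ t - p.2} :=
    (measurableSet_le (hX.comp measurable_fst) measurable_snd).inter
      (measurableSet_le (hY.comp measurable_fst) (measurable_const.sub measurable_snd))
  refine (lintegral_congr fun ω => ?_).trans
    ((Measure.prod_apply hE).symm.trans (Measure.prod_apply_symm hE))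
  have hsec : {a | X ω ≤ a ∧ Y ω ≤ t - a} = Icc (X ω) (t - Y ω) := by
    ext a; simp [le_sub_comm]
  simp only [preimage_ofPred_eq, hsec, Real.volume_Icc]
  ring_nf

lemma callValue_add_eq [SFinite μ] {X Y : Ω → ℝ} (hX : Measurable X) (hY : Measurable Y) (t : ℝ) :
    callValue μ (fun ω => X ω + Y ω) t = ∫⁻ a, μ {ω | a < X ω ∧ t - a < Y ω} := by
  have hE : MeasurableSet {p : Ω × ℝ | p.2 < X p.1 ∧ t - p.2 < Y p.1} :=
    (measurableSet_lt measurable_snd (hX.comp measurable_fst)).inter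
      (measurableSet_lt (measurable_const.sub measurable_snd) (hY.comp measurable_fst))
  refine (lintegral_congr fun ω => ?_).trans
    ((Measure.prod_apply hE).symm.trans (Measure.prod_apply_symm hE))
  have hsec : {a | a < X ω ∧ t - a < Y ω} = Ioo (t - Y ω) (X ω) := by
    ext a; simp [sub_lt_comm, and_comm]
  simp only [preimage_ofPred_eq, hsec, Real.volume_Ioo]
  ring_nf

lemma measure_lt_lt_le_of_measure_le_le [IsProbabilityMeasure μ] {X₁ Y₁ X₂ Y₂ : Ω → ℝ}
    (hX₁ : Measurable X₁) (hY₁ : Measurable Y₁) (hX₂ : Measurable X₂) (hY₂ : Measurable Y₂)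
    {a b : ℝ} (hX : μ {ω | X₁ ω ≤ a} = μ {ω | X₂ ω ≤ a})
    (hY : μ {ω | Y₁ ω ≤ b} = μ {ω | Y₂ ω ≤ b})
    (hH : μ {ω | X₁ ω ≤ a ∧ Y₁ ω ≤ b} ≤ μ {ω | X₂ ω ≤ a ∧ Y₂ ω ≤ b}) :
    μ {ω | a < X₁ ω ∧ b < Y₁ ω} ≤ μ {ω | a < X₂ ω ∧ b < Y₂ ω} := by
  have hmeas : ∀ (Z : Ω → ℝ) (c : ℝ), Measurable Z → MeasurableSet {ω | Z ω ≤ c} :=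
    fun Z c hZ => measurableSet_le hZ measurable_const
  have hcompl : ∀ X Y : Ω → ℝ,
      {ω | a < X ω ∧ b < Y ω} = ({ω | X ω ≤ a} ∪ {ω | Y ω ≤ b})ᶜ := fun X Y => by
    ext ω; simp
  have hunion : μ ({ω | X₂ ω ≤ a} ∪ {ω | Y₂ ω ≤ b}) ≤ μ ({ω | X₁ ω ≤ a} ∪ {ω | Y₁ ω ≤ b}) := by
    have h := measure_union_add_inter (μ := μ) {ω | X₁ ω ≤ a} (hmeas Y₁ b hY₁)
    rw [hX, hY, ← measure_union_add_inter {ω | X₂ ω ≤ a} (hmeas Y₂ b hY₂)] at h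
    refine (ENNReal.add_le_add_iff_right (measure_ne_top μ {ω | X₁ ω ≤ a ∧ Y₁ ω ≤ b})).1 ?_
    calc _ ≤ μ ({ω | X₂ ω ≤ a} ∪ {ω | Y₂ ω ≤ b}) + μ {ω | X₂ ω ≤ a ∧ Y₂ ω ≤ b} := by gcongr
      _ = _ := h.symm
  rw [hcompl, hcompl, prob_compl_eq_one_sub ((hmeas X₁ a hX₁).union (hmeas Y₁ b hY₁)),
    prob_compl_eq_one_sub ((hmeas X₂ a hX₂).union (hmeas Y₂ b hY₂))]
  exact tsub_le_tsub_left hunion 1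

theorem concaveOrderRV_add_of_measure_le_le [IsProbabilityMeasure μ] {F G : ℝ → ℝ}
    {X₁ Y₁ X₂ Y₂ : Ω → ℝ} (hX₁ : HasCDF μ X₁ F) (hY₁ : HasCDF μ Y₁ G) (hX₂ : HasCDF μ X₂ F)
    (hY₂ : HasCDF μ Y₂ G)
    (hH : ∀ a b, μ {ω | X₁ ω ≤ a ∧ Y₁ ω ≤ b} ≤ μ {ω | X₂ ω ≤ a ∧ Y₂ ω ≤ b}) :
    ConcaveOrderRV μ (fun ω => X₂ ω + Y₂ ω) (fun ω => X₁ ω + Y₁ ω) := by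
  refine ConcaveOrderRV.of_putValue_le_of_callValue_le (hX₁.1.add hY₁.1) (hX₂.1.add hY₂.1)
    (fun t => ?_) (fun t => ?_)
  · rw [putValue_add_eq hX₁.1 hY₁.1, putValue_add_eq hX₂.1 hY₂.1]
    exact lintegral_mono fun a => hH a (t - a)
  · rw [callValue_add_eq hX₁.1 hY₁.1, callValue_add_eq hX₂.1 hY₂.1]
    exact lintegral_mono fun a => measure_lt_lt_le_of_measure_le_le hX₁.1 hY₁.1 hX₂.1 hY₂.1
      (hX₁.measure_le_eq hX₂ a) (hY₁.measure_le_eq hY₂ (t - a)) (hH a (t - a))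

end JointDistribution

section Couplings

variable {μ : Measure Ω}

lemma Comonotonic.measure_le_le_eq_min {X Y : Ω → ℝ} (h : Comonotonic μ X Y) (a b : ℝ) :
    μ {ω | X ω ≤ a ∧ Y ω ≤ b} = min (μ {ω | X ω ≤ a}) (μ {ω | Y ω ≤ b}) := by
  obtain ⟨U, f, g, hf, hg, hX, hY⟩ := h
  have hXU : μ {ω | X ω ≤ a} = μ (U ⁻¹' {v | f v ≤ a}) := measure_congr <| by
    filter_upwards [hX] with ω hω
    exact congrArg (· ≤ a) hω
  have hYU : μ {ω | Y ω ≤ b} = μ (U ⁻¹' {v | g v ≤ b}) := measure_congr <| by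
    filter_upwards [hY] with ω hω
    exact congrArg (· ≤ b) hω
  have hXYU : μ {ω | X ω ≤ a ∧ Y ω ≤ b} = μ (U ⁻¹' ({v | f v ≤ a} ∩ {v | g v ≤ b})) :=
    measure_congr <| by
      filter_upwards [hX, hY] with ω hXω hYω
      exact congrArg₂ (· ≤ a ∧ · ≤ b) hXω hYω
  rw [hXU, hYU, hXYU]
  have hlower : ∀ (k : ℝ → ℝ) (c : ℝ), Monotone k → IsLowerSet {v | k v ≤ c} :=
    fun k c hk => (isLowerSet_Iic c).preimage hk
  rcases (hlower f a hf).total (hlower g b hg) with hfg | hgf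
  · rw [inter_eq_left.2 hfg, min_eq_left (measure_mono (preimage_mono hfg))]
  · rw [inter_eq_right.2 hgf, min_eq_right (measure_mono (preimage_mono hgf))]

lemma measure_le_le_le_of_comonotonic {X Y Xc Yc : Ω → ℝ} {F G : ℝ → ℝ} [IsFiniteMeasure μ]
    (hX : HasCDF μ X F) (hY : HasCDF μ Y G) (hXc : HasCDF μ Xc F) (hYc : HasCDF μ Yc G)
    (hcom : Comonotonic μ Xc Yc) (a b : ℝ) :
    μ {ω | X ω ≤ a ∧ Y ω ≤ b} ≤ μ {ω | Xc ω ≤ a ∧ Yc ω ≤ b} := by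
  rw [hcom.measure_le_le_eq_min, ← hX.measure_le_eq hXc, ← hY.measure_le_eq hYc]
  exact le_min (measure_mono fun _ h => h.1) (measure_mono fun _ h => h.2)

lemma measure_le_le_eq_of_ae_le {X Y : Ω → ℝ} (h : ∀ᵐ ω ∂μ, X ω ≤ Y ω) {a b : ℝ} (hba : b ≤ a) :
    μ {ω | X ω ≤ a ∧ Y ω ≤ b} = μ {ω | Y ω ≤ b} :=
  (measure_mono fun _ h => h.2).antisymm <| measure_mono_ae <| by
    filter_upwards [h] with ω hω hYω
    exact ⟨hω.trans (le_trans hYω hba), hYω⟩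

lemma OrderedCoupling.DLdf_le [IsFiniteMeasure μ] {F G : ℝ → ℝ} {X Y : Ω → ℝ}
    (h : OrderedCoupling μ F G X Y) (a b : ℝ) :
    DLdf F G a b ≤ (μ {ω | X ω ≤ a ∧ Y ω ≤ b}).toReal := by
  obtain ⟨⟨-, hXF⟩, ⟨hYm, hYG⟩, hle⟩ := h
  have hsplit : ∀ z w, F z = μ.real {ω | X ω ≤ z ∧ Y ω ≤ w} + μ.real {ω | X ω ≤ z ∧ w < Y ω} :=
    fun z w => by
      have hdiff : {ω | X ω ≤ z} \ {ω | Y ω ≤ w} = {ω | X ω ≤ z ∧ w < Y ω} := by ext; simp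
      rw [← hXF z, distFun, ← measureReal_def, ← hdiff]
      exact (measureReal_inter_add_sdiff (measurableSet_le hYm measurable_const)).symm
  unfold DLdf
  split_ifs with hba
  · rw [← hYG b, distFun, measure_le_le_eq_of_ae_le hle hba]
  have hgap : ∀ z, F z - G z = μ.real {ω | X ω ≤ z ∧ z < Y ω} := fun z => by
    rw [hsplit z z, ← hYG z, distFun, measureReal_def, measure_le_le_eq_of_ae_le hle le_rfl]
    ring
  have hinf : μ.real {ω | X ω ≤ a ∧ b < Y ω} ≤ sInf ((fun z => F z - G z) '' Icc a b) := by
    refine le_csInf ((nonempty_Icc.2 (not_le.1 hba).le).image _) ?_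
    rintro _ ⟨z, hz, rfl⟩
    refine (measureReal_mono fun ω (hω : X ω ≤ a ∧ b < Y ω) => ?_).trans_eq (hgap z).symm
    exact ⟨hω.1.trans hz.1, hz.2.trans_lt hω.2⟩
  linarith [hsplit a b, measureReal_def μ {ω | X ω ≤ a ∧ Y ω ≤ b}]

end Couplings

theorem comonotonic_le_cv_le_DL_general
    (μ : Measure Ω) [IsProbabilityMeasure μ]
    (F G : ℝ → ℝ)
    (X Y Xc Yc X' Y' : Ω → ℝ)
    (hXY : OrderedCoupling μ F G X Y)
    (hc : OrderedCoupling μ F G Xc Yc) (hcom : Comonotonic μ Xc Yc)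
    (hd : OrderedCoupling μ F G X' Y') (hDL : IsDLCoupled μ F G X' Y') :
    ConcaveOrderRV μ (fun ω => Xc ω + Yc ω) (fun ω => X ω + Y ω) ∧
    ConcaveOrderRV μ (fun ω => X ω + Y ω) (fun ω => X' ω + Y' ω) := by
  refine ⟨concaveOrderRV_add_of_measure_le_le hXY.1 hXY.2.1 hc.1 hc.2.1
    (measure_le_le_le_of_comonotonic hXY.1 hXY.2.1 hc.1 hc.2.1 hcom),
    concaveOrderRV_add_of_measure_le_le hd.1 hd.2.1 hXY.1 hXY.2.1 fun a b => ?_⟩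
  rw [← ENNReal.toReal_le_toReal (measure_ne_top μ _) (measure_ne_top μ _), hDL a b]
  exact hXY.DLdf_le a b

/-- The comonotonic sum is smallest and the DL-coupled sum is largest in concave
order among all sums `X + Y` with `(X,Y) ∈ F^o_2(F,G)`. -/
theorem comonotonic_le_cv_le_DL
    (μ : Measure Ω) [IsProbabilityMeasure μ] (hμ : Atomless μ)
    (F G : ℝ → ℝ) (hF : IsCDF F) (hG : IsCDF G) (hst : StOrder F G)
    (X Y Xc Yc X' Y' : Ω → ℝ)
    (hXY : OrderedCoupling μ F G X Y)
    (hc : OrderedCoupling μ F G Xc Yc) (hcom : Comonotonic μ Xc Yc)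
    (hd : OrderedCoupling μ F G X' Y') (hDL : IsDLCoupled μ F G X' Y') :
    ConcaveOrderRV μ (fun ω => Xc ω + Yc ω) (fun ω => X ω + Y ω) ∧
    ConcaveOrderRV μ (fun ω => X ω + Y ω) (fun ω => X' ω + Y' ω) :=
  comonotonic_le_cv_le_DL_general μ F G X Y Xc Yc X' Y' hXY hc hcom hd hDL
end
end

section
/- Let F and G be cumulative distribution functions on ℝ with F ≤_st G, and let ρ be a law-invariant risk measure (a map from distributions to ℝ, applied to random variables via their distributions) that is ≤_cv-consistent. Suppose (X^c,Y^c), (X',Y') ∈ F^o_2(F,G) with (X^c,Y^c) comonotonic and (X',Y') DL-coupled. Then for every (X,Y) ∈ F^o_2(F,G): inf{ρ(X+Y) : (X,Y) ∈ F^o_2(F,G)} = ρ(X^c+Y^c) ≤ ρ(X+Y) ≤ ρ(X'+Y') = sup{ρ(X+Y) : (X,Y) ∈ F^o_2(F,G)}. -/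
open MeasureTheory Set Filter

noncomputable section

variable {Ω : Type*} [MeasurableSpace Ω]

/-- A law-invariant risk measure (a map on distribution functions) is
`≤_cv`-consistent: it respects concave order of random variables. -/
def CvConsistent (μ : Measure Ω) (ρ : (ℝ → ℝ) → ℝ) : Prop :=
  ∀ X Y : Ω → ℝ, Measurable X → Measurable Y →
    ConcaveOrderRV μ X Y → ρ (distFun μ X) ≤ ρ (distFun μ Y)

section Helpers

open ENNReal

variable {μ : Measure Ω}

/-- Sets of the form `{X ≤ x}` are measurable. -/
lemma msLe {X : Ω → ℝ} (hX : Measurable X) (x : ℝ) :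
    MeasurableSet {ω | X ω ≤ x} := hX measurableSet_Iic

lemma msLt {X : Ω → ℝ} (hX : Measurable X) (x : ℝ) :
    MeasurableSet {ω | X ω < x} := hX measurableSet_Iio

lemma msAnd {X Y : Ω → ℝ} (hX : Measurable X) (hY : Measurable Y) (x y : ℝ) :
    MeasurableSet {ω | X ω ≤ x ∧ Y ω ≤ y} := (msLe hX x).inter (msLe hY y)

/-- The put-identity: `∫ (k - X - Y)₊ dμ = ∫_s μ{X ≤ s, Y ≤ k - s} ds`. -/
lemma put_eq [IsProbabilityMeasure μ] {X Y : Ω → ℝ} (hX : Measurable X) (hY : Measurable Y)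
    (k : ℝ) :
    ∫⁻ ω, ENNReal.ofReal (k - (X ω + Y ω)) ∂μ
      = ∫⁻ s, μ {ω | X ω ≤ s ∧ Y ω ≤ k - s} := by
  set A : Set (Ω × ℝ) := {p | X p.1 ≤ p.2 ∧ Y p.1 ≤ k - p.2} with hA
  have hAm : MeasurableSet A := by
    apply MeasurableSet.inter
    · exact measurableSet_le (hX.comp measurable_fst) measurable_snd
    · exact measurableSet_le (hY.comp measurable_fst)
        (measurable_const.sub measurable_snd)
  have h1 : ∀ ω, ENNReal.ofReal (k - (X ω + Y ω)) = volume (Prod.mk ω ⁻¹' A) := by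
    intro ω
    have : Prod.mk ω ⁻¹' A = Set.Icc (X ω) (k - Y ω) := by
      ext s
      simp only [hA, Set.mem_preimage, Set.mem_setOf_eq, Set.mem_Icc]
      constructor
      · rintro ⟨h1, h2⟩; exact ⟨h1, by linarith⟩
      · rintro ⟨h1, h2⟩; exact ⟨h1, by linarith⟩
    rw [this, Real.volume_Icc]
    ring_nf
  have h2 : ∀ s : ℝ, μ ((fun ω => (ω, s)) ⁻¹' A) = μ {ω | X ω ≤ s ∧ Y ω ≤ k - s} := by
    intro s; rfl
  calc ∫⁻ ω, ENNReal.ofReal (k - (X ω + Y ω)) ∂μ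
      = ∫⁻ ω, volume (Prod.mk ω ⁻¹' A) ∂μ := by simp_rw [h1]
    _ = (μ.prod volume) A := (Measure.prod_apply hAm).symm
    _ = ∫⁻ s, μ ((fun ω => (ω, s)) ⁻¹' A) := Measure.prod_apply_symm hAm
    _ = ∫⁻ s, μ {ω | X ω ≤ s ∧ Y ω ≤ k - s} := by simp_rw [h2]

end Helpers
section Helpers2

open ENNReal

variable {μ : Measure Ω}

lemma one_div_max_le (m n : ℕ) : (1:ℝ)/((max m n : ℕ) + 1) ≤ 1/(m+1) := by
  apply one_div_le_one_div_of_le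
  · positivity
  · have : (m:ℝ) ≤ ((max m n : ℕ) : ℝ) := by exact_mod_cast Nat.le_max_left m n
    linarith

lemma one_div_max_le' (m n : ℕ) : (1:ℝ)/((max m n : ℕ) + 1) ≤ 1/(n+1) := by
  apply one_div_le_one_div_of_le
  · positivity
  · have : (n:ℝ) ≤ ((max m n : ℕ) : ℝ) := by exact_mod_cast Nat.le_max_right m n
    linarith

lemma lt_iff_union (f : Ω → ℝ) (x : ℝ) :
    {ω | f ω < x} = ⋃ n : ℕ, {ω | f ω ≤ x - 1/(n+1)} := by
  ext ω
  simp only [Set.mem_setOf_eq, Set.mem_iUnion]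
  constructor
  · intro h
    obtain ⟨n, hn⟩ := exists_nat_one_div_lt (sub_pos.2 h)
    exact ⟨n, by linarith⟩
  · rintro ⟨n, hn⟩
    have h0 : (0:ℝ) < 1/(n+1) := by positivity
    linarith

lemma lt_lt_iff_union (f g : Ω → ℝ) (x y : ℝ) :
    {ω | f ω < x ∧ g ω < y}
      = ⋃ n : ℕ, {ω | f ω ≤ x - 1/(n+1) ∧ g ω ≤ y - 1/(n+1)} := by
  ext ω
  simp only [Set.mem_setOf_eq, Set.mem_iUnion]
  constructor
  · rintro ⟨h1, h2⟩
    obtain ⟨n1, hn1⟩ := exists_nat_one_div_lt (sub_pos.2 h1)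
    obtain ⟨n2, hn2⟩ := exists_nat_one_div_lt (sub_pos.2 h2)
    refine ⟨max n1 n2, ?_, ?_⟩
    · have := one_div_max_le n1 n2; linarith
    · have := one_div_max_le' n1 n2; linarith
  · rintro ⟨n, h1, h2⟩
    have h0 : (0:ℝ) < 1/(n+1) := by positivity
    exact ⟨by linarith, by linarith⟩

lemma measure_lt_eq_iSup (f : Ω → ℝ) (x : ℝ) :
    μ {ω | f ω < x} = ⨆ n : ℕ, μ {ω | f ω ≤ x - 1/(n+1)} := by
  rw [lt_iff_union]
  apply Directed.measure_iUnion
  intro m n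
  refine ⟨max m n, ?_, ?_⟩
  · intro ω hω
    simp only [Set.mem_setOf_eq] at hω ⊢
    have := one_div_max_le m n; linarith
  · intro ω hω
    simp only [Set.mem_setOf_eq] at hω ⊢
    have := one_div_max_le' m n; linarith

lemma measure_lt_lt_eq_iSup (f g : Ω → ℝ) (x y : ℝ) :
    μ {ω | f ω < x ∧ g ω < y}
      = ⨆ n : ℕ, μ {ω | f ω ≤ x - 1/(n+1) ∧ g ω ≤ y - 1/(n+1)} := by
  rw [lt_lt_iff_union]
  apply Directed.measure_iUnion
  intro m n
  refine ⟨max m n, ?_, ?_⟩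
  · intro ω hω
    obtain ⟨h1, h2⟩ := hω
    have ha := one_div_max_le m n
    exact ⟨by linarith, by linarith⟩
  · intro ω hω
    obtain ⟨h1, h2⟩ := hω
    have ha := one_div_max_le' m n
    exact ⟨by linarith, by linarith⟩

/-- Strict-inequality joint comparison from the non-strict one. -/
lemma strict_le {X Y Xt Yt : Ω → ℝ}
    (H : ∀ x y : ℝ, μ {ω | X ω ≤ x ∧ Y ω ≤ y} ≤ μ {ω | Xt ω ≤ x ∧ Yt ω ≤ y})
    (a b : ℝ) :
    μ {ω | X ω < a ∧ Y ω < b} ≤ μ {ω | Xt ω < a ∧ Yt ω < b} := by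
  rw [measure_lt_lt_eq_iSup, measure_lt_lt_eq_iSup]
  exact iSup_mono fun n => H _ _

/-- Survival comparison from joint cdf comparison, given equal marginals. -/
lemma survival_le [IsProbabilityMeasure μ] {X Y Xt Yt : Ω → ℝ}
    (hX : Measurable X) (hY : Measurable Y) (hXt : Measurable Xt) (hYt : Measurable Yt)
    (margX : ∀ x : ℝ, μ {ω | X ω ≤ x} = μ {ω | Xt ω ≤ x})
    (margY : ∀ y : ℝ, μ {ω | Y ω ≤ y} = μ {ω | Yt ω ≤ y})
    (H : ∀ x y : ℝ, μ {ω | X ω ≤ x ∧ Y ω ≤ y} ≤ μ {ω | Xt ω ≤ x ∧ Yt ω ≤ y})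
    (a b : ℝ) :
    μ {ω | a ≤ X ω ∧ b ≤ Y ω} ≤ μ {ω | a ≤ Xt ω ∧ b ≤ Yt ω} := by
  have margXlt : μ {ω | X ω < a} = μ {ω | Xt ω < a} := by
    rw [measure_lt_eq_iSup, measure_lt_eq_iSup]
    exact iSup_congr fun n => margX _
  have margYlt : μ {ω | Y ω < b} = μ {ω | Yt ω < b} := by
    rw [measure_lt_eq_iSup, measure_lt_eq_iSup]
    exact iSup_congr fun n => margY _
  have key : ∀ (Z W : Ω → ℝ), Measurable Z → Measurable W →
      (μ {ω | a ≤ Z ω ∧ b ≤ W ω}).toReal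
        = 1 - (μ {ω | Z ω < a}).toReal - (μ {ω | W ω < b}).toReal
          + (μ {ω | Z ω < a ∧ W ω < b}).toReal := by
    intro Z W hZ hW
    have hc : {ω | a ≤ Z ω ∧ b ≤ W ω} = ({ω | Z ω < a} ∪ {ω | W ω < b})ᶜ := by
      ext ω; simp only [Set.mem_setOf_eq, Set.mem_compl_iff, Set.mem_union, not_or, not_lt]
    have hms1 : MeasurableSet {ω | Z ω < a} := msLt hZ a
    have hms2 : MeasurableSet {ω | W ω < b} := msLt hW b
    have hinter : {ω | Z ω < a ∧ W ω < b} = {ω | Z ω < a} ∩ {ω | W ω < b} := rfl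
    have hU : μ ({ω | Z ω < a} ∪ {ω | W ω < b})
        + μ ({ω | Z ω < a} ∩ {ω | W ω < b}) = μ {ω | Z ω < a} + μ {ω | W ω < b} :=
      measure_union_add_inter _ hms2
    have hcompl : μ (({ω | Z ω < a} ∪ {ω | W ω < b})ᶜ)
        = 1 - μ ({ω | Z ω < a} ∪ {ω | W ω < b}) :=
      prob_compl_eq_one_sub (hms1.union hms2)
    rw [hc, hcompl, hinter]
    have h1 : μ ({ω | Z ω < a} ∪ {ω | W ω < b}) ≤ 1 := prob_le_one
    have hfin : ∀ s : Set Ω, μ s ≠ ∞ := fun s => measure_ne_top μ s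
    rw [ENNReal.toReal_sub_of_le h1 one_ne_top]
    have := congrArg ENNReal.toReal hU
    rw [ENNReal.toReal_add (hfin _) (hfin _), ENNReal.toReal_add (hfin _) (hfin _)] at this
    simp only [ENNReal.toReal_one]
    linarith
  have h1 := key X Y hX hY
  have h2 := key Xt Yt hXt hYt
  have hstrict : (μ {ω | X ω < a ∧ Y ω < b}).toReal
      ≤ (μ {ω | Xt ω < a ∧ Yt ω < b}).toReal :=
    ENNReal.toReal_mono (measure_ne_top μ _) (strict_le H a b)
  have hfinal : (μ {ω | a ≤ X ω ∧ b ≤ Y ω}).toReal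
      ≤ (μ {ω | a ≤ Xt ω ∧ b ≤ Yt ω}).toReal := by
    rw [h1, h2, margXlt, margYlt]; linarith
  exact (ENNReal.toReal_le_toReal (measure_ne_top μ _) (measure_ne_top μ _)).mp hfinal

end Helpers2
section Helpers3

open ENNReal

variable {μ : Measure Ω}

/-- A comonotonic pair has the maximal joint distribution. -/
lemma comonotone_H {Xc Yc : Ω → ℝ}
    (hcom : Comonotonic μ Xc Yc) (x y : ℝ) :
    μ {ω | Xc ω ≤ x ∧ Yc ω ≤ y}
      = min (μ {ω | Xc ω ≤ x}) (μ {ω | Yc ω ≤ y}) := by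
  obtain ⟨U, f, g, hf, hg, hfX, hgY⟩ := hcom
  set A : Set ℝ := {z | f z ≤ x} with hA
  set B : Set ℝ := {z | g z ≤ y} with hB
  have hXA : {ω | Xc ω ≤ x} =ᵐ[μ] (U ⁻¹' A) := by
    rw [Filter.eventuallyEq_set]
    filter_upwards [hfX] with ω h
    simp only [Set.mem_setOf_eq, Set.mem_preimage, hA, h]
  have hYB : {ω | Yc ω ≤ y} =ᵐ[μ] (U ⁻¹' B) := by
    rw [Filter.eventuallyEq_set]
    filter_upwards [hgY] with ω h
    simp only [Set.mem_setOf_eq, Set.mem_preimage, hB, h]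
  have hint : {ω | Xc ω ≤ x ∧ Yc ω ≤ y} =ᵐ[μ] (U ⁻¹' (A ∩ B)) := by
    rw [Filter.eventuallyEq_set]
    filter_upwards [hfX, hgY] with ω h1 h2
    simp only [Set.mem_setOf_eq, Set.mem_preimage, Set.mem_inter_iff, hA, hB, h1, h2]
  have hAB : A ∩ B = A ∨ A ∩ B = B := by
    rcases (em (A ⊆ B)) with h | h
    · left; exact Set.inter_eq_left.2 h
    · right
      apply Set.inter_eq_right.2
      intro b hb
      rw [Set.not_subset] at h
      obtain ⟨a, ha, hanb⟩ := h
      rcases le_total b a with hba | hab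
      · -- b ≤ a, a ∈ A lower set: f b ≤ f a ≤ x
        exact le_trans (hf hba) ha
      · -- a ≤ b would give a ∈ B since b ∈ B and B lower
        exact absurd (le_trans (hg hab) hb) hanb
  rw [measure_congr hXA, measure_congr hYB, measure_congr hint]
  rcases hAB with h | h
  · have hsub : A ⊆ B := by rw [← h]; exact Set.inter_subset_right
    rw [h, min_eq_left (measure_mono (Set.preimage_mono hsub))]
  · have hsub : B ⊆ A := by rw [← h]; exact Set.inter_subset_left
    rw [h, min_eq_right (measure_mono (Set.preimage_mono hsub))]

end Helpers3
section Helpers4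

open ENNReal

variable {μ : Measure Ω}

/-- For an ordered coupling, `μ{X ≤ x, Y ≤ y} = μ{Y ≤ y}` when `y ≤ x`. -/
lemma ordered_H_eq [IsProbabilityMeasure μ] {X Y : Ω → ℝ}
    (hXY : ∀ᵐ ω ∂μ, X ω ≤ Y ω) {x y : ℝ} (hyx : y ≤ x) :
    μ {ω | X ω ≤ x ∧ Y ω ≤ y} = μ {ω | Y ω ≤ y} := by
  have : {ω | X ω ≤ x ∧ Y ω ≤ y} =ᵐ[μ] {ω | Y ω ≤ y} := by
    rw [Filter.eventuallyEq_set]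
    filter_upwards [hXY] with ω h
    constructor
    · rintro ⟨_, h2⟩; exact h2
    · intro h2; exact ⟨by linarith, h2⟩
  exact measure_congr this

/-- For any ordered coupling, the joint cdf dominates the DL df. -/
lemma ordered_H_ge_DL [IsProbabilityMeasure μ] {F G : ℝ → ℝ} {X Y : Ω → ℝ}
    (hX : HasCDF μ X F) (hY : HasCDF μ Y G) (hXY : ∀ᵐ ω ∂μ, X ω ≤ Y ω)
    (x y : ℝ) :
    DLdf F G x y ≤ (μ {ω | X ω ≤ x ∧ Y ω ≤ y}).toReal := by
  obtain ⟨hXm, hXd⟩ := hX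
  obtain ⟨hYm, hYd⟩ := hY
  rw [DLdf]
  split_ifs with hyx
  · rw [ordered_H_eq hXY hyx, ← hYd y]; rfl
  · push_neg at hyx
    -- y > x case
    have hxy : x ≤ y := le_of_lt hyx
    have hne : ((fun z => F z - G z) '' Set.Icc x y).Nonempty :=
      Set.Nonempty.image _ (Set.nonempty_Icc.2 hxy)
    have hbound : ∀ w ∈ (fun z => F z - G z) '' Set.Icc x y,
        F x - (μ {ω | X ω ≤ x ∧ Y ω ≤ y}).toReal ≤ w := by
      rintro w ⟨z, hz, rfl⟩
      obtain ⟨hz1, hz2⟩ := hz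
      show F x - (μ {ω | X ω ≤ x ∧ Y ω ≤ y}).toReal ≤ F z - G z
      -- μ {X≤x ∧ Y>y} ≤ μ {X≤z ∧ Y>z} = F z - G z
      have hsplit : μ {ω | X ω ≤ x ∧ Y ω ≤ y} + μ {ω | X ω ≤ x ∧ ¬ Y ω ≤ y}
          = μ {ω | X ω ≤ x} :=
        measure_inter_add_diff _ (msLe hYm y)
      have hsplit2 : μ {ω | X ω ≤ z ∧ Y ω ≤ z} + μ {ω | X ω ≤ z ∧ ¬ Y ω ≤ z}
          = μ {ω | X ω ≤ z} :=
        measure_inter_add_diff _ (msLe hYm z)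
      have hmono : μ {ω | X ω ≤ x ∧ ¬ Y ω ≤ y} ≤ μ {ω | X ω ≤ z ∧ ¬ Y ω ≤ z} := by
        apply measure_mono
        intro ω hω
        simp only [Set.mem_setOf_eq, not_le] at hω ⊢
        exact ⟨le_trans hω.1 hz1, lt_of_le_of_lt hz2 hω.2⟩
      have hdiag : μ {ω | X ω ≤ z ∧ Y ω ≤ z} = μ {ω | Y ω ≤ z} :=
        ordered_H_eq hXY (le_refl z)
      -- convert to reals
      have hfin : ∀ s : Set Ω, μ s ≠ ∞ := fun s => measure_ne_top μ s
      have e1 : (μ {ω | X ω ≤ x ∧ Y ω ≤ y}).toReal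
          + (μ {ω | X ω ≤ x ∧ ¬ Y ω ≤ y}).toReal = F x := by
        rw [← ENNReal.toReal_add (hfin _) (hfin _), hsplit, ← hXd x]; rfl
      have e2 : G z + (μ {ω | X ω ≤ z ∧ ¬ Y ω ≤ z}).toReal = F z := by
        have hh : (μ {ω | Y ω ≤ z}).toReal + (μ {ω | X ω ≤ z ∧ ¬ Y ω ≤ z}).toReal
            = (μ {ω | X ω ≤ z}).toReal := by
          rw [← hdiag, ← ENNReal.toReal_add (hfin _) (hfin _), hsplit2]
        rw [← hYd z, ← hXd z]
        exact hh
      have e3 : (μ {ω | X ω ≤ x ∧ ¬ Y ω ≤ y}).toReal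
          ≤ (μ {ω | X ω ≤ z ∧ ¬ Y ω ≤ z}).toReal :=
        ENNReal.toReal_mono (hfin _) hmono
      linarith
    have := le_csInf hne hbound
    linarith

end Helpers4
section ConcaveHelpers

lemma concave_continuous {u : ℝ → ℝ} (hu : ConcaveOn ℝ Set.univ u) : Continuous u := by
  have h1 : ConvexOn ℝ Set.univ (-u) := hu.neg
  have h2 : ContinuousOn (-u) (interior Set.univ) := by
    rw [interior_univ]
    exact ConvexOn.continuousOn isOpen_univ h1
  rw [interior_univ] at h2
  have h3 : Continuous (-u) := continuousOn_univ.mp h2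
  have h4 := h3.neg
  simpa using h4

lemma concave_comp_neg {u : ℝ → ℝ} (hu : ConcaveOn ℝ Set.univ u) :
    ConcaveOn ℝ Set.univ (fun t => u (-t)) := by
  refine ⟨convex_univ, ?_⟩
  intro x _ y _ a b ha hb hab
  have := hu.2 (Set.mem_univ (-x)) (Set.mem_univ (-y)) ha hb hab
  simp only [smul_eq_mul] at this ⊢
  have harg : a * -x + b * -y = -(a * x + b * y) := by ring
  rw [harg] at this
  exact this

/-- Three-point slope inequality for concave functions, multiplied out. -/
lemma concave_slope3 {u : ℝ → ℝ} (hu : ConcaveOn ℝ Set.univ u) {a b c : ℝ}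
    (hab : a < b) (hbc : b < c) :
    (u c - u b) * (b - a) ≤ (u b - u a) * (c - b) := by
  have h := hu.slope_anti_adjacent (Set.mem_univ a) (Set.mem_univ c) hab hbc
  rw [div_le_div_iff₀ (by linarith : (0:ℝ) < c - b) (by linarith : (0:ℝ) < b - a)] at h
  exact h

/-- On `(-∞, T]`, a concave function dominated by its value at `T` is monotone. -/
lemma concave_mono_on {u : ℝ → ℝ} (hu : ConcaveOn ℝ Set.univ u) {T : ℝ}
    (hT : ∀ s, s ≤ T → u s ≤ u T) :
    ∀ a b, a ≤ b → b ≤ T → u a ≤ u b := by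
  intro a b hab hbT
  rcases eq_or_lt_of_le hab with rfl | hab'
  · exact le_refl _
  · rcases eq_or_lt_of_le hbT with rfl | hbT'
    · exact hT a hab
    · -- a < b < T
      set θ : ℝ := (T - b) / (T - a) with hθ
      have hTa : (0:ℝ) < T - a := by linarith
      have hθ0 : 0 ≤ θ := div_nonneg (by linarith) (by linarith)
      have hθ1 : θ ≤ 1 := by
        rw [hθ, div_le_one hTa]; linarith
      have hcomb := hu.2 (Set.mem_univ a) (Set.mem_univ T) hθ0 (by linarith : (0:ℝ) ≤ 1 - θ)
        (by ring)
      have harg : θ • a + (1 - θ) • T = b := by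
        simp only [smul_eq_mul, hθ]
        field_simp
        ring
      rw [harg] at hcomb
      simp only [smul_eq_mul] at hcomb
      have huaT : u a ≤ u T := hT a (by linarith)
      nlinarith [hcomb]

/-- Clipping `t ↦ u (min t T)` preserves concavity when `u ≤ u T` on `(-∞, T]`. -/
lemma concave_clip {u : ℝ → ℝ} (hu : ConcaveOn ℝ Set.univ u) {T : ℝ}
    (hT : ∀ s, s ≤ T → u s ≤ u T) :
    ConcaveOn ℝ Set.univ (fun t => u (min t T)) := by
  have key : ∀ x y a b : ℝ, x ≤ y → 0 ≤ a → 0 ≤ b → a + b = 1 →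
      a * u (min x T) + b * u (min y T) ≤ u (min (a * x + b * y) T) := by
    intro x y a b hxy ha hb hab
    have habT : a * T + b * T = T := by rw [← add_mul, hab, one_mul]
    have habU : a * u T + b * u T = u T := by rw [← add_mul, hab, one_mul]
    rcases le_or_gt y T with hyT | hTy
    · -- everything below T
      have hxT : x ≤ T := le_trans hxy hyT
      have hmT : a * x + b * y ≤ T := by
        nlinarith [mul_nonneg ha (sub_nonneg.2 hxT), mul_nonneg hb (sub_nonneg.2 hyT), habT]
      rw [min_eq_left hxT, min_eq_left hyT, min_eq_left hmT]
      have := hu.2 (Set.mem_univ x) (Set.mem_univ y) ha hb hab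
      simpa using this
    · rcases le_or_gt T x with hTx | hxT
      · -- everything above T
        have hmx : T ≤ a * x + b * y := by
          nlinarith [mul_nonneg ha (sub_nonneg.2 hTx),
            mul_nonneg hb (sub_nonneg.2 (le_of_lt hTy)), habT]
        rw [min_eq_right hTx, min_eq_right (le_of_lt hTy), min_eq_right hmx]
        linarith [habU]
      · -- x < T < y
        rw [min_eq_left (le_of_lt hxT), min_eq_right (le_of_lt hTy)]
        set m : ℝ := a * x + b * y with hm
        have hux : u x ≤ u T := hT x (le_of_lt hxT)
        rcases le_or_gt m T with hmT | hTm
        · rw [min_eq_left hmT]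
          rcases eq_or_lt_of_le hb with hb0 | hb'
          · -- b = 0, a = 1
            have hb0' : b = 0 := hb0.symm
            have ha1 : a = 1 := by linarith
            rw [hm, hb0', ha1]
            simp
          · -- 0 < b, so x < m
            have habX : a * x + b * x = x := by rw [← add_mul, hab, one_mul]
            have hxm : x < m := by
              have hp : 0 < b * (y - x) := mul_pos hb' (by linarith)
              have he : b * (y - x) = b * y - b * x := by ring
              rw [hm]; linarith [habX, hp, he]
            set α : ℝ := (T - m) / (T - x) with hα
            have hTx : (0:ℝ) < T - x := by linarith
            have hα0 : 0 ≤ α := div_nonneg (by linarith) (le_of_lt hTx)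
            have hαa : α ≤ a := by
              rw [hα, div_le_iff₀ hTx]
              have h1 : 0 ≤ b * (y - T) := mul_nonneg hb (by linarith)
              have h2 : b * (y - T) = b * y - b * T := by ring
              have h3 : a * (T - x) = a * T - a * x := by ring
              rw [hm]
              linarith [habT, h1, h2, h3]
            have hcomb := hu.2 (Set.mem_univ x) (Set.mem_univ T) hα0
              (by
                have hα1 : α ≤ 1 := by
                  rw [hα, div_le_one hTx]; linarith
                linarith : (0:ℝ) ≤ 1 - α) (by ring)
            have harg : α • x + (1 - α) • T = m := by
              simp only [smul_eq_mul, hα]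
              field_simp
              ring
            rw [harg] at hcomb
            simp only [smul_eq_mul] at hcomb
            have hint : 0 ≤ (a - α) * (u T - u x) :=
              mul_nonneg (sub_nonneg.2 hαa) (sub_nonneg.2 hux)
            have hexp : (a - α) * (u T - u x)
                = a * u T - a * u x - α * u T + α * u x := by ring
            have hexp2 : (1 - α) * u T = u T - α * u T := by ring
            linarith [hcomb, hint, hexp, hexp2, habU]
        · rw [min_eq_right (le_of_lt hTm)]
          have : a * u x ≤ a * u T := mul_le_mul_of_nonneg_left hux ha
          linarith [habU]
  refine ⟨convex_univ, ?_⟩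
  intro x _ y _ a b ha hb hab
  simp only [smul_eq_mul]
  rcases le_total x y with h | h
  · exact key x y a b h ha hb hab
  · have := key y x b a h hb ha (by linarith)
    calc a * u (min x T) + b * u (min y T)
        = b * u (min y T) + a * u (min x T) := by ring
      _ ≤ u (min (b * y + a * x) T) := this
      _ = u (min (a * x + b * y) T) := by rw [add_comm]

end ConcaveHelpers
section Trichotomy

lemma concave_anti_on {u : ℝ → ℝ} (hu : ConcaveOn ℝ Set.univ u) {T : ℝ}
    (hT : ∀ s, T ≤ s → u s ≤ u T) :
    ∀ a b, T ≤ a → a ≤ b → u b ≤ u a := by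
  intro a b hTa hab
  have hv : ConcaveOn ℝ Set.univ (fun t => u (-t)) := concave_comp_neg hu
  have hT' : ∀ s, s ≤ -T → u (-s) ≤ u (-(-T)) := by
    intro s hs
    rw [neg_neg]
    exact hT (-s) (by linarith)
  have := concave_mono_on hv (T := -T) (fun s hs => hT' s hs) (-b) (-a)
    (by linarith) (by linarith)
  simpa using this

lemma concave_trichotomy {u : ℝ → ℝ} (hu : ConcaveOn ℝ Set.univ u) :
    Monotone u ∨ Antitone u ∨ ∃ T, ∀ s, u s ≤ u T := by
  by_cases hM : Monotone u
  · exact Or.inl hM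
  by_cases hA : Antitone u
  · exact Or.inr (Or.inl hA)
  right; right
  simp only [Monotone, not_forall, not_le] at hM
  obtain ⟨a, b, hab, hba⟩ := hM
  simp only [Antitone, not_forall, not_le] at hA
  obtain ⟨c, d, hcd, hdc⟩ := hA
  have hab' : a < b := by
    rcases eq_or_lt_of_le hab with rfl | h
    · exact absurd hba (lt_irrefl _)
    · exact h
  have hcd' : c < d := by
    rcases eq_or_lt_of_le hcd with rfl | h
    · exact absurd hdc (lt_irrefl _)
    · exact h
  -- u decreases after b
  have hdec : ∀ r, b ≤ r → u r ≤ u b := by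
    intro r hbr
    rcases eq_or_lt_of_le hbr with rfl | hbr'
    · exact le_refl _
    · have h3 := concave_slope3 hu hab' hbr'
      nlinarith [h3]
  -- u increases before c
  have hinc : ∀ r, r ≤ c → u r ≤ u c := by
    intro r hrc
    rcases eq_or_lt_of_le hrc with rfl | hrc'
    · exact le_refl _
    · have h3 := concave_slope3 hu hrc' hcd'
      nlinarith [h3]
  set lo := min a c with hlo
  set hi := max b d with hhi
  have hlohi : lo ≤ hi := le_trans (min_le_left a c) (le_trans hab (le_max_left b d))
  obtain ⟨T, hTI, hTmax⟩ := isCompact_Icc.exists_isMaxOn (Set.nonempty_Icc.2 hlohi)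
    ((concave_continuous hu).continuousOn)
  refine ⟨T, fun s => ?_⟩
  have hbI : b ∈ Set.Icc lo hi :=
    ⟨le_trans (min_le_left a c) hab, le_max_left b d⟩
  have hcI : c ∈ Set.Icc lo hi :=
    ⟨min_le_right a c, le_trans hcd (le_max_right b d)⟩
  rcases lt_or_ge s lo with hs | hs
  · have hsc : s ≤ c := le_trans (le_of_lt hs) (min_le_right a c)
    exact le_trans (hinc s hsc) (hTmax hcI)
  · rcases le_or_gt s hi with hs' | hs'
    · exact hTmax ⟨hs, hs'⟩
    · have hbs : b ≤ s := le_trans (le_max_left b d) (le_of_lt hs')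
      exact le_trans (hdec s hbs) (hTmax hbI)

end Trichotomy
section Grid

open Finset

/-- Grid points for the approximation. -/
noncomputable def gk (n : ℕ) (j : ℕ) : ℝ := -(n:ℝ) + j/(n:ℝ)

/-- Secant slopes on the grid. -/
noncomputable def ga (u : ℝ → ℝ) (n : ℕ) (j : ℕ) : ℝ :=
  if j < 2*n^2 then (n:ℝ)*(u (gk n (j+1)) - u (gk n j)) else 0

/-- Piecewise-linear put-sum approximation of `u`. -/
noncomputable def gv (u : ℝ → ℝ) (n : ℕ) (t : ℝ) : ℝ :=
  u (gk n (2*n^2))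
    - ∑ j ∈ Finset.range (2*n^2), (ga u n j - ga u n (j+1)) * max (gk n (j+1) - t) 0

variable {u : ℝ → ℝ} {n : ℕ}

lemma gk_mono (hn : 1 ≤ n) : Monotone (gk n) := by
  intro i j hij
  unfold gk
  have hn' : (0:ℝ) < n := by exact_mod_cast hn
  have hij' : (i:ℝ) ≤ j := by exact_mod_cast hij
  have hdiv : (i:ℝ)/(n:ℝ) ≤ (j:ℝ)/(n:ℝ) := by gcongr
  linarith

lemma gk_step (hn : 1 ≤ n) (j : ℕ) : gk n (j+1) = gk n j + 1/(n:ℝ) := by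
  unfold gk
  have hn' : (0:ℝ) < n := by exact_mod_cast hn
  push_cast
  field_simp
  ring

lemma gk_top (hn : 1 ≤ n) : gk n (2*n^2) = (n:ℝ) := by
  unfold gk
  have hn' : (0:ℝ) < n := by exact_mod_cast hn
  push_cast
  field_simp
  ring

lemma gk_zero : gk n 0 = -(n:ℝ) := by
  unfold gk; simp

lemma ga_nonneg (hn : 1 ≤ n) (hmono : Monotone u) (j : ℕ) : 0 ≤ ga u n j := by
  unfold ga
  split_ifs
  · have hn' : (0:ℝ) ≤ n := by positivity
    apply mul_nonneg hn'
    rw [sub_nonneg]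
    exact hmono (gk_mono hn (Nat.le_succ j))
  · exact le_refl 0

lemma ga_top : ga u n (2*n^2) = 0 := by
  unfold ga; simp

lemma ga_anti (hn : 1 ≤ n) (hu : ConcaveOn ℝ Set.univ u) (hmono : Monotone u) (j : ℕ) :
    ga u n (j+1) ≤ ga u n j := by
  have hn' : (0:ℝ) < n := by exact_mod_cast hn
  rcases lt_or_ge (j+1) (2*n^2) with h1 | h1
  · have hj : j < 2*n^2 := Nat.lt_of_succ_lt h1
    unfold ga
    rw [if_pos h1, if_pos hj]
    have hstep1 : gk n (j+1) = gk n j + 1/(n:ℝ) := gk_step hn j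
    have hstep2 : gk n (j+2) = gk n (j+1) + 1/(n:ℝ) := gk_step hn (j+1)
    have hp : (0:ℝ) < 1/(n:ℝ) := by positivity
    have hab : gk n j < gk n (j+1) := by rw [hstep1]; linarith
    have hbc : gk n (j+1) < gk n (j+2) := by rw [hstep2]; linarith
    have h3 := concave_slope3 hu hab hbc
    have e1 : gk n (j+1) - gk n j = 1/(n:ℝ) := by rw [hstep1]; ring
    have e2 : gk n (j+2) - gk n (j+1) = 1/(n:ℝ) := by rw [hstep2]; ring
    rw [e1, e2] at h3
    have h4 : u (gk n (j+2)) - u (gk n (j+1)) ≤ u (gk n (j+1)) - u (gk n j) := by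
      have hpos : (0:ℝ) < 1/(n:ℝ) := by positivity
      exact le_of_mul_le_mul_right h3 hpos
    have : (j+1)+1 = j+2 := rfl
    rw [this]
    nlinarith [h4, hn']
  · unfold ga
    rw [if_neg (by omega)]
    split_ifs with h2
    · apply mul_nonneg (le_of_lt hn')
      rw [sub_nonneg]
      exact hmono (gk_mono hn (Nat.le_succ j))
    · exact le_refl 0

/-- The telescoping sum identity. -/
lemma gv_sum_identity (hn : 1 ≤ n) (i : ℕ) :
    ∀ m, i ≤ m → m ≤ 2*n^2 →
      ∑ j ∈ Finset.range m, (ga u n j - ga u n (j+1)) * max (gk n (j+1) - gk n i) 0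
        = u (gk n m) - u (gk n i) - ga u n m * (gk n m - gk n i) := by
  intro m
  induction m with
  | zero =>
    intro hi _
    interval_cases i
    simp
  | succ m ih =>
    intro him hmN
    rcases Nat.lt_or_ge m i with hmi | hmi
    · -- i = m+1
      have hieq : i = m + 1 := by omega
      subst hieq
      have hz : ∑ j ∈ Finset.range (m+1),
          (ga u n j - ga u n (j+1)) * max (gk n (j+1) - gk n (m+1)) 0 = 0 := by
        apply Finset.sum_eq_zero
        intro j hj
        rw [Finset.mem_range] at hj
        have : gk n (j+1) ≤ gk n (m+1) := gk_mono hn (by omega)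
        rw [max_eq_right (by linarith), mul_zero]
      rw [hz]
      simp
    · have hmN' : m ≤ 2*n^2 := by omega
      have hmltN : m < 2*n^2 := by omega
      rw [Finset.sum_range_succ, ih hmi hmN']
      have hmax : max (gk n (m+1) - gk n i) 0 = gk n (m+1) - gk n i := by
        rw [max_eq_left]
        rw [sub_nonneg]
        exact gk_mono hn (by omega)
      rw [hmax]
      have ham : ga u n m = (n:ℝ)*(u (gk n (m+1)) - u (gk n m)) := by
        unfold ga; rw [if_pos hmltN]
      have hstep : gk n (m+1) = gk n m + 1/(n:ℝ) := gk_step hn m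
      have hn' : (0:ℝ) < n := by exact_mod_cast hn
      have hkey : ga u n m * (gk n (m+1) - gk n i) - ga u n m * (gk n m - gk n i)
          = u (gk n (m+1)) - u (gk n m) := by
        rw [ham, hstep]
        field_simp
        ring
      linarith [hkey]

lemma gv_grid (hn : 1 ≤ n) {i : ℕ} (hi : i ≤ 2*n^2) : gv u n (gk n i) = u (gk n i) := by
  unfold gv
  rw [gv_sum_identity hn i (2*n^2) hi (le_refl _), ga_top]
  ring

lemma gv_mono (hn : 1 ≤ n) (hu : ConcaveOn ℝ Set.univ u) (hmono : Monotone u) :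
    Monotone (gv u n) := by
  intro s t hst
  unfold gv
  apply sub_le_sub_left
  apply Finset.sum_le_sum
  intro j _
  apply mul_le_mul_of_nonneg_left
  · exact max_le_max (by linarith) (le_refl 0)
  · rw [sub_nonneg]; exact ga_anti hn hu hmono j

lemma gv_right (hn : 1 ≤ n) {t : ℝ} (ht : gk n (2*n^2) ≤ t) : gv u n t = u (gk n (2*n^2)) := by
  unfold gv
  rw [Finset.sum_eq_zero, sub_zero]
  intro j hj
  rw [Finset.mem_range] at hj
  have : gk n (j+1) ≤ gk n (2*n^2) := gk_mono hn (by omega)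
  rw [max_eq_right (by linarith), mul_zero]

lemma gv_left (hn : 1 ≤ n) {t : ℝ} (ht : t ≤ gk n 0) :
    gv u n t = u (gk n 0) + ga u n 0 * (t - gk n 0) := by
  unfold gv
  have hterm : ∀ j ∈ Finset.range (2*n^2),
      (ga u n j - ga u n (j+1)) * max (gk n (j+1) - t) 0
        = (ga u n j - ga u n (j+1)) * max (gk n (j+1) - gk n 0) 0
          + (ga u n j - ga u n (j+1)) * (gk n 0 - t) := by
    intro j _
    have h1 : gk n 0 ≤ gk n (j+1) := gk_mono hn (by omega)
    rw [max_eq_left (by linarith), max_eq_left (by linarith)]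
    ring
  rw [Finset.sum_congr rfl hterm, Finset.sum_add_distrib, ← Finset.sum_mul,
    Finset.sum_range_sub' (fun j => ga u n j),
    gv_sum_identity hn 0 (2*n^2) (Nat.zero_le _) (le_refl _), ga_top]
  ring

lemma u_le_gv_left (hn : 1 ≤ n) (hu : ConcaveOn ℝ Set.univ u) {t : ℝ} (ht : t ≤ gk n 0) :
    u t ≤ gv u n t := by
  rw [gv_left hn ht]
  rcases eq_or_lt_of_le ht with rfl | ht'
  · simp
  · have hn' : (0:ℝ) < n := by exact_mod_cast hn
    have h01 : gk n 0 < gk n 1 := by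
      rw [gk_step hn 0]
      have : 0 < 1/(n:ℝ) := by positivity
      linarith
    have h3 := concave_slope3 hu ht' h01
    have hNpos : 0 < 2*n^2 := by
      have h0 : 0 < n := hn
      positivity
    have ha0 : ga u n 0 = (n:ℝ)*(u (gk n 1) - u (gk n 0)) := by
      unfold ga
      rw [if_pos hNpos]
    have e1 : gk n 1 - gk n 0 = 1/(n:ℝ) := by rw [gk_step hn 0]; ring
    rw [e1] at h3
    -- h3 : (u (gk n 1) - u (gk n 0)) * (gk n 0 - t) ≤ (u (gk n 0) - u t) * (1/n)
    rw [ha0]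
    have hfin : (n:ℝ) * (u (gk n 1) - u (gk n 0)) * (gk n 0 - t) ≤ u (gk n 0) - u t := by
      have := mul_le_mul_of_nonneg_left h3 (le_of_lt hn')
      calc (n:ℝ) * (u (gk n 1) - u (gk n 0)) * (gk n 0 - t)
          = (n:ℝ) * ((u (gk n 1) - u (gk n 0)) * (gk n 0 - t)) := by ring
        _ ≤ (n:ℝ) * ((u (gk n 0) - u t) * (1/(n:ℝ))) := this
        _ = u (gk n 0) - u t := by field_simp
    nlinarith [hfin]

end Grid
section GridBounds

variable {u : ℝ → ℝ} {n : ℕ}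

lemma gv_cont : Continuous (gv u n) := by
  unfold gv
  apply continuous_const.sub
  apply continuous_finset_sum
  intro j _
  exact continuous_const.mul ((continuous_const.sub continuous_id).max continuous_const)

lemma gv_lower (hn : 1 ≤ n) (hu : ConcaveOn ℝ Set.univ u) (hmono : Monotone u) {t : ℝ}
    (h1 : gk n 0 ≤ t) (h2 : t ≤ gk n (2*n^2)) :
    u (t - 1/(n:ℝ)) ≤ gv u n t := by
  have hn' : (0:ℝ) < n := by exact_mod_cast hn
  rw [gk_zero] at h1
  rw [gk_top hn] at h2
  set i₀ := Nat.floor ((t + n) * n) with hi₀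
  have harg0 : 0 ≤ (t + (n:ℝ)) * n := mul_nonneg (by linarith) (le_of_lt hn')
  have hfl : (i₀:ℝ) ≤ (t + n) * n := Nat.floor_le harg0
  have hfl2 : (t + n) * n < i₀ + 1 := Nat.lt_floor_add_one _
  set i := min i₀ (2*n^2) with hi
  have hiN : i ≤ 2*n^2 := min_le_right _ _
  have hkle : gk n i ≤ t := by
    have hii : (i:ℝ) ≤ (i₀:ℝ) := by exact_mod_cast (min_le_left i₀ (2*n^2))
    unfold gk
    have hdiv : (i:ℝ)/(n:ℝ) ≤ t + n := by
      rw [div_le_iff₀ hn']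
      calc (i:ℝ) ≤ (i₀:ℝ) := hii
        _ ≤ (t + n) * n := hfl
        _ = (t + n) * n := rfl
    linarith
  have hkge : t - 1/(n:ℝ) ≤ gk n i := by
    rcases le_total i₀ (2*n^2) with hc | hc
    · have hieq : i = i₀ := min_eq_left hc
      rw [hieq]
      unfold gk
      have hdiv : t + n - 1/(n:ℝ) ≤ (i₀:ℝ)/(n:ℝ) := by
        rw [le_div_iff₀ hn']
        have hexp : (t + n - 1/(n:ℝ)) * n = (t+n)*n - 1 := by
          field_simp
        rw [hexp]
        linarith
      linarith
    · have hieq : i = 2*n^2 := min_eq_right hc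
      rw [hieq, gk_top hn]
      have hp : (0:ℝ) < 1/(n:ℝ) := by positivity
      linarith
  calc u (t - 1/(n:ℝ)) ≤ u (gk n i) := hmono hkge
    _ = gv u n (gk n i) := (gv_grid hn hiN).symm
    _ ≤ gv u n t := gv_mono hn hu hmono hkle

lemma gv_upper (hn : 1 ≤ n) (hu : ConcaveOn ℝ Set.univ u) (hmono : Monotone u) {t : ℝ}
    (h1 : gk n 0 ≤ t) (h2 : t ≤ gk n (2*n^2)) :
    gv u n t ≤ u (t + 1/(n:ℝ)) := by
  have hn' : (0:ℝ) < n := by exact_mod_cast hn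
  rw [gk_zero] at h1
  rw [gk_top hn] at h2
  set i₀ := Nat.floor ((t + n) * n) with hi₀
  have harg0 : 0 ≤ (t + (n:ℝ)) * n := mul_nonneg (by linarith) (le_of_lt hn')
  have hfl : (i₀:ℝ) ≤ (t + n) * n := Nat.floor_le harg0
  have hfl2 : (t + n) * n < i₀ + 1 := Nat.lt_floor_add_one _
  set i := min (i₀ + 1) (2*n^2) with hi
  have hiN : i ≤ 2*n^2 := min_le_right _ _
  have htle : t ≤ gk n i := by
    rcases le_total (i₀ + 1) (2*n^2) with hc | hc
    · have hieq : i = i₀ + 1 := min_eq_left hc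
      rw [hieq]
      unfold gk
      have hdiv : t + n ≤ ((i₀:ℕ) + 1 : ℕ)/(n:ℝ) := by
        push_cast
        rw [le_div_iff₀ hn']
        linarith
      push_cast at hdiv ⊢
      linarith
    · have hieq : i = 2*n^2 := min_eq_right hc
      rw [hieq, gk_top hn]
      linarith
  have hle2 : gk n i ≤ t + 1/(n:ℝ) := by
    rcases le_total (i₀ + 1) (2*n^2) with hc | hc
    · have hieq : i = i₀ + 1 := min_eq_left hc
      rw [hieq]
      unfold gk
      have hdiv : ((i₀:ℝ) + 1)/(n:ℝ) ≤ t + n + 1/(n:ℝ) := by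
        rw [div_le_iff₀ hn']
        have hexp : (t + n + 1/(n:ℝ)) * n = (t+n)*n + 1 := by
          field_simp
        rw [hexp]
        linarith
      push_cast
      linarith
    · have hieq : i = 2*n^2 := min_eq_right hc
      rw [hieq, gk_top hn]
      have hNi : ((2*n^2 : ℕ):ℝ) ≤ (i₀:ℝ) + 1 := by exact_mod_cast hc
      have hdiv : ((2*n^2 : ℕ):ℝ)/(n:ℝ) ≤ ((i₀:ℝ) + 1)/(n:ℝ) := by gcongr
      have htop : ((2*n^2 : ℕ):ℝ)/(n:ℝ) = 2*n := by
        push_cast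
        field_simp
      have hup : ((i₀:ℝ) + 1)/(n:ℝ) ≤ t + n + 1/(n:ℝ) := by
        rw [div_le_iff₀ hn']
        have hexp : (t + n + 1/(n:ℝ)) * n = (t+n)*n + 1 := by
          field_simp
        rw [hexp]
        linarith
      linarith
  calc gv u n t ≤ gv u n (gk n i) := gv_mono hn hu hmono htle
    _ = u (gk n i) := gv_grid hn hiN
    _ ≤ u (t + 1/(n:ℝ)) := hmono hle2

end GridBounds
section CoreLemma

open ENNReal

variable {μ : Measure Ω}

lemma abs_between {a b c : ℝ} (h1 : a ≤ b) (h2 : b ≤ c) : |b| ≤ |a| + |c| := by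
  rcases le_total 0 b with h | h
  · calc |b| = b := abs_of_nonneg h
      _ ≤ c := h2
      _ ≤ |c| := le_abs_self c
      _ ≤ |a| + |c| := le_add_of_nonneg_left (abs_nonneg a)
  · calc |b| = -b := abs_of_nonpos h
      _ ≤ -a := by linarith
      _ ≤ |a| := neg_le_abs a
      _ ≤ |a| + |c| := le_add_of_nonneg_right (abs_nonneg c)

lemma ofReal_max_zero (x : ℝ) : ENNReal.ofReal (max x 0) = ENNReal.ofReal x := by
  rcases le_total x 0 with h | h
  · rw [max_eq_right h, ENNReal.ofReal_zero, ENNReal.ofReal_eq_zero.2 h]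
  · rw [max_eq_left h]

/-- Uniform-in-`n` bound for the approximations of a Lipschitz function. -/
lemma gv_abs_le_lip {u : ℝ → ℝ} {n : ℕ} (hn : 1 ≤ n) (hu : ConcaveOn ℝ Set.univ u)
    (hmono : Monotone u) {L : ℝ} (hL0 : 0 ≤ L)
    (hL : ∀ s t : ℝ, s ≤ t → u t - u s ≤ L * (t - s)) (t : ℝ) :
    |gv u n t| ≤ 2*|u t| + |u 0| + 2*L := by
  have hn' : (0:ℝ) < n := by exact_mod_cast hn
  have habs : ∀ x : ℝ, 0 ≤ |u x| := fun x => abs_nonneg _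
  rcases le_total t (gk n 0) with h1 | h1
  · -- left region
    have hb1 : u t ≤ gv u n t := u_le_gv_left hn hu h1
    have hb2 : gv u n t ≤ u (gk n 0) := by
      rw [gv_left hn h1]
      have := mul_nonpos_of_nonneg_of_nonpos (ga_nonneg hn hmono 0) (by linarith : t - gk n 0 ≤ 0)
      linarith
    have hg0 : |u (gk n 0)| ≤ |u t| + |u 0| := by
      apply abs_between (hmono h1)
      apply hmono
      rw [gk_zero]
      linarith
    have := abs_between hb1 hb2
    calc |gv u n t| ≤ |u t| + |u (gk n 0)| := this
      _ ≤ |u t| + (|u t| + |u 0|) := by linarith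
      _ ≤ 2*|u t| + |u 0| + 2*L := by linarith
  · rcases le_total t (gk n (2*n^2)) with h2 | h2
    · -- middle region
      have hb1 : u (t - 1/(n:ℝ)) ≤ gv u n t := gv_lower hn hu hmono h1 h2
      have hb2 : gv u n t ≤ u (t + 1/(n:ℝ)) := gv_upper hn hu hmono h1 h2
      have hstep : (0:ℝ) < 1/(n:ℝ) ∧ (1:ℝ)/(n:ℝ) ≤ 1 := by
        constructor
        · positivity
        · rw [div_le_one hn']
          exact_mod_cast hn
      have hc1 : u t - L ≤ u (t - 1/(n:ℝ)) := by
        have := hL (t - 1/(n:ℝ)) t (by linarith [hstep.1])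
        have hL1 : L * (t - (t - 1/(n:ℝ))) ≤ L * 1 := by
          apply mul_le_mul_of_nonneg_left _ hL0
          linarith [hstep.2]
        linarith
      have hc2 : u (t + 1/(n:ℝ)) ≤ u t + L := by
        have := hL t (t + 1/(n:ℝ)) (by linarith [hstep.1])
        have hL1 : L * (t + 1/(n:ℝ) - t) ≤ L * 1 := by
          apply mul_le_mul_of_nonneg_left _ hL0
          linarith [hstep.2]
        linarith
      have := abs_between (by linarith : u t - L ≤ gv u n t)
        (by linarith : gv u n t ≤ u t + L)
      have ha1 : |u t - L| ≤ |u t| + L := by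
        calc |u t - L| ≤ |u t| + |L| := abs_sub _ _
          _ = |u t| + L := by rw [abs_of_nonneg hL0]
      have ha2 : |u t + L| ≤ |u t| + L := by
        calc |u t + L| ≤ |u t| + |L| := abs_add_le _ _
          _ = |u t| + L := by rw [abs_of_nonneg hL0]
      calc |gv u n t| ≤ |u t - L| + |u t + L| := this
        _ ≤ 2*|u t| + 2*L := by linarith
        _ ≤ 2*|u t| + |u 0| + 2*L := by linarith [habs (0:ℝ)]
    · -- right region
      have hgt : gv u n t = u (gk n (2*n^2)) := gv_right hn h2
      have hb1 : u 0 ≤ u (gk n (2*n^2)) := by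
        apply hmono
        rw [gk_top hn]
        positivity
      have hb2 : u (gk n (2*n^2)) ≤ u t := hmono h2
      rw [hgt]
      have := abs_between hb1 hb2
      calc |u (gk n (2*n^2))| ≤ |u 0| + |u t| := this
        _ ≤ 2*|u t| + |u 0| + 2*L := by linarith [habs t]

/-- The key integral comparison for the put-form approximations. -/
lemma gv_integral_le [IsProbabilityMeasure μ] {u : ℝ → ℝ} (hu : ConcaveOn ℝ Set.univ u)
    (hmono : Monotone u) {n : ℕ} (hn : 1 ≤ n) {S S' : Ω → ℝ}
    (hS : Measurable S) (hS' : Measurable S')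
    (hgvS : Integrable (fun ω => gv u n (S ω)) μ)
    (hgvS' : Integrable (fun ω => gv u n (S' ω)) μ)
    (hput : ∀ k : ℝ, ∫⁻ ω, ENNReal.ofReal (k - S ω) ∂μ ≤ ∫⁻ ω, ENNReal.ofReal (k - S' ω) ∂μ) :
    ∫ ω, gv u n (S' ω) ∂μ ≤ ∫ ω, gv u n (S ω) ∂μ := by
  set N := 2*n^2 with hN
  set c : ℝ := u (gk n N) with hc
  set W : ℝ → ℝ := fun t =>
    ∑ j ∈ Finset.range N, (ga u n j - ga u n (j+1)) * max (gk n (j+1) - t) 0 with hW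
  have hgvW : ∀ t, gv u n t = c - W t := fun t => rfl
  have hW0 : ∀ t, 0 ≤ W t := by
    intro t
    apply Finset.sum_nonneg
    intro j _
    apply mul_nonneg
    · rw [sub_nonneg]; exact ga_anti hn hu hmono j
    · exact le_max_right _ _
  -- lintegral computation
  have hlint : ∀ (T : Ω → ℝ), Measurable T →
      ∫⁻ ω, ENNReal.ofReal (W (T ω)) ∂μ
        = ∑ j ∈ Finset.range N, ENNReal.ofReal (ga u n j - ga u n (j+1))
            * ∫⁻ ω, ENNReal.ofReal (gk n (j+1) - T ω) ∂μ := by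
    intro T hT
    have hptw : ∀ ω, ENNReal.ofReal (W (T ω))
        = ∑ j ∈ Finset.range N, ENNReal.ofReal
            ((ga u n j - ga u n (j+1)) * max (gk n (j+1) - T ω) 0) := by
      intro ω
      rw [hW]
      rw [ENNReal.ofReal_sum_of_nonneg]
      intro j _
      apply mul_nonneg
      · rw [sub_nonneg]; exact ga_anti hn hu hmono j
      · exact le_max_right _ _
    simp_rw [hptw]
    rw [lintegral_finset_sum]
    · apply Finset.sum_congr rfl
      intro j _
      have hterm : ∀ ω, ENNReal.ofReal ((ga u n j - ga u n (j+1)) * max (gk n (j+1) - T ω) 0)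
          = ENNReal.ofReal (ga u n j - ga u n (j+1))
              * ENNReal.ofReal (gk n (j+1) - T ω) := by
        intro ω
        rw [ENNReal.ofReal_mul (by rw [sub_nonneg]; exact ga_anti hn hu hmono j),
          ofReal_max_zero]
      simp_rw [hterm]
      rw [lintegral_const_mul]
      exact (measurable_const.sub hT).ennreal_ofReal
    · intro j _
      exact ((measurable_const.mul ((measurable_const.sub hT).max measurable_const)).ennreal_ofReal)
  -- comparison of lintegrals
  have hkey : ∫⁻ ω, ENNReal.ofReal (W (S ω)) ∂μ ≤ ∫⁻ ω, ENNReal.ofReal (W (S' ω)) ∂μ := by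
    rw [hlint S hS, hlint S' hS']
    apply Finset.sum_le_sum
    intro j _
    exact mul_le_mul_right (hput (gk n (j+1))) _
  -- integrability of W compositions
  have hWS : Integrable (fun ω => W (S ω)) μ := by
    have : (fun ω => W (S ω)) = fun ω => c - gv u n (S ω) := by
      funext ω; rw [hgvW]; ring
    rw [this]
    exact (integrable_const c).sub hgvS
  have hWS' : Integrable (fun ω => W (S' ω)) μ := by
    have : (fun ω => W (S' ω)) = fun ω => c - gv u n (S' ω) := by
      funext ω; rw [hgvW]; ring
    rw [this]
    exact (integrable_const c).sub hgvS'
  have hfin : ∫⁻ ω, ENNReal.ofReal (W (S' ω)) ∂μ ≠ ⊤ := by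
    have h1 := (MeasureTheory.hasFiniteIntegral_iff_ofReal
      (Filter.Eventually.of_forall fun ω => hW0 (S' ω))).mp hWS'.2
    exact ne_of_lt h1
  have heqS : ∫ ω, W (S ω) ∂μ = (∫⁻ ω, ENNReal.ofReal (W (S ω)) ∂μ).toReal := by
    rw [MeasureTheory.integral_eq_lintegral_of_nonneg_ae]
    · exact Filter.Eventually.of_forall fun ω => hW0 _
    · exact hWS.1
  have heqS' : ∫ ω, W (S' ω) ∂μ = (∫⁻ ω, ENNReal.ofReal (W (S' ω)) ∂μ).toReal := by
    rw [MeasureTheory.integral_eq_lintegral_of_nonneg_ae]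
    · exact Filter.Eventually.of_forall fun ω => hW0 _
    · exact hWS'.1
  have hcomp : ∫ ω, W (S ω) ∂μ ≤ ∫ ω, W (S' ω) ∂μ := by
    rw [heqS, heqS']
    exact ENNReal.toReal_mono hfin hkey
  -- conclusion
  have hintS : ∫ ω, gv u n (S ω) ∂μ = c - ∫ ω, W (S ω) ∂μ := by
    have h1 : (fun ω => gv u n (S ω)) = fun ω => c - W (S ω) := by
      funext ω; rw [hgvW]
    rw [h1, integral_sub (integrable_const c) hWS, integral_const]
    simp [measure_univ]
  have hintS' : ∫ ω, gv u n (S' ω) ∂μ = c - ∫ ω, W (S' ω) ∂μ := by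
    have h1 : (fun ω => gv u n (S' ω)) = fun ω => c - W (S' ω) := by
      funext ω; rw [hgvW]
    rw [h1, integral_sub (integrable_const c) hWS', integral_const]
    simp [measure_univ]
  rw [hintS, hintS']
  linarith

end CoreLemma
section CoreLip

open ENNReal Filter

variable {μ : Measure Ω}

lemma gv_tendsto {u : ℝ → ℝ} (hu : ConcaveOn ℝ Set.univ u) (hmono : Monotone u) (t : ℝ) :
    Tendsto (fun m : ℕ => gv u (m+1) t) atTop (nhds (u t)) := by
  have hucont : Continuous u := concave_continuous hu
  have h0 : Tendsto (fun m : ℕ => 1/((m:ℝ)+1)) atTop (nhds 0) :=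
    tendsto_one_div_add_atTop_nhds_zero_nat
  have hlow : Tendsto (fun m : ℕ => u (t - 1/((m:ℝ)+1))) atTop (nhds (u t)) := by
    have h1 : Tendsto (fun m : ℕ => t - 1/((m:ℝ)+1)) atTop (nhds t) := by
      have := tendsto_const_nhds (x := t) (f := atTop (α := ℕ)) |>.sub h0
      simpa using this
    exact (hucont.tendsto t).comp h1
  have hhigh : Tendsto (fun m : ℕ => u (t + 1/((m:ℝ)+1))) atTop (nhds (u t)) := by
    have h1 : Tendsto (fun m : ℕ => t + 1/((m:ℝ)+1)) atTop (nhds t) := by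
      have := tendsto_const_nhds (x := t) (f := atTop (α := ℕ)) |>.add h0
      simpa using this
    exact (hucont.tendsto t).comp h1
  apply tendsto_of_tendsto_of_tendsto_of_le_of_le' hlow hhigh
  · -- eventually lower bound
    rw [eventually_atTop]
    refine ⟨Nat.ceil |t|, fun m hm => ?_⟩
    have hmt : |t| ≤ (m:ℝ) := le_trans (Nat.le_ceil _) (by exact_mod_cast hm)
    have hm1 : 1 ≤ m + 1 := Nat.succ_le_succ (Nat.zero_le m)
    have hcast : ((m+1:ℕ):ℝ) = (m:ℝ)+1 := by push_cast; ring
    rw [← hcast]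
    apply gv_lower hm1 hu hmono
    · rw [gk_zero, hcast]
      have := abs_le.1 (le_refl |t|) -- dummy
      have h2 := neg_abs_le t
      linarith
    · rw [gk_top hm1, hcast]
      have h2 := le_abs_self t
      linarith
  · -- eventually upper bound
    rw [eventually_atTop]
    refine ⟨Nat.ceil |t|, fun m hm => ?_⟩
    have hmt : |t| ≤ (m:ℝ) := le_trans (Nat.le_ceil _) (by exact_mod_cast hm)
    have hm1 : 1 ≤ m + 1 := Nat.succ_le_succ (Nat.zero_le m)
    have hcast : ((m+1:ℕ):ℝ) = (m:ℝ)+1 := by push_cast; ring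
    rw [← hcast]
    apply gv_upper hm1 hu hmono
    · rw [gk_zero, hcast]
      have h2 := neg_abs_le t
      linarith
    · rw [gk_top hm1, hcast]
      have h2 := le_abs_self t
      linarith

/-- Stage A: the comparison for Lipschitz, monotone, concave `u`. -/
lemma core_lip [IsProbabilityMeasure μ] {u : ℝ → ℝ} (hu : ConcaveOn ℝ Set.univ u)
    (hmono : Monotone u) {L : ℝ} (hL0 : 0 ≤ L)
    (hL : ∀ s t : ℝ, s ≤ t → u t - u s ≤ L * (t - s))
    {S S' : Ω → ℝ} (hS : Measurable S) (hS' : Measurable S')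
    (hiS : Integrable (fun ω => u (S ω)) μ) (hiS' : Integrable (fun ω => u (S' ω)) μ)
    (hput : ∀ k : ℝ, ∫⁻ ω, ENNReal.ofReal (k - S ω) ∂μ ≤ ∫⁻ ω, ENNReal.ofReal (k - S' ω) ∂μ) :
    ∫ ω, u (S' ω) ∂μ ≤ ∫ ω, u (S ω) ∂μ := by
  have hgvInt : ∀ (T : Ω → ℝ), Measurable T → Integrable (fun ω => u (T ω)) μ →
      ∀ n : ℕ, 1 ≤ n → Integrable (fun ω => gv u n (T ω)) μ := by
    intro T hT hiT n hn
    apply Integrable.mono' ((hiT.abs.const_mul 2).add (integrable_const (|u 0| + 2*L)))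
    · exact (gv_cont.measurable.comp hT).aestronglyMeasurable
    · filter_upwards with ω
      rw [Real.norm_eq_abs]
      calc |gv u n (T ω)| ≤ 2*|u (T ω)| + |u 0| + 2*L := gv_abs_le_lip hn hu hmono hL0 hL _
        _ = 2*|u (T ω)| + (|u 0| + 2*L) := by ring
  have hdct : ∀ (T : Ω → ℝ), Measurable T → Integrable (fun ω => u (T ω)) μ →
      Tendsto (fun m : ℕ => ∫ ω, gv u (m+1) (T ω) ∂μ) atTop (nhds (∫ ω, u (T ω) ∂μ)) := by
    intro T hT hiT
    apply MeasureTheory.tendsto_integral_of_dominated_convergence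
      (bound := fun ω => 2*|u (T ω)| + (|u 0| + 2*L))
    · intro m
      exact (gv_cont.measurable.comp hT).aestronglyMeasurable
    · exact (hiT.abs.const_mul 2).add (integrable_const _)
    · intro m
      filter_upwards with ω
      rw [Real.norm_eq_abs]
      calc |gv u (m+1) (T ω)| ≤ 2*|u (T ω)| + |u 0| + 2*L :=
            gv_abs_le_lip (Nat.succ_le_succ (Nat.zero_le m)) hu hmono hL0 hL _
        _ = 2*|u (T ω)| + (|u 0| + 2*L) := by ring
    · filter_upwards with ω
      exact gv_tendsto hu hmono (T ω)
  apply le_of_tendsto_of_tendsto' (hdct S' hS' hiS') (hdct S hS hiS)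
  intro m
  exact gv_integral_le hu hmono (Nat.succ_le_succ (Nat.zero_le m)) hS hS'
    (hgvInt S hS hiS _ (Nat.succ_le_succ (Nat.zero_le m)))
    (hgvInt S' hS' hiS' _ (Nat.succ_le_succ (Nat.zero_le m))) hput

end CoreLip
section Tangent

/-- Right-derivative-like slope bound at `q`. -/
noncomputable def rdq (u : ℝ → ℝ) (q : ℝ) : ℝ :=
  sSup ((fun r => (u r - u q)/(r - q)) '' Set.Ioc q (q+1))

variable {u : ℝ → ℝ} {q : ℝ}

lemma slope_anti_right (hu : ConcaveOn ℝ Set.univ u) {r1 r2 : ℝ}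
    (h1 : q < r1) (h2 : r1 ≤ r2) :
    (u r2 - u q) * (r1 - q) ≤ (u r1 - u q) * (r2 - q) := by
  rcases eq_or_lt_of_le h2 with rfl | h2'
  · exact le_refl _
  · have h3 := concave_slope3 hu h1 h2'
    have e1 : (u r2 - u q)*(r1-q) = (u r2 - u r1)*(r1-q) + (u r1 - u q)*(r1-q) := by ring
    have e2 : (u r1 - u q)*(r2-q) = (u r1 - u q)*(r2-r1) + (u r1 - u q)*(r1-q) := by ring
    linarith

lemma rdq_bddAbove (hu : ConcaveOn ℝ Set.univ u) :
    BddAbove ((fun r => (u r - u q)/(r - q)) '' Set.Ioc q (q+1)) := by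
  refine ⟨u q - u (q-1), ?_⟩
  rintro w ⟨r, ⟨hr1, hr2⟩, rfl⟩
  have h3 := concave_slope3 hu (by linarith : q - 1 < q) hr1
  rw [div_le_iff₀ (by linarith : (0:ℝ) < r - q)]
  nlinarith [h3]

lemma rdq_ne : ((fun r => (u r - u q)/(r - q)) '' Set.Ioc q (q+1)).Nonempty :=
  Set.Nonempty.image _ (Set.nonempty_Ioc.2 (by linarith))

lemma rdq_ge_slope (hu : ConcaveOn ℝ Set.univ u) {r : ℝ} (hr : q ≤ r) :
    u r - u q ≤ rdq u q * (r - q) := by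
  have hrd : rdq u q = sSup ((fun r => (u r - u q)/(r - q)) '' Set.Ioc q (q+1)) := rfl
  rcases eq_or_lt_of_le hr with rfl | hr'
  · simp
  · rcases le_or_gt r (q+1) with hc | hc
    · have hmem : (u r - u q)/(r - q) ∈ (fun r => (u r - u q)/(r - q)) '' Set.Ioc q (q+1) :=
        ⟨r, ⟨hr', hc⟩, rfl⟩
      have h := le_csSup (rdq_bddAbove hu) hmem
      rw [← hrd] at h
      rw [div_le_iff₀ (by linarith : (0:ℝ) < r - q)] at h
      linarith
    · have hmem : (u (q+1) - u q)/((q+1) - q) ∈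
          (fun r => (u r - u q)/(r - q)) '' Set.Ioc q (q+1) :=
        ⟨q+1, ⟨by linarith, le_refl _⟩, rfl⟩
      have h := le_csSup (rdq_bddAbove hu) hmem
      rw [← hrd] at h
      have he : (q+1) - q = (1:ℝ) := by ring
      rw [he, div_one] at h
      have ha := slope_anti_right hu (by linarith : q < q + 1) (le_of_lt hc)
      rw [he, mul_one] at ha
      have hm : (u (q+1) - u q) * (r - q) ≤ rdq u q * (r - q) := by
        apply mul_le_mul_of_nonneg_right _ (by linarith : (0:ℝ) ≤ r - q)
        linarith
      linarith

lemma rdq_le_slope (hu : ConcaveOn ℝ Set.univ u) {s : ℝ} (hs : s < q) :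
    rdq u q * (q - s) ≤ u q - u s := by
  have hq : rdq u q ≤ (u q - u s)/(q - s) := by
    apply csSup_le rdq_ne
    rintro w ⟨r, ⟨hr1, _⟩, rfl⟩
    have h3 := concave_slope3 hu hs hr1
    rw [div_le_div_iff₀ (by linarith : (0:ℝ) < r - q) (by linarith : (0:ℝ) < q - s)]
    nlinarith [h3]
  rw [le_div_iff₀ (by linarith : (0:ℝ) < q - s)] at hq
  linarith

lemma rdq_nonneg (hu : ConcaveOn ℝ Set.univ u) (hmono : Monotone u) : 0 ≤ rdq u q := by
  have hrd : rdq u q = sSup ((fun r => (u r - u q)/(r - q)) '' Set.Ioc q (q+1)) := rfl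
  rw [hrd]
  have hmem : (u (q+1) - u q)/((q+1) - q) ∈
      (fun r => (u r - u q)/(r - q)) '' Set.Ioc q (q+1) :=
    ⟨q+1, ⟨by linarith, le_refl _⟩, rfl⟩
  have h := le_csSup (rdq_bddAbove hu) hmem
  have he : (q+1) - q = (1:ℝ) := by ring
  rw [he, div_one] at h
  have : 0 ≤ u (q+1) - u q := by
    rw [sub_nonneg]; exact hmono (by linarith)
  linarith

lemma tangent_above (hu : ConcaveOn ℝ Set.univ u) (t : ℝ) :
    u t ≤ u q + rdq u q * (t - q) := by
  rcases lt_trichotomy t q with h | h | h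
  · have := rdq_le_slope hu h
    nlinarith [this]
  · subst h; simp
  · have := rdq_ge_slope hu (le_of_lt h)
    linarith

lemma rdq_anti (hu : ConcaveOn ℝ Set.univ u) {c s : ℝ} (hcs : c ≤ s) :
    rdq u s ≤ rdq u c := by
  rcases eq_or_lt_of_le hcs with rfl | h
  · exact le_refl _
  · have h1 := rdq_le_slope hu (q := s) h
    have h2 := rdq_ge_slope hu (q := c) (le_of_lt h)
    have hpos : (0:ℝ) < s - c := by linarith
    have : rdq u s * (s - c) ≤ rdq u c * (s - c) := by linarith
    exact le_of_mul_le_mul_right this hpos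

end Tangent
section Wtan

open Filter

/-- Tangent-line extension of `u` to the left of `c`. -/
noncomputable def wtan (u : ℝ → ℝ) (c : ℝ) (t : ℝ) : ℝ :=
  if t < c then u c + rdq u c * (t - c) else u t

variable {u : ℝ → ℝ} {c : ℝ}

lemma wtan_eq {t : ℝ} (ht : c ≤ t) : wtan u c t = u t := by
  rw [wtan, if_neg (not_lt.2 ht)]

lemma wtan_ge (hu : ConcaveOn ℝ Set.univ u) (t : ℝ) : u t ≤ wtan u c t := by
  rw [wtan]
  split_ifs
  · exact tangent_above hu t
  · exact le_refl _

lemma wtan_le_B (hu : ConcaveOn ℝ Set.univ u) (hmono : Monotone u) {B : ℝ}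
    (hB : ∀ t, u t ≤ B) (t : ℝ) : wtan u c t ≤ B := by
  rw [wtan]
  split_ifs with h
  · have h1 := mul_nonpos_of_nonneg_of_nonpos (rdq_nonneg hu hmono (q := c))
      (by linarith : t - c ≤ 0)
    linarith [hB c]
  · exact hB t

lemma wtan_mono (hu : ConcaveOn ℝ Set.univ u) (hmono : Monotone u) :
    Monotone (wtan u c) := by
  intro s t hst
  rw [wtan, wtan]
  have hrd := rdq_nonneg hu hmono (q := c)
  split_ifs with h1 h2 h2
  · have := mul_le_mul_of_nonneg_left (by linarith : s - c ≤ t - c) hrd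
    linarith
  · push_neg at h2
    have h3 := mul_nonpos_of_nonneg_of_nonpos hrd (by linarith : s - c ≤ 0)
    have h4 : u c ≤ u t := hmono h2
    linarith
  · exact absurd (lt_of_le_of_lt hst h2) h1
  · exact hmono hst

lemma wtan_lip (hu : ConcaveOn ℝ Set.univ u) :
    ∀ s t : ℝ, s ≤ t → wtan u c t - wtan u c s ≤ rdq u c * (t - s) := by
  intro s t hst
  rw [wtan, wtan]
  split_ifs with h1 h2 h2
  · -- both left: equality
    have : u c + rdq u c * (t - c) - (u c + rdq u c * (s - c)) = rdq u c * (t - s) := by ring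
    linarith
  · -- impossible: t < c but s ≥ c
    exact absurd (lt_of_le_of_lt hst h1) h2
  · -- s < c ≤ t
    push_neg at h1
    have ht : u t - u c ≤ rdq u c * (t - c) := rdq_ge_slope hu h1
    have : rdq u c * (t - c) + rdq u c * (c - s) = rdq u c * (t - s) := by ring
    linarith
  · -- both right
    push_neg at h1 h2
    have hrds : rdq u s ≤ rdq u c := rdq_anti hu h2
    have ht : u t - u s ≤ rdq u s * (t - s) := rdq_ge_slope hu hst
    have hm : rdq u s * (t - s) ≤ rdq u c * (t - s) :=
      mul_le_mul_of_nonneg_right hrds (by linarith)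
    linarith

lemma wtan_concave (hu : ConcaveOn ℝ Set.univ u) (hmono : Monotone u) :
    ConcaveOn ℝ Set.univ (wtan u c) := by
  have hrd0 := rdq_nonneg hu hmono (q := c)
  have key : ∀ x y a b : ℝ, x ≤ y → 0 ≤ a → 0 ≤ b → a + b = 1 →
      a * wtan u c x + b * wtan u c y ≤ wtan u c (a * x + b * y) := by
    intro x y a b hxy ha hb hab
    have habc : a * c + b * c = c := by rw [← add_mul, hab, one_mul]
    rcases lt_or_ge y c with hyc | hcy
    · -- both < c : linear region
      have hxc : x < c := lt_of_le_of_lt hxy hyc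
      have hmc : a * x + b * y < c := by
        nlinarith [mul_le_mul_of_nonneg_left (le_of_lt hxc) ha,
          mul_le_mul_of_nonneg_left (le_of_lt hyc) hb, habc]
      rw [wtan, wtan, wtan, if_pos hxc, if_pos hyc, if_pos hmc]
      have : a * (u c + rdq u c * (x - c)) + b * (u c + rdq u c * (y - c))
          = (a + b) * u c + rdq u c * ((a*x + b*y) - (a+b)*c) := by ring
      rw [hab] at this
      have h2 : u c + rdq u c * ((a*x+b*y) - c) = 1 * u c + rdq u c * ((a*x+b*y) - 1*c) := by
        ring
      linarith [this]
    · rcases le_or_gt c x with hcx | hxc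
      · -- both ≥ c
        have hmge : c ≤ a * x + b * y := by
          nlinarith [mul_le_mul_of_nonneg_left hcx ha, mul_le_mul_of_nonneg_left hcy hb, habc]
        rw [wtan_eq hcx, wtan_eq hcy, wtan_eq hmge]
        have := hu.2 (Set.mem_univ x) (Set.mem_univ y) ha hb hab
        simpa using this
      · -- x < c ≤ y
        rw [wtan, if_pos hxc, wtan_eq hcy]
        set m := a * x + b * y with hm
        rcases lt_or_ge m c with hmc | hcm
        · rw [wtan, if_pos hmc]
          -- linear bound: u y ≤ tangent at c
          have hy : u y ≤ u c + rdq u c * (y - c) := tangent_above hu y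
          have hby : b * u y ≤ b * (u c + rdq u c * (y - c)) :=
            mul_le_mul_of_nonneg_left hy hb
          have hlin : a * (u c + rdq u c * (x - c)) + b * (u c + rdq u c * (y - c))
              = u c + rdq u c * (m - c) := by
            rw [hm]
            have : a * (u c + rdq u c * (x - c)) + b * (u c + rdq u c * (y - c))
                = (a+b) * u c + rdq u c * ((a*x+b*y) - (a+b)*c) := by ring
            rw [this, hab]
            ring
          linarith
        · rw [wtan_eq hcm]
          set m' := a * c + b * y with hm'
          have hm'c : c ≤ m' := by
            rw [hm']
            nlinarith [mul_le_mul_of_nonneg_left hcy hb, habc]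
          have hmm' : m ≤ m' := by
            rw [hm, hm']
            have := mul_le_mul_of_nonneg_left (le_of_lt hxc) ha
            linarith
          have hconc : a * u c + b * u y ≤ u m' := by
            have := hu.2 (Set.mem_univ c) (Set.mem_univ y) ha hb hab
            simpa [hm'] using this
          -- u m' - u m ≤ rdq u c * (m' - m)
          have hkey : u m' - u m ≤ rdq u c * (m' - m) := by
            have h1 : u m' - u m ≤ rdq u m * (m' - m) := rdq_ge_slope hu hmm'
            have h2 : rdq u m ≤ rdq u c := rdq_anti hu hcm
            have h3 : rdq u m * (m' - m) ≤ rdq u c * (m' - m) :=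
              mul_le_mul_of_nonneg_right h2 (by linarith)
            linarith
          have hdelta : m' - m = a * (c - x) := by rw [hm, hm']; ring
          have hfin : a * (u c + rdq u c * (x - c)) + b * u y ≤ u m := by
            have e1 : a * (u c + rdq u c * (x - c)) + b * u y
                = (a * u c + b * u y) - rdq u c * (a * (c - x)) := by ring
            rw [e1, ← hdelta]
            linarith
          exact hfin
  refine ⟨convex_univ, ?_⟩
  intro x _ y _ a b ha hb hab
  simp only [smul_eq_mul]
  rcases le_total x y with h | h
  · exact key x y a b h ha hb hab
  · have := key y x b a h hb ha (by linarith)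
    calc a * wtan u c x + b * wtan u c y
        = b * wtan u c y + a * wtan u c x := by ring
      _ ≤ wtan u c (b * y + a * x) := this
      _ = wtan u c (a * x + b * y) := by rw [add_comm]

lemma wtan_measurable (hu : ConcaveOn ℝ Set.univ u) : Measurable (wtan u c) := by
  have humeas : Measurable u := (concave_continuous hu).measurable
  have h1 : Measurable (fun t : ℝ => u c + rdq u c * (t - c)) := by
    apply measurable_const.add
    exact (measurable_id.sub_const c).const_mul (rdq u c)
  exact Measurable.ite measurableSet_Iio h1 humeas

end Wtan
section MainCV

open ENNReal Filter

variable {μ : Measure Ω}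

lemma abs_min_le (a b : ℝ) : |min a b| ≤ |a| + |b| := by
  rcases le_total a b with h | h
  · rw [min_eq_left h]
    linarith [abs_nonneg b]
  · rw [min_eq_right h]
    linarith [abs_nonneg a]

lemma abs_max_le (a b : ℝ) : |max a b| ≤ |a| + |b| := by
  rcases le_total a b with h | h
  · rw [max_eq_right h]
    linarith [abs_nonneg a]
  · rw [max_eq_left h]
    linarith [abs_nonneg b]

/-- Stage B: the comparison for monotone concave `u` bounded above. -/
lemma core_mono_bdd [IsProbabilityMeasure μ] {u : ℝ → ℝ} (hu : ConcaveOn ℝ Set.univ u)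
    (hmono : Monotone u) {B : ℝ} (hB : ∀ t, u t ≤ B)
    {S S' : Ω → ℝ} (hS : Measurable S) (hS' : Measurable S')
    (hiS : Integrable (fun ω => u (S ω)) μ) (hiS' : Integrable (fun ω => u (S' ω)) μ)
    (hput : ∀ k : ℝ, ∫⁻ ω, ENNReal.ofReal (k - S ω) ∂μ ≤ ∫⁻ ω, ENNReal.ofReal (k - S' ω) ∂μ) :
    ∫ ω, u (S' ω) ∂μ ≤ ∫ ω, u (S ω) ∂μ := by
  have hwInt : ∀ (T : Ω → ℝ), Measurable T → Integrable (fun ω => u (T ω)) μ →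
      ∀ j : ℕ, Integrable (fun ω => wtan u (-(j:ℝ)) (T ω)) μ := by
    intro T hT hiT j
    apply Integrable.mono' (hiT.abs.add (integrable_const |B|))
    · exact ((wtan_measurable hu).comp hT).aestronglyMeasurable
    · filter_upwards with ω
      rw [Real.norm_eq_abs]
      exact abs_between (wtan_ge hu _) (wtan_le_B hu hmono hB _)
  have hdct : ∀ (T : Ω → ℝ), Measurable T → Integrable (fun ω => u (T ω)) μ →
      Tendsto (fun j : ℕ => ∫ ω, wtan u (-(j:ℝ)) (T ω) ∂μ) atTop
        (nhds (∫ ω, u (T ω) ∂μ)) := by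
    intro T hT hiT
    apply MeasureTheory.tendsto_integral_of_dominated_convergence
      (bound := fun ω => |u (T ω)| + |B|)
    · intro j
      exact ((wtan_measurable hu).comp hT).aestronglyMeasurable
    · exact hiT.abs.add (integrable_const _)
    · intro j
      filter_upwards with ω
      rw [Real.norm_eq_abs]
      exact abs_between (wtan_ge hu _) (wtan_le_B hu hmono hB _)
    · filter_upwards with ω
      apply Filter.Tendsto.congr' _ tendsto_const_nhds
      rw [Filter.EventuallyEq, eventually_atTop]
      refine ⟨Nat.ceil |T ω|, fun j hj => ?_⟩
      have hjT : -(j:ℝ) ≤ T ω := by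
        have h1 : |T ω| ≤ (j:ℝ) := le_trans (Nat.le_ceil _) (by exact_mod_cast hj)
        have h2 := neg_abs_le (T ω)
        linarith
      exact (wtan_eq hjT).symm
  apply le_of_tendsto_of_tendsto' (hdct S' hS' hiS') (hdct S hS hiS)
  intro j
  exact core_lip (wtan_concave hu hmono) (wtan_mono hu hmono)
    (rdq_nonneg hu hmono) (wtan_lip hu) hS hS'
    (hwInt S hS hiS j) (hwInt S' hS' hiS' j) hput

/-- The comparison for general monotone concave `u`. -/
lemma main_mono [IsProbabilityMeasure μ] {u : ℝ → ℝ} (hu : ConcaveOn ℝ Set.univ u)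
    (hmono : Monotone u)
    {S S' : Ω → ℝ} (hS : Measurable S) (hS' : Measurable S')
    (hiS : Integrable (fun ω => u (S ω)) μ) (hiS' : Integrable (fun ω => u (S' ω)) μ)
    (hput : ∀ k : ℝ, ∫⁻ ω, ENNReal.ofReal (k - S ω) ∂μ ≤ ∫⁻ ω, ENNReal.ofReal (k - S' ω) ∂μ) :
    ∫ ω, u (S' ω) ∂μ ≤ ∫ ω, u (S ω) ∂μ := by
  have humeas : Measurable u := (concave_continuous hu).measurable
  have hInt : ∀ (T : Ω → ℝ), Measurable T → Integrable (fun ω => u (T ω)) μ →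
      ∀ n : ℕ, Integrable (fun ω => u (min (T ω) (n:ℝ))) μ := by
    intro T hT hiT n
    apply Integrable.mono' (hiT.abs.add (integrable_const |u (n:ℝ)|))
    · exact (humeas.comp (hT.min measurable_const)).aestronglyMeasurable
    · filter_upwards with ω
      rw [Real.norm_eq_abs, hmono.map_min]
      exact abs_min_le _ _
  have hclip : ∀ n : ℕ, ∫ ω, u (min (S' ω) (n:ℝ)) ∂μ ≤ ∫ ω, u (min (S ω) (n:ℝ)) ∂μ := by
    intro n
    have hT : ∀ s, s ≤ (n:ℝ) → u s ≤ u (n:ℝ) := fun s hs => hmono hs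
    exact core_mono_bdd (concave_clip hu hT)
      (fun s t hst => hmono (min_le_min hst (le_refl _)))
      (fun t => hmono (min_le_right _ _)) hS hS'
      (hInt S hS hiS n) (hInt S' hS' hiS' n) hput
  have hdct : ∀ (T : Ω → ℝ), Measurable T → Integrable (fun ω => u (T ω)) μ →
      Tendsto (fun n : ℕ => ∫ ω, u (min (T ω) (n:ℝ)) ∂μ) atTop
        (nhds (∫ ω, u (T ω) ∂μ)) := by
    intro T hT hiT
    apply MeasureTheory.tendsto_integral_of_dominated_convergence
      (bound := fun ω => 2*|u (T ω)| + |u 0|)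
    · intro n
      exact (humeas.comp (hT.min measurable_const)).aestronglyMeasurable
    · exact (hiT.abs.const_mul 2).add (integrable_const _)
    · intro n
      filter_upwards with ω
      rw [Real.norm_eq_abs, hmono.map_min]
      have h1 : min (u (T ω)) (u 0) ≤ min (u (T ω)) (u (n:ℝ)) := by
        apply min_le_min (le_refl _)
        exact hmono (by positivity)
      have h2 : min (u (T ω)) (u (n:ℝ)) ≤ u (T ω) := min_le_left _ _
      have h3 := abs_between h1 h2
      have h4 := abs_min_le (u (T ω)) (u 0)
      linarith
    · filter_upwards with ω
      apply Filter.Tendsto.congr' _ tendsto_const_nhds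
      rw [Filter.EventuallyEq, eventually_atTop]
      refine ⟨Nat.ceil |T ω|, fun n hn => ?_⟩
      have h1 : T ω ≤ (n:ℝ) := by
        have := le_trans (Nat.le_ceil |T ω|) (by exact_mod_cast hn : ((Nat.ceil |T ω| : ℕ):ℝ) ≤ n)
        have h2 := le_abs_self (T ω)
        linarith
      rw [min_eq_left h1]
  exact le_of_tendsto_of_tendsto' (hdct S' hS' hiS') (hdct S hS hiS) hclip

end MainCV
section MainCV2

open ENNReal Filter

variable {μ : Measure Ω}

/-- The main comparison: bigger puts and calls means smaller in concave order. -/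
lemma main_cv [IsProbabilityMeasure μ] {S S' : Ω → ℝ}
    (hS : Measurable S) (hS' : Measurable S')
    (hput : ∀ k : ℝ, ∫⁻ ω, ENNReal.ofReal (k - S ω) ∂μ ≤ ∫⁻ ω, ENNReal.ofReal (k - S' ω) ∂μ)
    (hcall : ∀ k : ℝ, ∫⁻ ω, ENNReal.ofReal (S ω - k) ∂μ ≤ ∫⁻ ω, ENNReal.ofReal (S' ω - k) ∂μ) :
    ConcaveOrderRV μ S' S := by
  intro u hu hiS' hiS
  have humeas : Measurable u := (concave_continuous hu).measurable
  have hput' : ∀ k : ℝ, ∫⁻ ω, ENNReal.ofReal (k - (-S ω)) ∂μ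
      ≤ ∫⁻ ω, ENNReal.ofReal (k - (-S' ω)) ∂μ := by
    intro k
    have h := hcall (-k)
    have e : ∀ x : ℝ, x - (-k) = k - (-x) := fun x => by ring
    simp_rw [e] at h
    exact h
  rcases concave_trichotomy hu with hmono | hanti | ⟨T, hT⟩
  · exact main_mono hu hmono hS hS' hiS hiS' hput
  · -- antitone: reflect
    have hu' : ConcaveOn ℝ Set.univ (fun t => u (-t)) := concave_comp_neg hu
    have hmono' : Monotone (fun t => u (-t)) := fun s t hst => hanti (by linarith)
    have hi1 : Integrable (fun ω => u (-(- S ω))) μ := by simpa using hiS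
    have hi2 : Integrable (fun ω => u (-(- S' ω))) μ := by simpa using hiS'
    have h := main_mono hu' hmono' hS.neg hS'.neg hi1 hi2 hput'
    simpa using h
  · -- interior max at T
    set u₁ : ℝ → ℝ := fun t => u (min t T) with hu₁
    set w : ℝ → ℝ := fun t => u (-(min t (-T))) with hw
    have husplit : ∀ t, u t = u₁ t + (w (-t) - u T) := by
      intro t
      rw [hu₁, hw]
      simp only [neg_neg]
      rcases le_total t T with h | h
      · rw [min_eq_left h, min_eq_right (by linarith : -T ≤ -t), neg_neg]
        ring
      · rw [min_eq_right h, min_eq_left (by linarith : -t ≤ -T), neg_neg]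
        ring
    have hT' : ∀ s, s ≤ T → u s ≤ u T := fun s _ => hT s
    have hu₁c : ConcaveOn ℝ Set.univ u₁ := concave_clip hu hT'
    have hu₁m : Monotone u₁ := by
      intro s t hst
      exact concave_mono_on hu hT' (min s T) (min t T)
        (min_le_min hst (le_refl _)) (min_le_right _ _)
    have hu₁B : ∀ t, u₁ t ≤ u T := fun t => hT _
    have hu' : ConcaveOn ℝ Set.univ (fun t => u (-t)) := concave_comp_neg hu
    have hT'' : ∀ s, s ≤ -T → u (-s) ≤ u (-(-T)) := by
      intro s _
      rw [neg_neg]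
      exact hT _
    have hwc : ConcaveOn ℝ Set.univ w := concave_clip hu' hT''
    have hwm : Monotone w := by
      intro s t hst
      exact concave_mono_on hu' hT'' (min s (-T)) (min t (-T))
        (min_le_min hst (le_refl _)) (min_le_right _ _)
    have hwB : ∀ t, w t ≤ u T := by
      intro t
      rw [hw]
      exact hT _
    -- integrability of the pieces
    have hInt₁ : ∀ (Z : Ω → ℝ), Measurable Z → Integrable (fun ω => u (Z ω)) μ →
        Integrable (fun ω => u₁ (Z ω)) μ := by
      intro Z hZ hiZ
      apply Integrable.mono' (hiZ.abs.add (integrable_const |u T|))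
      · exact (humeas.comp (hZ.min measurable_const)).aestronglyMeasurable
      · filter_upwards with ω
        rw [Real.norm_eq_abs]
        simp only [Pi.add_apply]
        rcases le_total (Z ω) T with h | h
        · rw [hu₁]
          simp only [min_eq_left h]
          linarith [abs_nonneg (u T), le_refl |u (Z ω)|]
        · rw [hu₁]
          simp only [min_eq_right h]
          linarith [abs_nonneg (u (Z ω))]
    have hIntw : ∀ (Z : Ω → ℝ), Measurable Z → Integrable (fun ω => u (Z ω)) μ →
        Integrable (fun ω => w (- Z ω)) μ := by
      intro Z hZ hiZ
      apply Integrable.mono' (hiZ.abs.add (integrable_const |u T|))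
      · have : Measurable w := humeas.comp ((measurable_id.min measurable_const).neg)
        exact (this.comp hZ.neg).aestronglyMeasurable
      · filter_upwards with ω
        rw [Real.norm_eq_abs, hw]
        simp only [Pi.add_apply]
        rcases le_total (Z ω) T with h | h
        · rw [min_eq_right (by linarith : -T ≤ -(Z ω)), neg_neg]
          linarith [abs_nonneg (u (Z ω))]
        · rw [min_eq_left (by linarith : -(Z ω) ≤ -T), neg_neg]
          linarith [abs_nonneg (u T), le_refl |u (Z ω)|]
    have h1 := core_mono_bdd hu₁c hu₁m hu₁B hS hS'
      (hInt₁ S hS hiS) (hInt₁ S' hS' hiS') hput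
    have h2 := core_mono_bdd hwc hwm hwB hS.neg hS'.neg
      (hIntw S hS hiS) (hIntw S' hS' hiS') hput'
    -- combine
    have hsum : ∀ (Z : Ω → ℝ), Measurable Z → Integrable (fun ω => u (Z ω)) μ →
        ∫ ω, u (Z ω) ∂μ = (∫ ω, u₁ (Z ω) ∂μ) + ((∫ ω, w (- Z ω) ∂μ) - u T) := by
      intro Z hZ hiZ
      have he : (fun ω => u (Z ω)) = fun ω => u₁ (Z ω) + (w (- Z ω) - u T) := by
        funext ω
        exact husplit (Z ω)
      have hi3 : Integrable (fun ω => w (- Z ω) - u T) μ :=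
        (hIntw Z hZ hiZ).sub (integrable_const _)
      have e2 : ∫ ω, (w (- Z ω) - u T) ∂μ = (∫ ω, w (- Z ω) ∂μ) - u T := by
        rw [integral_sub (hIntw Z hZ hiZ) (integrable_const _), integral_const]
        simp [measure_univ]
      rw [he, integral_add (hInt₁ Z hZ hiZ) hi3, e2]
    rw [hsum S hS hiS, hsum S' hS' hiS']
    simp only [Pi.neg_apply] at h2
    linarith
end MainCV2
section Coupling

open ENNReal

variable {μ : Measure Ω}

/-- Joint-cdf comparison yields concave order of the sums. -/
lemma coupling_cv [IsProbabilityMeasure μ] {X Y Xt Yt : Ω → ℝ}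
    (hX : Measurable X) (hY : Measurable Y) (hXt : Measurable Xt) (hYt : Measurable Yt)
    (margX : ∀ x : ℝ, μ {ω | X ω ≤ x} = μ {ω | Xt ω ≤ x})
    (margY : ∀ y : ℝ, μ {ω | Y ω ≤ y} = μ {ω | Yt ω ≤ y})
    (H : ∀ x y : ℝ, μ {ω | X ω ≤ x ∧ Y ω ≤ y} ≤ μ {ω | Xt ω ≤ x ∧ Yt ω ≤ y}) :
    ConcaveOrderRV μ (fun ω => Xt ω + Yt ω) (fun ω => X ω + Y ω) := by
  apply main_cv (hX.add hY) (hXt.add hYt)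
  · intro k
    simp only [Pi.add_apply]
    rw [put_eq hX hY k, put_eq hXt hYt k]
    exact lintegral_mono fun s => H s (k - s)
  · intro k
    have e1 : ∫⁻ ω, ENNReal.ofReal (X ω + Y ω - k) ∂μ
        = ∫⁻ s, μ {ω | (fun ω => -X ω) ω ≤ s ∧ (fun ω => -Y ω) ω ≤ (-k) - s} := by
      rw [← put_eq (X := fun ω => -X ω) (Y := fun ω => -Y ω) hX.neg hY.neg (-k)]
      apply lintegral_congr
      intro ω
      congr 1
      ring
    have e2 : ∫⁻ ω, ENNReal.ofReal (Xt ω + Yt ω - k) ∂μ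
        = ∫⁻ s, μ {ω | (fun ω => -Xt ω) ω ≤ s ∧ (fun ω => -Yt ω) ω ≤ (-k) - s} := by
      rw [← put_eq (X := fun ω => -Xt ω) (Y := fun ω => -Yt ω) hXt.neg hYt.neg (-k)]
      apply lintegral_congr
      intro ω
      congr 1
      ring
    simp only [Pi.add_apply]
    rw [e1, e2]
    apply lintegral_mono
    intro s
    have hs1 : {ω | (fun ω => -X ω) ω ≤ s ∧ (fun ω => -Y ω) ω ≤ (-k) - s}
        = {ω | (-s) ≤ X ω ∧ (k + s) ≤ Y ω} := by
      ext ω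
      simp only [Set.mem_setOf_eq]
      constructor
      · rintro ⟨h1, h2⟩; exact ⟨by linarith, by linarith⟩
      · rintro ⟨h1, h2⟩; exact ⟨by linarith, by linarith⟩
    have hs2 : {ω | (fun ω => -Xt ω) ω ≤ s ∧ (fun ω => -Yt ω) ω ≤ (-k) - s}
        = {ω | (-s) ≤ Xt ω ∧ (k + s) ≤ Yt ω} := by
      ext ω
      simp only [Set.mem_setOf_eq]
      constructor
      · rintro ⟨h1, h2⟩; exact ⟨by linarith, by linarith⟩
      · rintro ⟨h1, h2⟩; exact ⟨by linarith, by linarith⟩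
    show μ {ω | (fun ω => -X ω) ω ≤ s ∧ (fun ω => -Y ω) ω ≤ (-k) - s}
        ≤ μ {ω | (fun ω => -Xt ω) ω ≤ s ∧ (fun ω => -Yt ω) ω ≤ (-k) - s}
    rw [hs1, hs2]
    exact survival_le hX hY hXt hYt margX margY H (-s) (k+s)

end Coupling

/-- For a `≤_cv`-consistent risk measure, the comonotonic sum attains the best
case and the DL-coupled sum attains the worst case over `F^o_2(F,G)`. -/
theorem cvConsistent_bounds
    (μ : Measure Ω) [IsProbabilityMeasure μ] (hμ : Atomless μ)
    (F G : ℝ → ℝ) (hF : IsCDF F) (hG : IsCDF G) (hst : StOrder F G)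
    (ρ : (ℝ → ℝ) → ℝ) (hρ : CvConsistent μ ρ)
    (Xc Yc X' Y' : Ω → ℝ)
    (hc : OrderedCoupling μ F G Xc Yc) (hcom : Comonotonic μ Xc Yc)
    (hd : OrderedCoupling μ F G X' Y') (hDL : IsDLCoupled μ F G X' Y') :
    sInf {r : ℝ | ∃ X Y : Ω → ℝ, OrderedCoupling μ F G X Y ∧
        r = ρ (distFun μ (fun ω => X ω + Y ω))} =
      ρ (distFun μ (fun ω => Xc ω + Yc ω)) ∧
    (∀ X Y : Ω → ℝ, OrderedCoupling μ F G X Y →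
      ρ (distFun μ (fun ω => Xc ω + Yc ω)) ≤ ρ (distFun μ (fun ω => X ω + Y ω)) ∧
      ρ (distFun μ (fun ω => X ω + Y ω)) ≤ ρ (distFun μ (fun ω => X' ω + Y' ω))) ∧
    sSup {r : ℝ | ∃ X Y : Ω → ℝ, OrderedCoupling μ F G X Y ∧
        r = ρ (distFun μ (fun ω => X ω + Y ω))} =
      ρ (distFun μ (fun ω => X' ω + Y' ω)) := by
  obtain ⟨⟨hXcm, hXcd⟩, ⟨hYcm, hYcd⟩, hXYc⟩ := hc
  obtain ⟨⟨hX'm, hX'd⟩, ⟨hY'm, hY'd⟩, hXY'⟩ := hd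
  have hmeq : ∀ (Z W : Ω → ℝ), (∀ x, distFun μ Z x = F x) → (∀ x, distFun μ W x = F x) →
      ∀ x, μ {ω | Z ω ≤ x} = μ {ω | W ω ≤ x} := by
    intro Z W hZ hW x
    have h1 : (μ {ω | Z ω ≤ x}).toReal = (μ {ω | W ω ≤ x}).toReal := by
      have e1 : (μ {ω | Z ω ≤ x}).toReal = distFun μ Z x := rfl
      have e2 : (μ {ω | W ω ≤ x}).toReal = distFun μ W x := rfl
      rw [e1, e2, hZ, hW]
    exact (ENNReal.toReal_eq_toReal_iff' (measure_ne_top μ _) (measure_ne_top μ _)).mp h1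
  have hmeqG : ∀ (Z W : Ω → ℝ), (∀ x, distFun μ Z x = G x) → (∀ x, distFun μ W x = G x) →
      ∀ x, μ {ω | Z ω ≤ x} = μ {ω | W ω ≤ x} := by
    intro Z W hZ hW x
    have h1 : (μ {ω | Z ω ≤ x}).toReal = (μ {ω | W ω ≤ x}).toReal := by
      have e1 : (μ {ω | Z ω ≤ x}).toReal = distFun μ Z x := rfl
      have e2 : (μ {ω | W ω ≤ x}).toReal = distFun μ W x := rfl
      rw [e1, e2, hZ, hW]
    exact (ENNReal.toReal_eq_toReal_iff' (measure_ne_top μ _) (measure_ne_top μ _)).mp h1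
  have key : ∀ X Y : Ω → ℝ, OrderedCoupling μ F G X Y →
      ρ (distFun μ (fun ω => Xc ω + Yc ω)) ≤ ρ (distFun μ (fun ω => X ω + Y ω)) ∧
      ρ (distFun μ (fun ω => X ω + Y ω)) ≤ ρ (distFun μ (fun ω => X' ω + Y' ω)) := by
    intro X Y hXY
    obtain ⟨⟨hXm, hXd⟩, ⟨hYm, hYd⟩, hord⟩ := hXY
    have margXc : ∀ x, μ {ω | X ω ≤ x} = μ {ω | Xc ω ≤ x} := hmeq X Xc hXd hXcd
    have margYc : ∀ y, μ {ω | Y ω ≤ y} = μ {ω | Yc ω ≤ y} := hmeqG Y Yc hYd hYcd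
    have margX' : ∀ x, μ {ω | X' ω ≤ x} = μ {ω | X ω ≤ x} := hmeq X' X hX'd hXd
    have margY' : ∀ y, μ {ω | Y' ω ≤ y} = μ {ω | Y ω ≤ y} := hmeqG Y' Y hY'd hYd
    have Hc : ∀ x y, μ {ω | X ω ≤ x ∧ Y ω ≤ y} ≤ μ {ω | Xc ω ≤ x ∧ Yc ω ≤ y} := by
      intro x y
      rw [comonotone_H hcom x y]
      apply le_min
      · calc μ {ω | X ω ≤ x ∧ Y ω ≤ y} ≤ μ {ω | X ω ≤ x} :=
            measure_mono (fun ω h => h.1)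
          _ = μ {ω | Xc ω ≤ x} := margXc x
      · calc μ {ω | X ω ≤ x ∧ Y ω ≤ y} ≤ μ {ω | Y ω ≤ y} :=
            measure_mono (fun ω h => h.2)
          _ = μ {ω | Yc ω ≤ y} := margYc y
    have ho1 : ConcaveOrderRV μ (fun ω => Xc ω + Yc ω) (fun ω => X ω + Y ω) :=
      coupling_cv hXm hYm hXcm hYcm margXc margYc Hc
    have r1 : ρ (distFun μ (fun ω => Xc ω + Yc ω)) ≤ ρ (distFun μ (fun ω => X ω + Y ω)) :=
      hρ _ _ (hXcm.add hYcm) (hXm.add hYm) ho1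
    have HDL : ∀ x y, μ {ω | X' ω ≤ x ∧ Y' ω ≤ y} ≤ μ {ω | X ω ≤ x ∧ Y ω ≤ y} := by
      intro x y
      apply (ENNReal.toReal_le_toReal (measure_ne_top μ _) (measure_ne_top μ _)).mp
      rw [hDL x y]
      exact ordered_H_ge_DL ⟨hXm, hXd⟩ ⟨hYm, hYd⟩ hord x y
    have ho2 : ConcaveOrderRV μ (fun ω => X ω + Y ω) (fun ω => X' ω + Y' ω) :=
      coupling_cv hX'm hY'm hXm hYm margX' margY' HDL
    have r2 : ρ (distFun μ (fun ω => X ω + Y ω)) ≤ ρ (distFun μ (fun ω => X' ω + Y' ω)) :=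
      hρ _ _ (hXm.add hYm) (hX'm.add hY'm) ho2
    exact ⟨r1, r2⟩
  have hcmem : ρ (distFun μ (fun ω => Xc ω + Yc ω)) ∈ {r : ℝ | ∃ X Y : Ω → ℝ,
      OrderedCoupling μ F G X Y ∧ r = ρ (distFun μ (fun ω => X ω + Y ω))} :=
    ⟨Xc, Yc, ⟨⟨hXcm, hXcd⟩, ⟨hYcm, hYcd⟩, hXYc⟩, rfl⟩
  have hdmem : ρ (distFun μ (fun ω => X' ω + Y' ω)) ∈ {r : ℝ | ∃ X Y : Ω → ℝ,
      OrderedCoupling μ F G X Y ∧ r = ρ (distFun μ (fun ω => X ω + Y ω))} :=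
    ⟨X', Y', ⟨⟨hX'm, hX'd⟩, ⟨hY'm, hY'd⟩, hXY'⟩, rfl⟩
  refine ⟨?_, key, ?_⟩
  · apply le_antisymm
    · apply csInf_le
      · refine ⟨ρ (distFun μ (fun ω => Xc ω + Yc ω)), ?_⟩
        rintro r ⟨X, Y, hXY, rfl⟩
        exact (key X Y hXY).1
      · exact hcmem
    · apply le_csInf ⟨_, hcmem⟩
      rintro r ⟨X, Y, hXY, rfl⟩
      exact (key X Y hXY).1
  · apply le_antisymm
    · apply csSup_le ⟨_, hcmem⟩
      rintro r ⟨X, Y, hXY, rfl⟩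
      exact (key X Y hXY).2
    · apply le_csSup
      · refine ⟨ρ (distFun μ (fun ω => X' ω + Y' ω)), ?_⟩
        rintro r ⟨X, Y, hXY, rfl⟩
        exact (key X Y hXY).2
      · exact hdmem
end
end

section
/- Let F and G be cumulative distribution functions on ℝ with F ≤_st G, and let ρ be a law-invariant risk measure that is ≤_cx-consistent. Suppose (X^c,Y^c), (X',Y') ∈ F^o_2(F,G) with (X^c,Y^c) comonotonic and (X',Y') DL-coupled. Then for every (X,Y) ∈ F^o_2(F,G): inf{ρ(X+Y) : (X,Y) ∈ F^o_2(F,G)} = ρ(X'+Y') ≤ ρ(X+Y) ≤ ρ(X^c+Y^c) = sup{ρ(X+Y) : (X,Y) ∈ F^o_2(F,G)}. -/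
open MeasureTheory Set Filter
open scoped ENNReal

noncomputable section

variable {Ω : Type*} [MeasurableSpace Ω]

/-- Convex order for random variables on the same space:
`E[u(X)] ≤ E[u(Y)]` for every convex `u` for which both expectations exist. -/
def ConvexOrderRV (μ : Measure Ω) (X Y : Ω → ℝ) : Prop :=
  ∀ u : ℝ → ℝ, ConvexOn ℝ Set.univ u →
    Integrable (fun ω => u (X ω)) μ → Integrable (fun ω => u (Y ω)) μ →
    ∫ ω, u (X ω) ∂μ ≤ ∫ ω, u (Y ω) ∂μ

/-- A law-invariant risk measure is `≤_cx`-consistent: it respects convex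
order of random variables. -/
def CxConsistent (μ : Measure Ω) (ρ : (ℝ → ℝ) → ℝ) : Prop :=
  ∀ X Y : Ω → ℝ, Measurable X → Measurable Y →
    ConvexOrderRV μ X Y → ρ (distFun μ X) ≤ ρ (distFun μ Y)


namespace CxOrderAux

/-- Right derivative (as inf of forward difference quotients) of a function. -/
noncomputable def rd (u : ℝ → ℝ) (p : ℝ) : ℝ :=
  sInf ((fun y => (u y - u p) / (y - p)) '' Set.Ioi p)

variable {u : ℝ → ℝ}

lemma slope_mono (hu : ConvexOn ℝ Set.univ u) {x y z : ℝ} (hxy : x < y) (hyz : y < z) :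
    (u y - u x) / (y - x) ≤ (u z - u y) / (z - y) :=
  hu.slope_mono_adjacent (mem_univ x) (mem_univ z) hxy hyz

lemma rd_set_nonempty (p : ℝ) :
    ((fun y => (u y - u p) / (y - p)) '' Set.Ioi p).Nonempty :=
  ⟨_, ⟨p + 1, by simp, rfl⟩⟩

lemma rd_set_bddBelow (hu : ConvexOn ℝ Set.univ u) (p : ℝ) :
    BddBelow ((fun y => (u y - u p) / (y - p)) '' Set.Ioi p) := by
  refine ⟨(u p - u (p - 1)) / (p - (p - 1)), ?_⟩
  rintro r ⟨y, hy, rfl⟩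
  exact slope_mono hu (by linarith) hy

lemma rd_le_slope (hu : ConvexOn ℝ Set.univ u) {p y : ℝ} (hy : p < y) :
    rd u p ≤ (u y - u p) / (y - p) :=
  csInf_le (rd_set_bddBelow hu p) ⟨y, hy, rfl⟩

lemma slope_le_rd (hu : ConvexOn ℝ Set.univ u) {w p : ℝ} (hw : w < p) :
    (u p - u w) / (p - w) ≤ rd u p := by
  refine le_csInf (rd_set_nonempty p) ?_
  rintro r ⟨y, hy, rfl⟩
  exact slope_mono hu hw hy

/-- Tangent line inequality for the right derivative. -/
lemma tangent (hu : ConvexOn ℝ Set.univ u) (p z : ℝ) :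
    u p + rd u p * (z - p) ≤ u z := by
  rcases lt_trichotomy z p with h | h | h
  · have h1 := slope_le_rd hu h
    have hpz : (0:ℝ) < p - z := by linarith
    have := (div_le_iff₀ hpz).1 h1
    nlinarith
  · simp [h]
  · have h1 := rd_le_slope hu h
    have hzp : (0:ℝ) < z - p := by linarith
    have := (le_div_iff₀ hzp).1 h1
    nlinarith

lemma rd_mono (hu : ConvexOn ℝ Set.univ u) : Monotone (rd u) := by
  intro p q hpq
  rcases eq_or_lt_of_le hpq with rfl | h
  · exact le_rfl
  · exact le_trans (rd_le_slope hu h) (slope_le_rd hu h)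

lemma rd_nonneg (hu : ConvexOn ℝ Set.univ u) (hm : Monotone u) (p : ℝ) :
    0 ≤ rd u p := by
  refine le_csInf (rd_set_nonempty p) ?_
  rintro r ⟨y, hy, rfl⟩
  have h1 : u p ≤ u y := hm (le_of_lt hy)
  have h2 : (0:ℝ) < y - p := by simpa [sub_pos] using hy
  exact div_nonneg (by linarith) (le_of_lt h2)


/-! ### Grid approximation of a monotone convex function by hockey sticks -/

noncomputable def del (N : ℕ) : ℝ := 1 / ((N : ℝ) + 1)

noncomputable def gridPt (a₀ : ℝ) (N k : ℕ) : ℝ := a₀ + (k : ℝ) * del N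

noncomputable def dcoef (g : ℝ → ℝ) (a₀ : ℝ) (N k : ℕ) : ℝ :=
  rd g (gridPt a₀ N k) - rd g (gridPt a₀ N k - del N)

noncomputable def SS (g : ℝ → ℝ) (a₀ : ℝ) (N j : ℕ) (z : ℝ) : ℝ :=
  ∑ k ∈ Finset.range j, dcoef g a₀ N k * max (z - gridPt a₀ N k) 0

noncomputable def approx (g : ℝ → ℝ) (a₀ : ℝ) (N : ℕ) (z : ℝ) : ℝ :=
  SS g a₀ N ((N + 1) ^ 2) z

lemma del_pos (N : ℕ) : 0 < del N := by
  have : (0:ℝ) < (N : ℝ) + 1 := by positivity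
  exact div_pos one_pos this

lemma gridPt_mono (a₀ : ℝ) (N : ℕ) {k l : ℕ} (h : k ≤ l) :
    gridPt a₀ N k ≤ gridPt a₀ N l := by
  unfold gridPt
  have := (del_pos N).le
  have : (k:ℝ) ≤ (l:ℝ) := by exact_mod_cast h
  nlinarith [del_pos N]

lemma gridPt_succ (a₀ : ℝ) (N k : ℕ) :
    gridPt a₀ N (k + 1) - del N = gridPt a₀ N k := by
  unfold gridPt; push_cast; ring

lemma a₀_le_gridPt (a₀ : ℝ) (N k : ℕ) : a₀ ≤ gridPt a₀ N k := by
  unfold gridPt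
  have h1 : (0:ℝ) ≤ (k:ℝ) := by positivity
  nlinarith [del_pos N]

section GridLemmas

variable {g : ℝ → ℝ} {a₀ : ℝ}
variable (hg : ConvexOn ℝ Set.univ g) (hm : Monotone g) (hflat : ∀ z ≤ a₀, g z = 0)

include hg hm hflat

lemma g_nonneg : ∀ z, 0 ≤ g z := by
  intro z
  rcases le_total z a₀ with h | h
  · rw [hflat z h]
  · have := hm h
    rw [hflat a₀ le_rfl] at this
    linarith

lemma rd_flat {p : ℝ} (hp : p < a₀) : rd g p = 0 := by
  refine le_antisymm ?_ (rd_nonneg hg hm p)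
  have hy : p < (p + a₀) / 2 := by linarith
  have hy2 : (p + a₀) / 2 ≤ a₀ := by linarith
  have := rd_le_slope hg hy
  rw [hflat _ hy2, hflat _ hp.le] at this
  simpa using this

lemma dcoef_nonneg (N k : ℕ) : 0 ≤ dcoef g a₀ N k := by
  have : gridPt a₀ N k - del N ≤ gridPt a₀ N k := by linarith [del_pos N]
  have := rd_mono hg this
  unfold dcoef; linarith

lemma rdprev_nonneg (N k : ℕ) : 0 ≤ rd g (gridPt a₀ N k - del N) := by
  rcases Nat.eq_zero_or_pos k with rfl | hk
  · have : gridPt a₀ N 0 - del N < a₀ := by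
      have : gridPt a₀ N 0 = a₀ := by unfold gridPt; simp
      linarith [del_pos N, this]
    rw [rd_flat hg hm hflat this]
  · exact rd_nonneg hg hm _

lemma rdprev_zero (N : ℕ) : rd g (gridPt a₀ N 0 - del N) = 0 := by
  have h0 : gridPt a₀ N 0 = a₀ := by unfold gridPt; simp
  exact rd_flat hg hm hflat (by linarith [del_pos N])

lemma SS_le (N : ℕ) : ∀ (j : ℕ) (z : ℝ),
    SS g a₀ N j z ≤ g (min z (gridPt a₀ N j)) +
      rd g (gridPt a₀ N j - del N) * max (z - gridPt a₀ N j) 0 := by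
  intro j
  induction j with
  | zero =>
    intro z
    rw [rdprev_zero hg hm hflat]
    simp only [SS, Finset.range_zero, Finset.sum_empty, zero_mul, add_zero]
    exact g_nonneg hg hm hflat _
  | succ j ih =>
    intro z
    have hsum : SS g a₀ N (j+1) z = SS g a₀ N j z +
        dcoef g a₀ N j * max (z - gridPt a₀ N j) 0 := by
      unfold SS; rw [Finset.sum_range_succ]
    have step1 : SS g a₀ N (j+1) z ≤ g (min z (gridPt a₀ N j)) +
        rd g (gridPt a₀ N j) * max (z - gridPt a₀ N j) 0 := by
      rw [hsum]
      have := ih z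
      unfold dcoef at *
      nlinarith [le_max_right (z - gridPt a₀ N j) 0]
    refine step1.trans ?_
    rw [gridPt_succ]
    have htj : gridPt a₀ N j ≤ gridPt a₀ N (j+1) := gridPt_mono a₀ N (Nat.le_succ j)
    rcases le_total z (gridPt a₀ N j) with hz | hz
    · rw [min_eq_left hz, min_eq_left (hz.trans htj)]
      rw [max_eq_right (by linarith), max_eq_right (by linarith)]
    · rw [min_eq_right hz, max_eq_left (by linarith)]
      rcases le_total z (gridPt a₀ N (j+1)) with hz2 | hz2
      · rw [min_eq_left hz2, max_eq_right (by linarith)]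
        have := tangent hg (gridPt a₀ N j) z
        linarith
      · rw [min_eq_right hz2, max_eq_left (by linarith)]
        have htan := tangent hg (gridPt a₀ N j) (gridPt a₀ N (j+1))
        have hdel : gridPt a₀ N (j+1) - gridPt a₀ N j = del N := by
          rw [← gridPt_succ a₀ N j]; ring
        nlinarith

lemma SS_le_g (N j : ℕ) (z : ℝ) : SS g a₀ N j z ≤ g z := by
  refine (SS_le hg hm hflat N j z).trans ?_
  rcases le_total z (gridPt a₀ N j) with hz | hz
  · rw [min_eq_left hz, max_eq_right (by linarith)]
    simp
  · rw [min_eq_right hz, max_eq_left (by linarith)]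
    have h1 : rd g (gridPt a₀ N j - del N) ≤ rd g (gridPt a₀ N j) :=
      rd_mono hg (by linarith [del_pos N])
    have htan := tangent hg (gridPt a₀ N j) z
    nlinarith

lemma le_SS (N : ℕ) : ∀ (j : ℕ) (z : ℝ), gridPt a₀ N j ≤ z →
    g (gridPt a₀ N j - del N) + rd g (gridPt a₀ N j - del N) * (z - gridPt a₀ N j)
      ≤ SS g a₀ N j z := by
  intro j
  induction j with
  | zero =>
    intro z hz
    have h0 : gridPt a₀ N 0 = a₀ := by unfold gridPt; simp
    have hfl : g (gridPt a₀ N 0 - del N) = 0 := hflat _ (by rw [h0]; linarith [del_pos N])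
    rw [rdprev_zero hg hm hflat, hfl]
    simp [SS]
  | succ j ih =>
    intro z hz
    have htj : gridPt a₀ N j ≤ gridPt a₀ N (j+1) := gridPt_mono a₀ N (Nat.le_succ j)
    have hzj : gridPt a₀ N j ≤ z := htj.trans hz
    have hsum : SS g a₀ N (j+1) z = SS g a₀ N j z +
        dcoef g a₀ N j * max (z - gridPt a₀ N j) 0 := by
      unfold SS; rw [Finset.sum_range_succ]
    have ihz := ih z hzj
    rw [hsum, gridPt_succ]
    rw [max_eq_left (by linarith)]
    have hdel : gridPt a₀ N (j+1) - gridPt a₀ N j = del N := by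
      rw [← gridPt_succ a₀ N j]; ring
    have htan := tangent hg (gridPt a₀ N j) (gridPt a₀ N j - del N)
    have hsplit : rd g (gridPt a₀ N j) * (z - gridPt a₀ N j)
        = rd g (gridPt a₀ N j) * (z - gridPt a₀ N (j+1)) + rd g (gridPt a₀ N j) * del N := by
      rw [← mul_add]; congr 1; linarith
    have hsplit2 : dcoef g a₀ N j * (z - gridPt a₀ N j)
        = rd g (gridPt a₀ N j) * (z - gridPt a₀ N j)
          - rd g (gridPt a₀ N j - del N) * (z - gridPt a₀ N j) := by
      unfold dcoef; ring
    linarith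

lemma tendsto_approx (z : ℝ) :
    Tendsto (fun N => approx g a₀ N z) atTop (nhds (g z)) := by
  rcases le_total z a₀ with hz | hz
  · have : ∀ N, approx g a₀ N z = g z := by
      intro N
      rw [hflat z hz]
      unfold approx SS
      refine Finset.sum_eq_zero fun k _ => ?_
      rw [max_eq_right (by linarith [a₀_le_gridPt a₀ N k]), mul_zero]
    simpa [funext this] using tendsto_const_nhds
  · -- lower and upper bounds squeeze
    have hup : ∀ N, approx g a₀ N z ≤ g z := fun N => SS_le_g hg hm hflat N _ z
    have hlow : ∀ᶠ N in atTop, g z - 2 * rd g z * del N ≤ approx g a₀ N z := by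
      filter_upwards [eventually_ge_atTop (Nat.ceil (z - a₀))] with N hN
      set j := Nat.floor ((z - a₀) * ((N:ℝ) + 1)) with hjdef
      have hNpos : (0:ℝ) < (N:ℝ) + 1 := by positivity
      have hjle : (j:ℝ) ≤ (z - a₀) * ((N:ℝ)+1) :=
        Nat.floor_le (mul_nonneg (by linarith) hNpos.le)
      have hjlt : (z - a₀) * ((N:ℝ)+1) < (j:ℝ) + 1 := Nat.lt_floor_add_one _
      have htjz : gridPt a₀ N j ≤ z := by
        unfold gridPt del
        rw [mul_one_div]
        have h2 : (j:ℝ) / ((N:ℝ)+1) ≤ z - a₀ := (div_le_iff₀ hNpos).2 hjle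
        linarith
      have hztj : z - gridPt a₀ N j < del N := by
        unfold gridPt del
        rw [mul_one_div]
        have h3 : z - a₀ < ((j:ℝ)+1) / ((N:ℝ)+1) := (lt_div_iff₀ hNpos).2 (by linarith)
        have h4 : ((j:ℝ)+1)/((N:ℝ)+1) - (j:ℝ)/((N:ℝ)+1) = 1/((N:ℝ)+1) := by
          field_simp
          ring
        linarith
      have hjK : j ≤ (N + 1) ^ 2 := by
        have h1 := Nat.le_ceil (z - a₀)
        have h2 : ((Nat.ceil (z - a₀) : ℕ):ℝ) ≤ (N:ℝ) := by exact_mod_cast hN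
        have h5 : (j:ℝ) ≤ (((N+1)^2 : ℕ) : ℝ) := by push_cast; nlinarith
        exact_mod_cast h5
      have hmonoSS : SS g a₀ N j z ≤ approx g a₀ N z := by
        unfold approx SS
        refine Finset.sum_le_sum_of_subset_of_nonneg
          (Finset.range_subset_range.2 hjK) fun k _ _ => ?_
        exact mul_nonneg (dcoef_nonneg hg hm hflat N k) (le_max_right _ _)
      have hLB := le_SS hg hm hflat N j z htjz
      have hrd0 : 0 ≤ rd g (gridPt a₀ N j - del N) := rdprev_nonneg hg hm hflat N j
      have hrdz : 0 ≤ rd g z := rd_nonneg hg hm z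
      have htan := tangent hg z (gridPt a₀ N j - del N)
      have hb : -(2 * del N) ≤ gridPt a₀ N j - del N - z := by
        linarith [del_pos N]
      have h6 : g z - 2 * rd g z * del N ≤ g (gridPt a₀ N j - del N) := by nlinarith
      nlinarith [mul_nonneg hrd0 (sub_nonneg.2 htjz)]
    have hd : Tendsto (fun N : ℕ => del N) atTop (nhds 0) := by
      unfold del
      exact tendsto_one_div_add_atTop_nhds_zero_nat
    have hl : Tendsto (fun N : ℕ => g z - 2 * rd g z * del N) atTop (nhds (g z)) := by
      have := tendsto_const_nhds (x := g z) (f := atTop (α := ℕ)) |>.sub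
        (hd.const_mul (2 * rd g z))
      simpa [mul_comm] using this
    exact tendsto_of_tendsto_of_tendsto_of_le_of_le' hl tendsto_const_nhds hlow
      (Eventually.of_forall hup)

end GridLemmas


/-! ### From stop-loss comparisons to convex order -/

lemma ofReal_max_zero (x : ℝ) : ENNReal.ofReal (max x 0) = ENNReal.ofReal x := by
  rcases le_total x 0 with h | h
  · rw [max_eq_right h, ENNReal.ofReal_zero, ENNReal.ofReal_eq_zero.2 h]
  · rw [max_eq_left h]

section Core

variable {Ω : Type*} [MeasurableSpace Ω] {μ : Measure Ω} [IsProbabilityMeasure μ]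

lemma measurable_approx_comp {g : ℝ → ℝ} {a₀ : ℝ} {A : Ω → ℝ} (hA : Measurable A) (N : ℕ) :
    Measurable fun ω => ENNReal.ofReal (approx g a₀ N (A ω)) := by
  apply Measurable.ennreal_ofReal
  unfold approx SS
  apply Finset.measurable_sum
  intro k _
  exact ((hA.sub_const _).max measurable_const).const_mul _

lemma lintegral_approx {g : ℝ → ℝ} {a₀ : ℝ}
    (hg : ConvexOn ℝ Set.univ g) (hm : Monotone g) (hflat : ∀ z ≤ a₀, g z = 0)
    {A : Ω → ℝ} (hA : Measurable A) (N : ℕ) :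
    ∫⁻ ω, ENNReal.ofReal (approx g a₀ N (A ω)) ∂μ
      = ∑ k ∈ Finset.range ((N+1)^2), ENNReal.ofReal (dcoef g a₀ N k) *
          ∫⁻ ω, ENNReal.ofReal (A ω - gridPt a₀ N k) ∂μ := by
  have hpt : ∀ ω, ENNReal.ofReal (approx g a₀ N (A ω))
      = ∑ k ∈ Finset.range ((N+1)^2), ENNReal.ofReal (dcoef g a₀ N k) *
          ENNReal.ofReal (A ω - gridPt a₀ N k) := by
    intro ω
    unfold approx SS
    rw [ENNReal.ofReal_sum_of_nonneg fun k _ =>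
      mul_nonneg (dcoef_nonneg hg hm hflat N k) (le_max_right _ _)]
    refine Finset.sum_congr rfl fun k _ => ?_
    rw [ENNReal.ofReal_mul (dcoef_nonneg hg hm hflat N k), ofReal_max_zero]
  calc ∫⁻ ω, ENNReal.ofReal (approx g a₀ N (A ω)) ∂μ
      = ∫⁻ ω, ∑ k ∈ Finset.range ((N+1)^2), ENNReal.ofReal (dcoef g a₀ N k) *
          ENNReal.ofReal (A ω - gridPt a₀ N k) ∂μ := by
        exact lintegral_congr hpt
    _ = ∑ k ∈ Finset.range ((N+1)^2), ∫⁻ ω, ENNReal.ofReal (dcoef g a₀ N k) *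
          ENNReal.ofReal (A ω - gridPt a₀ N k) ∂μ := by
        refine lintegral_finset_sum _ fun k _ => ?_
        exact ((hA.sub_const _).ennreal_ofReal).const_mul _
    _ = ∑ k ∈ Finset.range ((N+1)^2), ENNReal.ofReal (dcoef g a₀ N k) *
          ∫⁻ ω, ENNReal.ofReal (A ω - gridPt a₀ N k) ∂μ := by
        refine Finset.sum_congr rfl fun k _ => ?_
        exact lintegral_const_mul _ ((hA.sub_const _).ennreal_ofReal)

lemma core_mono {g : ℝ → ℝ} {a₀ : ℝ}
    (hg : ConvexOn ℝ Set.univ g) (hm : Monotone g) (hflat : ∀ z ≤ a₀, g z = 0)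
    {A B : Ω → ℝ} (hA : Measurable A) (hB : Measurable B)
    (hSL : ∀ t : ℝ, ∫⁻ ω, ENNReal.ofReal (A ω - t) ∂μ ≤ ∫⁻ ω, ENNReal.ofReal (B ω - t) ∂μ) :
    ∫⁻ ω, ENNReal.ofReal (g (A ω)) ∂μ ≤ ∫⁻ ω, ENNReal.ofReal (g (B ω)) ∂μ := by
  have hcomp : ∀ N : ℕ, ∫⁻ ω, ENNReal.ofReal (approx g a₀ N (A ω)) ∂μ
      ≤ ∫⁻ ω, ENNReal.ofReal (approx g a₀ N (B ω)) ∂μ := by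
    intro N
    rw [lintegral_approx hg hm hflat hA N, lintegral_approx hg hm hflat hB N]
    exact Finset.sum_le_sum fun k _ => mul_le_mul_right (hSL _) _
  have hBle : ∀ N : ℕ, ∫⁻ ω, ENNReal.ofReal (approx g a₀ N (B ω)) ∂μ
      ≤ ∫⁻ ω, ENNReal.ofReal (g (B ω)) ∂μ := by
    intro N
    exact lintegral_mono fun ω => ENNReal.ofReal_le_ofReal (SS_le_g hg hm hflat N _ _)
  have h1 : ∀ ω : Ω, Filter.Tendsto (fun N => ENNReal.ofReal (approx g a₀ N (A ω)))
      atTop (nhds (ENNReal.ofReal (g (A ω)))) := fun ω =>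
    (ENNReal.continuous_ofReal.tendsto _).comp (tendsto_approx hg hm hflat _)
  calc ∫⁻ ω, ENNReal.ofReal (g (A ω)) ∂μ
      = ∫⁻ ω, Filter.liminf (fun N => ENNReal.ofReal (approx g a₀ N (A ω))) atTop ∂μ := by
        refine lintegral_congr fun ω => ?_
        exact ((h1 ω).liminf_eq).symm
    _ ≤ Filter.liminf (fun N => ∫⁻ ω, ENNReal.ofReal (approx g a₀ N (A ω)) ∂μ) atTop :=
        lintegral_liminf_le fun N => measurable_approx_comp hA N
    _ ≤ Filter.liminf (fun _ : ℕ => ∫⁻ ω, ENNReal.ofReal (g (B ω)) ∂μ) atTop := by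
        refine Filter.liminf_le_liminf (Filter.Eventually.of_forall fun N => ?_)
        exact (hcomp N).trans (hBle N)
    _ = ∫⁻ ω, ENNReal.ofReal (g (B ω)) ∂μ := Filter.liminf_const _

/-- Monotone nondecreasing convex case. -/
lemma integral_mono_of_monotone_convex {A B : Ω → ℝ} (hA : Measurable A) (hB : Measurable B)
    (hSL : ∀ t : ℝ, ∫⁻ ω, ENNReal.ofReal (A ω - t) ∂μ ≤ ∫⁻ ω, ENNReal.ofReal (B ω - t) ∂μ)
    {u : ℝ → ℝ} (hu : ConvexOn ℝ Set.univ u) (hum : Monotone u)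
    (hIA : Integrable (fun ω => u (A ω)) μ) (hIB : Integrable (fun ω => u (B ω)) μ) :
    ∫ ω, u (A ω) ∂μ ≤ ∫ ω, u (B ω) ∂μ := by
  -- clipped functions
  set w : ℕ → ℝ → ℝ := fun m z => max (u z) (u (-(m:ℝ))) with hw
  have hstep : ∀ m : ℕ, ∫ ω, w m (A ω) ∂μ ≤ ∫ ω, w m (B ω) ∂μ := by
    intro m
    set c := u (-(m:ℝ)) with hc
    set g : ℝ → ℝ := fun z => max (u z) c - c with hgdef
    have hgconv : ConvexOn ℝ Set.univ g := by
      have h1 : ConvexOn ℝ Set.univ (fun z => max (u z) c) :=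
        hu.sup (convexOn_const c convex_univ)
      have : g = fun z => (fun z => max (u z) c) z + (-c) := by
        funext z; simp [hgdef, sub_eq_add_neg]
      rw [this]
      exact h1.add_const _
    have hgm : Monotone g := fun x y hxy => by
      have : max (u x) c ≤ max (u y) c := max_le_max (hum hxy) le_rfl
      simp only [hgdef]; linarith
    have hgflat : ∀ z ≤ -(m:ℝ), g z = 0 := by
      intro z hz
      have : u z ≤ c := hum hz
      simp [hgdef, max_eq_right this]
    have hg0 := g_nonneg hgconv hgm hgflat
    have hIgA : Integrable (fun ω => g (A ω)) μ :=
      (hIA.sup (integrable_const c)).sub (integrable_const c)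
    have hIgB : Integrable (fun ω => g (B ω)) μ :=
      (hIB.sup (integrable_const c)).sub (integrable_const c)
    have hcore := core_mono hgconv hgm hgflat hA hB hSL
    have e1 : ENNReal.ofReal (∫ ω, g (A ω) ∂μ) = ∫⁻ ω, ENNReal.ofReal (g (A ω)) ∂μ :=
      ofReal_integral_eq_lintegral_ofReal hIgA (Filter.Eventually.of_forall fun ω => hg0 _)
    have e2 : ENNReal.ofReal (∫ ω, g (B ω) ∂μ) = ∫⁻ ω, ENNReal.ofReal (g (B ω)) ∂μ :=
      ofReal_integral_eq_lintegral_ofReal hIgB (Filter.Eventually.of_forall fun ω => hg0 _)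
    have hint : ∫ ω, g (A ω) ∂μ ≤ ∫ ω, g (B ω) ∂μ := by
      rw [← ENNReal.ofReal_le_ofReal_iff (integral_nonneg fun ω => hg0 _), e1, e2]
      exact hcore
    have hWA : Integrable (fun ω => w m (A ω)) μ := by
      have := hIA.sup (integrable_const c)
      exact this
    have hWB : Integrable (fun ω => w m (B ω)) μ := by
      have := hIB.sup (integrable_const c)
      exact this
    have hAeq : ∫ ω, w m (A ω) ∂μ = ∫ ω, g (A ω) ∂μ + c := by
      have h7 : (fun ω => g (A ω)) = fun ω => w m (A ω) - c := by
        funext ω; simp [hgdef, hw, hc]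
      rw [h7, integral_sub hWA (integrable_const c)]
      simp [measure_univ]
    have hBeq : ∫ ω, w m (B ω) ∂μ = ∫ ω, g (B ω) ∂μ + c := by
      have h7 : (fun ω => g (B ω)) = fun ω => w m (B ω) - c := by
        funext ω; simp [hgdef, hw, hc]
      rw [h7, integral_sub hWB (integrable_const c)]
      simp [measure_univ]
    rw [hAeq, hBeq]
    linarith
  -- dominated convergence as m → ∞
  have hdom : ∀ (C : Ω → ℝ), Measurable C → Integrable (fun ω => u (C ω)) μ →
      Filter.Tendsto (fun m : ℕ => ∫ ω, w m (C ω) ∂μ) atTop (nhds (∫ ω, u (C ω) ∂μ)) := by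
    intro C hC hIC
    refine tendsto_integral_of_dominated_convergence
      (fun ω => |u (C ω)| + |u 0|) ?_ ?_ ?_ ?_
    · intro m
      have := hIC.aestronglyMeasurable.sup (aestronglyMeasurable_const (b := u (-(m:ℝ))))
      exact this
    · exact hIC.abs.add (integrable_const _)
    · intro m
      refine Filter.Eventually.of_forall fun ω => ?_
      have h1 : u (-(m:ℝ)) ≤ u 0 := hum (by simp)
      have h2 : w m (C ω) ≤ |u (C ω)| + |u 0| := by
        have : w m (C ω) ≤ max (u (C ω)) (u 0) := max_le_max le_rfl h1
        calc w m (C ω) ≤ max (u (C ω)) (u 0) := this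
          _ ≤ max |u (C ω)| |u 0| := max_le_max (le_abs_self _) (le_abs_self _)
          _ ≤ |u (C ω)| + |u 0| := max_le (by linarith [abs_nonneg (u 0)])
              (by linarith [abs_nonneg (u (C ω))])
      have h3 : -(|u (C ω)| + |u 0|) ≤ w m (C ω) := by
        have : u (C ω) ≤ w m (C ω) := le_max_left _ _
        have h4 : -|u (C ω)| ≤ u (C ω) := neg_abs_le _
        have h5 : (0:ℝ) ≤ |u 0| := abs_nonneg _
        linarith
      rw [Real.norm_eq_abs, abs_le]
      exact ⟨h3, h2⟩
    · refine Filter.Eventually.of_forall fun ω => ?_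
      refine tendsto_atTop_of_eventually_const (i₀ := Nat.ceil (-(C ω))) ?_
      intro m hm'
      have h1 : -(C ω) ≤ (m:ℝ) := by
        calc -(C ω) ≤ (Nat.ceil (-(C ω)) : ℝ) := Nat.le_ceil _
          _ ≤ (m:ℝ) := by exact_mod_cast hm'
      have : u (-(m:ℝ)) ≤ u (C ω) := hum (by linarith)
      simp [hw, max_eq_left this]
  exact le_of_tendsto_of_tendsto' (hdom A hA hIA) (hdom B hB hIB) hstep

end Core


/-! ### General convex functions -/

lemma convexOn_comp_neg {u : ℝ → ℝ} (hu : ConvexOn ℝ Set.univ u) :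
    ConvexOn ℝ Set.univ fun z => u (-z) := by
  refine ⟨convex_univ, fun x _ y _ a b ha hb hab => ?_⟩
  have h := hu.2 (mem_univ (-x)) (mem_univ (-y)) ha hb hab
  have e : a • (-x) + b • (-y) = -(a • x + b • y) := by
    simp [smul_eq_mul]; ring
  rw [e] at h
  exact h

lemma convexOn_continuous {u : ℝ → ℝ} (hu : ConvexOn ℝ Set.univ u) : Continuous u := by
  refine continuous_iff_continuousAt.2 fun z => ?_
  rw [Metric.continuousAt_iff]
  intro ε hε
  set C := |rd u z| + |u (z+1) - u z| + |u z - u (z-1)| with hC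
  have hC0 : 0 ≤ C := by positivity
  refine ⟨min 1 (ε/(C+1)), lt_min one_pos (by positivity), fun {x} hx => ?_⟩
  rw [Real.dist_eq] at hx ⊢
  have hx1 : |x - z| < 1 := lt_of_lt_of_le hx (min_le_left _ _)
  have hx2 : |x - z| < ε/(C+1) := lt_of_lt_of_le hx (min_le_right _ _)
  have habs1 : -1 < x - z := by
    have := abs_lt.1 hx1; exact this.1
  have habs2 : x - z < 1 := (abs_lt.1 hx1).2
  have key : |u x - u z| ≤ C * |x - z| := by
    have htan := tangent hu z x
    have hr1 := le_abs_self (rd u z)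
    have hrdC : |rd u z| ≤ C := by
      rw [hC]; linarith [abs_nonneg (u (z+1) - u z), abs_nonneg (u z - u (z-1))]
    have hs1C : |u z - u (z-1)| ≤ C := by
      rw [hC]; linarith [abs_nonneg (u (z+1) - u z), abs_nonneg (rd u z)]
    have hs2C : |u (z+1) - u z| ≤ C := by
      rw [hC]; linarith [abs_nonneg (u z - u (z-1)), abs_nonneg (rd u z)]
    rcases lt_trichotomy x z with h | h | h
    · -- x < z, and z - 1 < x
      have ha0 : (0:ℝ) ≤ z - x := by linarith
      have habs : |x - z| = z - x := by rw [abs_of_neg (by linarith)]; ring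
      have hb0 : (0:ℝ) ≤ x - z + 1 := by linarith
      have hchord := hu.2 (mem_univ (z-1)) (mem_univ z) ha0 hb0 (by ring)
      have e : (z - x) • (z-1) + (x - z + 1) • z = x := by simp [smul_eq_mul]; ring
      rw [e] at hchord
      simp only [smul_eq_mul] at hchord
      rw [habs, abs_le]
      constructor
      · -- lower bound via tangent
        have hA1 : rd u z * (x - z) = -(rd u z * (z - x)) := by ring
        have hA2 : rd u z * (z-x) ≤ |rd u z| * (z - x) :=
          mul_le_mul_of_nonneg_right hr1 ha0
        have hA4 : |rd u z| * (z-x) ≤ C * (z-x) :=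
          mul_le_mul_of_nonneg_right hrdC ha0
        linarith
      · -- upper bound via chord
        have hB0 : u (z-1) - u z ≤ |u z - u (z-1)| := by
          rw [abs_sub_comm]; exact le_abs_self _
        have hB1 : (z-x) * (u (z-1) - u z) ≤ (z-x) * |u z - u (z-1)| :=
          mul_le_mul_of_nonneg_left hB0 ha0
        have hB2 : (z-x) * |u z - u (z-1)| ≤ (z-x) * C :=
          mul_le_mul_of_nonneg_left hs1C ha0
        have hE : (z - x) * u (z-1) + (x - z + 1) * u z - u z
            = (z-x) * (u (z-1) - u z) := by ring
        nlinarith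
    · subst h
      simp only [sub_self, abs_zero, mul_zero, le_refl]
    · -- z < x < z + 1
      have hb0 : (0:ℝ) ≤ x - z := by linarith
      have habs : |x - z| = x - z := abs_of_pos (by linarith)
      have ha0 : (0:ℝ) ≤ z + 1 - x := by linarith
      have hchord := hu.2 (mem_univ z) (mem_univ (z+1)) ha0 hb0 (by ring)
      have e : (z + 1 - x) • z + (x - z) • (z+1) = x := by simp [smul_eq_mul]; ring
      rw [e] at hchord
      simp only [smul_eq_mul] at hchord
      rw [habs, abs_le]
      constructor
      · have hA2 : (-|rd u z|) * (x-z) ≤ rd u z * (x - z) :=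
          mul_le_mul_of_nonneg_right (neg_abs_le _) hb0
        have hA4 : |rd u z| * (x-z) ≤ C * (x-z) :=
          mul_le_mul_of_nonneg_right hrdC hb0
        nlinarith
      · have hB0 : u (z+1) - u z ≤ |u (z+1) - u z| := le_abs_self _
        have hB1 : (x-z) * (u (z+1) - u z) ≤ (x-z) * |u (z+1) - u z| :=
          mul_le_mul_of_nonneg_left hB0 hb0
        have hB2 : (x-z) * |u (z+1) - u z| ≤ (x-z) * C :=
          mul_le_mul_of_nonneg_left hs2C hb0
        have hE : (z + 1 - x) * u z + (x - z) * u (z+1) - u z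
            = (x-z) * (u (z+1) - u z) := by ring
        nlinarith
  have : C * |x - z| < ε := by
    have h1 : C * |x - z| ≤ C * (ε/(C+1)) :=
      mul_le_mul_of_nonneg_left hx2.le hC0
    have h2 : C * (ε/(C+1)) < ε := by
      rw [mul_div_assoc']
      rw [div_lt_iff₀ (by positivity)]
      nlinarith
    exact lt_of_le_of_lt h1 h2
  calc |u x - u z| ≤ C * |x - z| := key
    _ < ε := this

section CxMain

variable {Ω : Type*} [MeasurableSpace Ω] {μ : Measure Ω} [IsProbabilityMeasure μ]

lemma integral_mono_of_antitone_convex {A B : Ω → ℝ} (hA : Measurable A) (hB : Measurable B)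
    (hSL2 : ∀ t : ℝ, ∫⁻ ω, ENNReal.ofReal (t - A ω) ∂μ ≤ ∫⁻ ω, ENNReal.ofReal (t - B ω) ∂μ)
    {u : ℝ → ℝ} (hu : ConvexOn ℝ Set.univ u) (hua : Antitone u)
    (hIA : Integrable (fun ω => u (A ω)) μ) (hIB : Integrable (fun ω => u (B ω)) μ) :
    ∫ ω, u (A ω) ∂μ ≤ ∫ ω, u (B ω) ∂μ := by
  have h1 : Monotone fun z => u (-z) := fun x y hxy => hua (neg_le_neg hxy)
  have h2 : ConvexOn ℝ Set.univ fun z => u (-z) := convexOn_comp_neg hu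
  have hSL : ∀ t : ℝ, ∫⁻ ω, ENNReal.ofReal ((fun ω => -A ω) ω - t) ∂μ
      ≤ ∫⁻ ω, ENNReal.ofReal ((fun ω => -B ω) ω - t) ∂μ := by
    intro t
    have e1 : ∀ (C : Ω → ℝ), (fun ω => ENNReal.ofReal ((fun ω => -C ω) ω - t))
        = fun ω => ENNReal.ofReal ((-t) - C ω) := by
      intro C; funext ω; congr 1; ring
    rw [e1 A, e1 B]
    exact hSL2 (-t)
  have h3 := integral_mono_of_monotone_convex (μ := μ)
    (A := fun ω => -A ω) (B := fun ω => -B ω) hA.neg hB.neg hSL h2 h1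
    (by simpa using hIA) (by simpa using hIB)
  simpa using h3

lemma integral_mono_of_convex {A B : Ω → ℝ} (hA : Measurable A) (hB : Measurable B)
    (hSL1 : ∀ t : ℝ, ∫⁻ ω, ENNReal.ofReal (A ω - t) ∂μ ≤ ∫⁻ ω, ENNReal.ofReal (B ω - t) ∂μ)
    (hSL2 : ∀ t : ℝ, ∫⁻ ω, ENNReal.ofReal (t - A ω) ∂μ ≤ ∫⁻ ω, ENNReal.ofReal (t - B ω) ∂μ)
    {u : ℝ → ℝ} (hu : ConvexOn ℝ Set.univ u)
    (hIA : Integrable (fun ω => u (A ω)) μ) (hIB : Integrable (fun ω => u (B ω)) μ) :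
    ∫ ω, u (A ω) ∂μ ≤ ∫ ω, u (B ω) ∂μ := by
  by_cases hmon : Monotone u
  · exact integral_mono_of_monotone_convex hA hB hSL1 hu hmon hIA hIB
  by_cases hant : Antitone u
  · exact integral_mono_of_antitone_convex hA hB hSL2 hu hant hIA hIB
  -- u is neither monotone nor antitone: it has an interior global minimum z0
  obtain ⟨c, d, hcd, hucd⟩ : ∃ c d, c < d ∧ u d < u c := by
    by_contra h
    push_neg at h
    exact hmon fun p q hpq => by
      rcases eq_or_lt_of_le hpq with rfl | hlt
      · exact le_rfl
      · exact h p q hlt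
  obtain ⟨a, b, hab, huab⟩ : ∃ a b, a < b ∧ u a < u b := by
    by_contra h
    push_neg at h
    exact hant fun p q hpq => by
      rcases eq_or_lt_of_le hpq with rfl | hlt
      · exact le_rfl
      · exact h p q hlt
  set l := min a c with hl
  set r := max b d with hr
  have hlr : l ≤ r := le_trans (min_le_left _ _) (le_trans hab.le (le_max_left _ _))
  have hcont := convexOn_continuous hu
  obtain ⟨z0, hz0mem, hz0⟩ := (isCompact_Icc (a := l) (b := r)).exists_isMinOn
    ⟨l, left_mem_Icc.2 hlr⟩ hcont.continuousOn
  have hz0min : ∀ x ∈ Icc l r, u z0 ≤ u x := fun x hx => hz0 hx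
  have hglob : ∀ z, u z0 ≤ u z := by
    intro z
    rcases lt_or_ge z l with hzl | hzl
    · -- z < l ≤ c < d : u is "decreasing" there
      have hzc : z < c := lt_of_lt_of_le hzl (min_le_right _ _)
      have hs := slope_mono hu hzc hcd
      have hneg : (u d - u c) / (d - c) < 0 :=
        div_neg_of_neg_of_pos (by linarith) (by linarith)
      have h9 : (u c - u z) / (c - z) < 0 := lt_of_le_of_lt hs hneg
      have h10 : u c - u z < 0 := by
        by_contra h11
        push_neg at h11
        exact absurd (div_nonneg h11 (by linarith)) (not_le.2 h9)
      have hcmem : c ∈ Icc l r := ⟨min_le_right _ _, le_trans hcd.le (le_max_right _ _)⟩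
      linarith [hz0min c hcmem]
    · rcases le_or_gt z r with hzr | hzr
      · exact hz0min z ⟨hzl, hzr⟩
      · have hbz : b < z := lt_of_le_of_lt (le_max_left _ _) hzr
        have hs := slope_mono hu hab hbz
        have hpos : 0 < (u b - u a) / (b - a) :=
          div_pos (by linarith) (by linarith)
        have h9 : 0 < (u z - u b) / (z - b) := lt_of_lt_of_le hpos hs
        have h10 : 0 ≤ u z - u b := by
          by_contra h11
          push_neg at h11
          exact absurd (div_neg_of_neg_of_pos h11 (by linarith)) (not_lt.2 h9.le)
        have hbmem : b ∈ Icc l r := ⟨le_trans (min_le_left _ _) hab.le, le_max_left _ _⟩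
        linarith [hz0min b hbmem]
  -- monotonicity on both sides of z0
  have hmonR : ∀ x y, z0 ≤ x → x ≤ y → u x ≤ u y := by
    intro x y hx hxy
    rcases eq_or_lt_of_le hxy with rfl | hlt
    · exact le_rfl
    rcases eq_or_lt_of_le hx with rfl | hlt2
    · exact hglob y
    have hne : y - z0 ≠ 0 := ne_of_gt (by linarith)
    have ha0 : (0:ℝ) ≤ (y - x)/(y - z0) := div_nonneg (by linarith) (by linarith)
    have hb0 : (0:ℝ) ≤ (x - z0)/(y - z0) := div_nonneg (by linarith) (by linarith)
    have hab1 : (y - x)/(y - z0) + (x - z0)/(y - z0) = 1 := by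
      rw [← add_div, show y - x + (x - z0) = y - z0 by ring]
      exact div_self hne
    have hchord := hu.2 (mem_univ z0) (mem_univ y) ha0 hb0 hab1
    have e : ((y - x)/(y - z0)) • z0 + ((x - z0)/(y - z0)) • y = x := by
      simp only [smul_eq_mul]
      field_simp
      ring
    rw [e] at hchord
    simp only [smul_eq_mul] at hchord
    have h5 : (y - x)/(y - z0) * u z0 ≤ (y - x)/(y - z0) * u y :=
      mul_le_mul_of_nonneg_left (hglob y) ha0
    have h6 : ((y - x)/(y - z0) + (x - z0)/(y - z0)) * u y = u y := by
      rw [hab1, one_mul]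
    linarith
  have hantL : ∀ x y, x ≤ y → y ≤ z0 → u y ≤ u x := by
    intro x y hxy hy
    rcases eq_or_lt_of_le hxy with rfl | hlt
    · exact le_rfl
    rcases eq_or_lt_of_le hy with rfl | hlt2
    · exact hglob x
    have hne : z0 - x ≠ 0 := ne_of_gt (by linarith)
    have ha0 : (0:ℝ) ≤ (z0 - y)/(z0 - x) := div_nonneg (by linarith) (by linarith)
    have hb0 : (0:ℝ) ≤ (y - x)/(z0 - x) := div_nonneg (by linarith) (by linarith)
    have hab1 : (z0 - y)/(z0 - x) + (y - x)/(z0 - x) = 1 := by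
      rw [← add_div, show z0 - y + (y - x) = z0 - x by ring]
      exact div_self hne
    have hchord := hu.2 (mem_univ x) (mem_univ z0) ha0 hb0 hab1
    have e : ((z0 - y)/(z0 - x)) • x + ((y - x)/(z0 - x)) • z0 = y := by
      simp only [smul_eq_mul]
      field_simp
      ring
    rw [e] at hchord
    simp only [smul_eq_mul] at hchord
    have h5 : (y - x)/(z0 - x) * u z0 ≤ (y - x)/(z0 - x) * u x :=
      mul_le_mul_of_nonneg_left (hglob x) hb0
    have h6 : ((z0 - y)/(z0 - x) + (y - x)/(z0 - x)) * u x = u x := by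
      rw [hab1, one_mul]
    linarith
  -- the two monotone pieces
  set w : ℝ → ℝ := fun z => u (max z z0) with hwdef
  set v : ℝ → ℝ := fun z => u (min z z0) with hvdef
  have hwconv : ConvexOn ℝ Set.univ w := by
    refine ⟨convex_univ, fun x _ y _ p q hp hq hpq => ?_⟩
    simp only [hwdef, smul_eq_mul]
    set P := p * max x z0 + q * max y z0 with hP
    have h1 : max (p * x + q * y) z0 ≤ P := by
      refine max_le (add_le_add ?_ ?_) ?_
      · exact mul_le_mul_of_nonneg_left (le_max_left _ _) hp
      · exact mul_le_mul_of_nonneg_left (le_max_left _ _) hq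
      · calc z0 = p * z0 + q * z0 := by rw [← add_mul, hpq, one_mul]
          _ ≤ P := add_le_add (mul_le_mul_of_nonneg_left (le_max_right _ _) hp)
              (mul_le_mul_of_nonneg_left (le_max_right _ _) hq)
    have h2 : u (max (p * x + q * y) z0) ≤ u P :=
      hmonR _ _ (le_max_right _ _) h1
    have h3 := hu.2 (mem_univ (max x z0)) (mem_univ (max y z0)) hp hq hpq
    simp only [smul_eq_mul] at h3
    exact h2.trans h3
  have hvconv : ConvexOn ℝ Set.univ v := by
    refine ⟨convex_univ, fun x _ y _ p q hp hq hpq => ?_⟩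
    simp only [hvdef, smul_eq_mul]
    set P := p * min x z0 + q * min y z0 with hP
    have h1 : P ≤ min (p * x + q * y) z0 := by
      refine le_min (add_le_add ?_ ?_) ?_
      · exact mul_le_mul_of_nonneg_left (min_le_left _ _) hp
      · exact mul_le_mul_of_nonneg_left (min_le_left _ _) hq
      · calc P ≤ p * z0 + q * z0 := add_le_add
              (mul_le_mul_of_nonneg_left (min_le_right _ _) hp)
              (mul_le_mul_of_nonneg_left (min_le_right _ _) hq)
          _ = z0 := by rw [← add_mul, hpq, one_mul]
    have h2 : u (min (p * x + q * y) z0) ≤ u P :=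
      hantL _ _ h1 (min_le_right _ _)
    have h3 := hu.2 (mem_univ (min x z0)) (mem_univ (min y z0)) hp hq hpq
    simp only [smul_eq_mul] at h3
    exact h2.trans h3
  have hwmono : Monotone w := fun x y hxy =>
    hmonR _ _ (le_max_right _ _) (max_le_max hxy le_rfl)
  have hvanti : Antitone v := fun x y hxy =>
    hantL _ _ (min_le_min hxy le_rfl) (min_le_right _ _)
  have hdecomp : ∀ z, u z = v z + w z - u z0 := by
    intro z
    rcases le_total z z0 with h | h
    · simp [hvdef, hwdef, min_eq_left h, max_eq_right h]
    · simp [hvdef, hwdef, min_eq_right h, max_eq_left h]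
  -- integrability of the pieces
  have hvcont : Continuous v := hcont.comp (continuous_id.min continuous_const)
  have hwcont : Continuous w := hcont.comp (continuous_id.max continuous_const)
  have hIpieces : ∀ (C : Ω → ℝ), Measurable C → Integrable (fun ω => u (C ω)) μ →
      Integrable (fun ω => v (C ω)) μ ∧ Integrable (fun ω => w (C ω)) μ := by
    intro C hC hIC
    have hbound : Integrable (fun ω => |u (C ω)| + |u z0|) μ :=
      hIC.abs.add (integrable_const _)
    constructor
    · refine Integrable.mono' hbound
        ((hvcont.measurable.comp hC).aestronglyMeasurable) ?_
      refine Filter.Eventually.of_forall fun ω => ?_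
      rw [Real.norm_eq_abs]
      rcases le_total (C ω) z0 with h | h
      · simp only [hvdef, min_eq_left h]
        linarith [abs_nonneg (u z0)]
      · simp only [hvdef, min_eq_right h]
        linarith [abs_nonneg (u (C ω))]
    · refine Integrable.mono' hbound
        ((hwcont.measurable.comp hC).aestronglyMeasurable) ?_
      refine Filter.Eventually.of_forall fun ω => ?_
      rw [Real.norm_eq_abs]
      rcases le_total (C ω) z0 with h | h
      · simp only [hwdef, max_eq_right h]
        linarith [abs_nonneg (u (C ω))]
      · simp only [hwdef, max_eq_left h]
        linarith [abs_nonneg (u z0)]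
  obtain ⟨hIvA, hIwA⟩ := hIpieces A hA hIA
  obtain ⟨hIvB, hIwB⟩ := hIpieces B hB hIB
  have hw := integral_mono_of_monotone_convex hA hB hSL1 hwconv hwmono hIwA hIwB
  have hv := integral_mono_of_antitone_convex hA hB hSL2 hvconv hvanti hIvA hIvB
  have hsplit : ∀ (C : Ω → ℝ), Integrable (fun ω => v (C ω)) μ →
      Integrable (fun ω => w (C ω)) μ →
      ∫ ω, u (C ω) ∂μ = ∫ ω, v (C ω) ∂μ + ∫ ω, w (C ω) ∂μ - u z0 := by
    intro C hIv hIw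
    have e : (fun ω => u (C ω)) = fun ω => v (C ω) + w (C ω) - u z0 := by
      funext ω; exact hdecomp (C ω)
    have hadd : Integrable (fun ω => v (C ω) + w (C ω)) μ := by
      have := hIv.add hIw
      exact this
    rw [e, integral_sub hadd (integrable_const _), integral_add hIv hIw]
    simp [measure_univ]
  rw [hsplit A hIvA hIwA, hsplit B hIvB hIwB]
  linarith

end CxMain


/-! ### Stop-loss transforms via joint distribution functions -/

section SLIdent

variable {Ω : Type*} [MeasurableSpace Ω] {μ : Measure Ω} [IsProbabilityMeasure μ]

lemma lintegral_lower_sl {X Y : Ω → ℝ} (hX : Measurable X) (hY : Measurable Y) (t : ℝ) :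
    ∫⁻ ω, ENNReal.ofReal (t - (X ω + Y ω)) ∂μ
      = ∫⁻ a, μ {ω | X ω ≤ a ∧ Y ω ≤ t - a} ∂(volume : Measure ℝ) := by
  set f : Ω → ℝ → ℝ≥0∞ := fun ω a =>
    Set.indicator (Icc (X ω) (t - Y ω)) (fun _ => (1:ℝ≥0∞)) a with hf
  have hSm : MeasurableSet {p : Ω × ℝ | X p.1 ≤ p.2 ∧ p.2 ≤ t - Y p.1} := by
    have : {p : Ω × ℝ | X p.1 ≤ p.2 ∧ p.2 ≤ t - Y p.1}
        = {p : Ω × ℝ | X p.1 ≤ p.2} ∩ {p : Ω × ℝ | p.2 ≤ t - Y p.1} := rfl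
    rw [this]
    exact (measurableSet_le (hX.comp measurable_fst) measurable_snd).inter
      (measurableSet_le measurable_snd (measurable_const.sub (hY.comp measurable_fst)))
  have huncurry : Function.uncurry f
      = Set.indicator {p : Ω × ℝ | X p.1 ≤ p.2 ∧ p.2 ≤ t - Y p.1} (fun _ => (1:ℝ≥0∞)) := by
    funext p
    simp only [Function.uncurry, hf, Set.indicator_apply, Set.mem_Icc, Set.mem_setOf_eq]
  have hmeas : Measurable (Function.uncurry f) := by
    rw [huncurry]
    exact measurable_const.indicator hSm
  calc ∫⁻ ω, ENNReal.ofReal (t - (X ω + Y ω)) ∂μ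
      = ∫⁻ ω, volume (Icc (X ω) (t - Y ω)) ∂μ := by
        refine lintegral_congr fun ω => ?_
        rw [Real.volume_Icc]
        congr 1
        ring
    _ = ∫⁻ ω, ∫⁻ a, f ω a ∂(volume : Measure ℝ) ∂μ := by
        refine lintegral_congr fun ω => ?_
        rw [hf]
        exact (lintegral_indicator_one measurableSet_Icc).symm
    _ = ∫⁻ a, ∫⁻ ω, f ω a ∂μ ∂(volume : Measure ℝ) :=
        lintegral_lintegral_swap hmeas.aemeasurable
    _ = ∫⁻ a, μ {ω | X ω ≤ a ∧ Y ω ≤ t - a} ∂(volume : Measure ℝ) := by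
        refine lintegral_congr fun a => ?_
        have he : (fun ω => f ω a)
            = Set.indicator {ω | X ω ≤ a ∧ Y ω ≤ t - a} (fun _ => (1:ℝ≥0∞)) := by
          funext ω
          simp only [hf, Set.indicator_apply, Set.mem_Icc, Set.mem_setOf_eq]
          congr 1
          simp only [eq_iff_iff]
          constructor
          · rintro ⟨h1, h2⟩; exact ⟨h1, by linarith⟩
          · rintro ⟨h1, h2⟩; exact ⟨h1, by linarith⟩
        rw [he]
        refine lintegral_indicator_one ?_
        exact (measurableSet_le hX measurable_const).inter
          (measurableSet_le hY measurable_const)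

lemma lintegral_upper_sl {X Y : Ω → ℝ} (hX : Measurable X) (hY : Measurable Y) (t : ℝ) :
    ∫⁻ ω, ENNReal.ofReal ((X ω + Y ω) - t) ∂μ
      = ∫⁻ a, μ {ω | a < X ω ∧ t - a < Y ω} ∂(volume : Measure ℝ) := by
  set f : Ω → ℝ → ℝ≥0∞ := fun ω a =>
    Set.indicator (Ioo (t - Y ω) (X ω)) (fun _ => (1:ℝ≥0∞)) a with hf
  have hSm : MeasurableSet {p : Ω × ℝ | t - Y p.1 < p.2 ∧ p.2 < X p.1} := by
    have : {p : Ω × ℝ | t - Y p.1 < p.2 ∧ p.2 < X p.1}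
        = {p : Ω × ℝ | t - Y p.1 < p.2} ∩ {p : Ω × ℝ | p.2 < X p.1} := rfl
    rw [this]
    exact (measurableSet_lt (measurable_const.sub (hY.comp measurable_fst)) measurable_snd).inter
      (measurableSet_lt measurable_snd (hX.comp measurable_fst))
  have huncurry : Function.uncurry f
      = Set.indicator {p : Ω × ℝ | t - Y p.1 < p.2 ∧ p.2 < X p.1} (fun _ => (1:ℝ≥0∞)) := by
    funext p
    simp only [Function.uncurry, hf, Set.indicator_apply, Set.mem_Ioo, Set.mem_setOf_eq]
  have hmeas : Measurable (Function.uncurry f) := by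
    rw [huncurry]
    exact measurable_const.indicator hSm
  calc ∫⁻ ω, ENNReal.ofReal ((X ω + Y ω) - t) ∂μ
      = ∫⁻ ω, volume (Ioo (t - Y ω) (X ω)) ∂μ := by
        refine lintegral_congr fun ω => ?_
        rw [Real.volume_Ioo]
        congr 1
        ring
    _ = ∫⁻ ω, ∫⁻ a, f ω a ∂(volume : Measure ℝ) ∂μ := by
        refine lintegral_congr fun ω => ?_
        rw [hf]
        exact (lintegral_indicator_one measurableSet_Ioo).symm
    _ = ∫⁻ a, ∫⁻ ω, f ω a ∂μ ∂(volume : Measure ℝ) :=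
        lintegral_lintegral_swap hmeas.aemeasurable
    _ = ∫⁻ a, μ {ω | a < X ω ∧ t - a < Y ω} ∂(volume : Measure ℝ) := by
        refine lintegral_congr fun a => ?_
        have he : (fun ω => f ω a)
            = Set.indicator {ω | a < X ω ∧ t - a < Y ω} (fun _ => (1:ℝ≥0∞)) := by
          funext ω
          simp only [hf, Set.indicator_apply, Set.mem_Ioo, Set.mem_setOf_eq]
          congr 1
          simp only [eq_iff_iff]
          constructor
          · rintro ⟨h1, h2⟩; exact ⟨h2, by linarith⟩
          · rintro ⟨h1, h2⟩; exact ⟨by linarith, h1⟩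
        rw [he]
        refine lintegral_indicator_one ?_
        exact (measurableSet_lt measurable_const hX).inter
          (measurableSet_lt measurable_const hY)

lemma compl_inter_identity {X Y : Ω → ℝ} (hX : Measurable X) (hY : Measurable Y) (a b : ℝ) :
    μ {ω | a < X ω ∧ b < Y ω} + μ {ω | X ω ≤ a} + μ {ω | Y ω ≤ b}
      = 1 + μ {ω | X ω ≤ a ∧ Y ω ≤ b} := by
  set A := {ω | X ω ≤ a} with hA
  set B := {ω | Y ω ≤ b} with hB
  have hAm : MeasurableSet A := measurableSet_le hX measurable_const
  have hBm : MeasurableSet B := measurableSet_le hY measurable_const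
  have hCeq : {ω | a < X ω ∧ b < Y ω} = (A ∪ B)ᶜ := by
    ext ω
    simp [hA, hB, not_or, not_le]
  have hIeq : {ω | X ω ≤ a ∧ Y ω ≤ b} = A ∩ B := rfl
  have h1 : μ ((A ∪ B)ᶜ) + μ (A ∪ B) = 1 := by
    rw [add_comm]
    rw [measure_add_measure_compl (hAm.union hBm)]
    exact measure_univ
  have h2 : μ (A ∪ B) + μ (A ∩ B) = μ A + μ B := measure_union_add_inter A hBm
  calc μ {ω | a < X ω ∧ b < Y ω} + μ A + μ B
      = μ ((A ∪ B)ᶜ) + (μ A + μ B) := by rw [hCeq, add_assoc]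
    _ = μ ((A ∪ B)ᶜ) + (μ (A ∪ B) + μ (A ∩ B)) := by rw [h2]
    _ = (μ ((A ∪ B)ᶜ) + μ (A ∪ B)) + μ (A ∩ B) := by rw [add_assoc]
    _ = 1 + μ (A ∩ B) := by rw [h1]
    _ = 1 + μ {ω | X ω ≤ a ∧ Y ω ≤ b} := by rw [hIeq]

lemma survival_mono {X Y X' Y' : Ω → ℝ}
    (hX : Measurable X) (hY : Measurable Y) (hX' : Measurable X') (hY' : Measurable Y')
    (hmX : ∀ a, μ {ω | X' ω ≤ a} = μ {ω | X ω ≤ a})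
    (hmY : ∀ b, μ {ω | Y' ω ≤ b} = μ {ω | Y ω ≤ b})
    (hH : ∀ a b, μ {ω | X' ω ≤ a ∧ Y' ω ≤ b} ≤ μ {ω | X ω ≤ a ∧ Y ω ≤ b})
    (a b : ℝ) :
    μ {ω | a < X' ω ∧ b < Y' ω} ≤ μ {ω | a < X ω ∧ b < Y ω} := by
  have e1 := compl_inter_identity (μ := μ) hX' hY' a b
  rw [hmX a, hmY b] at e1
  have e2 := compl_inter_identity (μ := μ) hX hY a b
  have key : μ {ω | a < X' ω ∧ b < Y' ω} + μ {ω | X ω ≤ a} + μ {ω | Y ω ≤ b}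
      ≤ μ {ω | a < X ω ∧ b < Y ω} + μ {ω | X ω ≤ a} + μ {ω | Y ω ≤ b} := by
    rw [e1, e2]
    exact add_le_add_right (hH a b) 1
  have k1 := (ENNReal.add_le_add_iff_right (measure_ne_top μ _)).1 key
  exact (ENNReal.add_le_add_iff_right (measure_ne_top μ _)).1 k1

/-- Stop-loss comparisons from pointwise comparison of joint distribution functions. -/
lemma sl_of_joint {X Y X' Y' : Ω → ℝ}
    (hX : Measurable X) (hY : Measurable Y) (hX' : Measurable X') (hY' : Measurable Y')
    (hmX : ∀ a, μ {ω | X' ω ≤ a} = μ {ω | X ω ≤ a})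
    (hmY : ∀ b, μ {ω | Y' ω ≤ b} = μ {ω | Y ω ≤ b})
    (hH : ∀ a b, μ {ω | X' ω ≤ a ∧ Y' ω ≤ b} ≤ μ {ω | X ω ≤ a ∧ Y ω ≤ b}) :
    (∀ t : ℝ, ∫⁻ ω, ENNReal.ofReal ((X' ω + Y' ω) - t) ∂μ
        ≤ ∫⁻ ω, ENNReal.ofReal ((X ω + Y ω) - t) ∂μ) ∧
    (∀ t : ℝ, ∫⁻ ω, ENNReal.ofReal (t - (X' ω + Y' ω)) ∂μ
        ≤ ∫⁻ ω, ENNReal.ofReal (t - (X ω + Y ω)) ∂μ) := by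
  constructor
  · intro t
    rw [lintegral_upper_sl hX' hY' t, lintegral_upper_sl hX hY t]
    exact lintegral_mono fun a => survival_mono hX hY hX' hY' hmX hmY hH a (t - a)
  · intro t
    rw [lintegral_lower_sl hX' hY' t, lintegral_lower_sl hX hY t]
    exact lintegral_mono fun a => hH a (t - a)

end SLIdent

end CxOrderAux

section Glue

variable {μ : Measure Ω} [IsProbabilityMeasure μ]

lemma HasCDF.toReal_eq {X : Ω → ℝ} {F : ℝ → ℝ} (h : HasCDF μ X F) (a : ℝ) :
    (μ {ω | X ω ≤ a}).toReal = F a := h.2 a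

lemma HasCDF.measure_eq {X : Ω → ℝ} {F : ℝ → ℝ} (h : HasCDF μ X F) (a : ℝ) :
    μ {ω | X ω ≤ a} = ENNReal.ofReal (F a) := by
  rw [← h.toReal_eq a]
  exact (ENNReal.ofReal_toReal (measure_ne_top μ _)).symm

/-- The DL coupling has the pointwise smallest joint distribution function among
ordered couplings. -/
lemma dl_joint_le {F G : ℝ → ℝ} {X' Y' X Y : Ω → ℝ}
    (hd : OrderedCoupling μ F G X' Y') (hDL : IsDLCoupled μ F G X' Y')
    (h : OrderedCoupling μ F G X Y) (a b : ℝ) :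
    μ {ω | X' ω ≤ a ∧ Y' ω ≤ b} ≤ μ {ω | X ω ≤ a ∧ Y ω ≤ b} := by
  obtain ⟨⟨hXm, hXF⟩, ⟨hYm, hYG⟩, hord⟩ := h
  rw [← ENNReal.ofReal_toReal (measure_ne_top μ {ω | X' ω ≤ a ∧ Y' ω ≤ b}),
    ← ENNReal.ofReal_toReal (measure_ne_top μ {ω | X ω ≤ a ∧ Y ω ≤ b})]
  apply ENNReal.ofReal_le_ofReal
  rw [hDL a b]
  by_cases hba : b ≤ a
  · rw [DLdf, if_pos hba]
    have h1 : μ {ω | Y ω ≤ b} ≤ μ {ω | X ω ≤ a ∧ Y ω ≤ b} := by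
      refine measure_mono_ae ?_
      filter_upwards [hord] with ω hω hmem
      exact ⟨le_trans hω (le_trans hmem hba), hmem⟩
    have h2 := ENNReal.toReal_mono (measure_ne_top μ _) h1
    rw [← hYG b]
    exact h2
  · push_neg at hba
    rw [DLdf, if_neg (not_le.2 hba)]
    set H := (μ {ω | X ω ≤ a ∧ Y ω ≤ b}).toReal with hHdef
    have key : ∀ z ∈ Icc a b, F a + G z ≤ F z + H := by
      intro z hz
      obtain ⟨haz, hzb⟩ := hz
      -- split {X ≤ a}
      have e1 : μ ({ω | X ω ≤ a} ∩ {ω | Y ω ≤ b}) + μ ({ω | X ω ≤ a} \ {ω | Y ω ≤ b})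
          = μ {ω | X ω ≤ a} :=
        measure_inter_add_diff _ (measurableSet_le hYm measurable_const)
      have ed1 : {ω | X ω ≤ a} \ {ω | Y ω ≤ b} = {ω | X ω ≤ a ∧ b < Y ω} := by
        ext ω; simp [not_le, Set.mem_diff]
      have ei1 : {ω | X ω ≤ a} ∩ {ω | Y ω ≤ b} = {ω | X ω ≤ a ∧ Y ω ≤ b} := rfl
      rw [ed1, ei1] at e1
      have e2 : μ {ω | X ω ≤ a ∧ b < Y ω} ≤ μ {ω | X ω ≤ z ∧ z < Y ω} := by
        refine measure_mono fun ω hω => ?_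
        exact ⟨le_trans hω.1 haz, lt_of_le_of_lt hzb hω.2⟩
      have e3 : μ ({ω | X ω ≤ z} ∩ {ω | Y ω ≤ z}) + μ ({ω | X ω ≤ z} \ {ω | Y ω ≤ z})
          = μ {ω | X ω ≤ z} :=
        measure_inter_add_diff _ (measurableSet_le hYm measurable_const)
      have ed3 : {ω | X ω ≤ z} \ {ω | Y ω ≤ z} = {ω | X ω ≤ z ∧ z < Y ω} := by
        ext ω; simp [not_le, Set.mem_diff]
      rw [ed3] at e3
      have e4 : μ ({ω | X ω ≤ z} ∩ {ω | Y ω ≤ z}) = μ {ω | Y ω ≤ z} := by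
        refine measure_congr ?_
        rw [eventuallyEq_set]
        filter_upwards [hord] with ω hω
        exact ⟨fun hm => hm.2, fun hm => ⟨le_trans hω hm, hm⟩⟩
      rw [e4] at e3
      -- translate to reals
      have r1 : H + (μ {ω | X ω ≤ a ∧ b < Y ω}).toReal = F a := by
        have e5 : (μ {ω | X ω ≤ a ∧ Y ω ≤ b}).toReal + (μ {ω | X ω ≤ a ∧ b < Y ω}).toReal
            = (μ {ω | X ω ≤ a}).toReal := by
          rw [← ENNReal.toReal_add (measure_ne_top μ _) (measure_ne_top μ _), e1]
        rw [hHdef, ← hXF a]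
        exact e5
      have r2 : (μ {ω | X ω ≤ a ∧ b < Y ω}).toReal ≤ (μ {ω | X ω ≤ z ∧ z < Y ω}).toReal :=
        ENNReal.toReal_mono (measure_ne_top μ _) e2
      have r3 : G z + (μ {ω | X ω ≤ z ∧ z < Y ω}).toReal = F z := by
        have e5 : (μ {ω | Y ω ≤ z}).toReal + (μ {ω | X ω ≤ z ∧ z < Y ω}).toReal
            = (μ {ω | X ω ≤ z}).toReal := by
          rw [← ENNReal.toReal_add (measure_ne_top μ _) (measure_ne_top μ _), e3]
        rw [← hYG z, ← hXF z]
        exact e5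
      linarith
    have hne : ((fun z => F z - G z) '' Icc a b).Nonempty :=
      ⟨F a - G a, a, left_mem_Icc.2 hba.le, rfl⟩
    have h2 : F a - H ≤ sInf ((fun z => F z - G z) '' Icc a b) := by
      refine le_csInf hne ?_
      rintro r ⟨z, hz, rfl⟩
      show F a - H ≤ F z - G z
      linarith [key z hz]
    linarith

/-- Any ordered coupling has joint distribution function below the comonotonic one. -/
lemma joint_le_cm {F G : ℝ → ℝ} {X Y Xc Yc : Ω → ℝ}
    (h : OrderedCoupling μ F G X Y) (hc : OrderedCoupling μ F G Xc Yc)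
    (hcom : Comonotonic μ Xc Yc) (a b : ℝ) :
    μ {ω | X ω ≤ a ∧ Y ω ≤ b} ≤ μ {ω | Xc ω ≤ a ∧ Yc ω ≤ b} := by
  obtain ⟨U, f, g, hf, hg, haeX, haeY⟩ := hcom
  have hXa : μ {ω | Xc ω ≤ a} = μ {ω | f (U ω) ≤ a} := by
    refine measure_congr ?_
    rw [eventuallyEq_set]
    filter_upwards [haeX] with ω hω
    simp [hω]
  have hYb : μ {ω | Yc ω ≤ b} = μ {ω | g (U ω) ≤ b} := by
    refine measure_congr ?_
    rw [eventuallyEq_set]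
    filter_upwards [haeY] with ω hω
    simp [hω]
  have hjoint : μ {ω | Xc ω ≤ a ∧ Yc ω ≤ b} = μ {ω | f (U ω) ≤ a ∧ g (U ω) ≤ b} := by
    refine measure_congr ?_
    rw [eventuallyEq_set]
    filter_upwards [haeX, haeY] with ω h1 h2
    simp [h1, h2]
  have hnested : {v : ℝ | f v ≤ a} ⊆ {v : ℝ | g v ≤ b} ∨
      {v : ℝ | g v ≤ b} ⊆ {v : ℝ | f v ≤ a} := by
    by_cases hsub : {v : ℝ | f v ≤ a} ⊆ {v : ℝ | g v ≤ b}
    · exact Or.inl hsub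
    · right
      rw [Set.not_subset] at hsub
      obtain ⟨v0, hv0f, hv0g⟩ := hsub
      intro v hv
      simp only [mem_setOf_eq] at *
      rcases le_total v v0 with hvv | hvv
      · exact le_trans (hf hvv) hv0f
      · exact absurd (le_trans (hg hvv) hv) hv0g
  have hmin : μ {ω | f (U ω) ≤ a ∧ g (U ω) ≤ b}
      = min (μ {ω | f (U ω) ≤ a}) (μ {ω | g (U ω) ≤ b}) := by
    rcases hnested with hsub | hsub
    · have hseteq : {ω | f (U ω) ≤ a ∧ g (U ω) ≤ b} = {ω | f (U ω) ≤ a} := by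
        ext ω
        simp only [mem_setOf_eq]
        exact ⟨fun hm => hm.1, fun hm => ⟨hm, hsub hm⟩⟩
      rw [hseteq, min_eq_left]
      exact measure_mono fun ω hω => hsub hω
    · have hseteq : {ω | f (U ω) ≤ a ∧ g (U ω) ≤ b} = {ω | g (U ω) ≤ b} := by
        ext ω
        simp only [mem_setOf_eq]
        exact ⟨fun hm => hm.2, fun hm => ⟨hsub hm, hm⟩⟩
      rw [hseteq, min_eq_right]
      exact measure_mono fun ω hω => hsub hω
  have hgoal : μ {ω | X ω ≤ a ∧ Y ω ≤ b}
      ≤ min (μ {ω | Xc ω ≤ a}) (μ {ω | Yc ω ≤ b}) := by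
    refine le_min ?_ ?_
    · rw [hc.1.measure_eq a, ← h.1.measure_eq a]
      exact measure_mono fun ω hω => hω.1
    · rw [hc.2.1.measure_eq b, ← h.2.1.measure_eq b]
      exact measure_mono fun ω hω => hω.2
  rw [hjoint, hmin, ← hXa, ← hYb]
  exact hgoal

end Glue

/-- For a `≤_cx`-consistent risk measure, the DL-coupled sum attains the best
case and the comonotonic sum attains the worst case over `F^o_2(F,G)`. -/
theorem cxConsistent_bounds
    (μ : Measure Ω) [IsProbabilityMeasure μ] (hμ : Atomless μ)
    (F G : ℝ → ℝ) (hF : IsCDF F) (hG : IsCDF G) (hst : StOrder F G)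
    (ρ : (ℝ → ℝ) → ℝ) (hρ : CxConsistent μ ρ)
    (Xc Yc X' Y' : Ω → ℝ)
    (hc : OrderedCoupling μ F G Xc Yc) (hcom : Comonotonic μ Xc Yc)
    (hd : OrderedCoupling μ F G X' Y') (hDL : IsDLCoupled μ F G X' Y') :
    sInf {r : ℝ | ∃ X Y : Ω → ℝ, OrderedCoupling μ F G X Y ∧
        r = ρ (distFun μ (fun ω => X ω + Y ω))} =
      ρ (distFun μ (fun ω => X' ω + Y' ω)) ∧
    (∀ X Y : Ω → ℝ, OrderedCoupling μ F G X Y →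
      ρ (distFun μ (fun ω => X' ω + Y' ω)) ≤ ρ (distFun μ (fun ω => X ω + Y ω)) ∧
      ρ (distFun μ (fun ω => X ω + Y ω)) ≤ ρ (distFun μ (fun ω => Xc ω + Yc ω))) ∧
    sSup {r : ℝ | ∃ X Y : Ω → ℝ, OrderedCoupling μ F G X Y ∧
        r = ρ (distFun μ (fun ω => X ω + Y ω))} =
      ρ (distFun μ (fun ω => Xc ω + Yc ω)) := by
  -- measurability of the given couplings
  have hX'm : Measurable X' := hd.1.1
  have hY'm : Measurable Y' := hd.2.1.1
  have hXcm : Measurable Xc := hc.1.1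
  have hYcm : Measurable Yc := hc.2.1.1
  -- the middle (pointwise) statement
  have middle : ∀ X Y : Ω → ℝ, OrderedCoupling μ F G X Y →
      ρ (distFun μ (fun ω => X' ω + Y' ω)) ≤ ρ (distFun μ (fun ω => X ω + Y ω)) ∧
      ρ (distFun μ (fun ω => X ω + Y ω)) ≤ ρ (distFun μ (fun ω => Xc ω + Yc ω)) := by
    intro X Y h
    have hXm : Measurable X := h.1.1
    have hYm : Measurable Y := h.2.1.1
    constructor
    · -- lower bound via the DL coupling
      have hH : ∀ a b : ℝ, μ {ω | X' ω ≤ a ∧ Y' ω ≤ b} ≤ μ {ω | X ω ≤ a ∧ Y ω ≤ b} :=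
        fun a b => dl_joint_le hd hDL h a b
      have hmX : ∀ a, μ {ω | X' ω ≤ a} = μ {ω | X ω ≤ a} := fun a => by
        rw [hd.1.measure_eq a, h.1.measure_eq a]
      have hmY : ∀ b, μ {ω | Y' ω ≤ b} = μ {ω | Y ω ≤ b} := fun b => by
        rw [hd.2.1.measure_eq b, h.2.1.measure_eq b]
      obtain ⟨hSL1, hSL2⟩ := CxOrderAux.sl_of_joint hXm hYm hX'm hY'm hmX hmY hH
      refine hρ _ _ (hX'm.add hY'm) (hXm.add hYm) ?_
      intro u hu hIA hIB
      exact CxOrderAux.integral_mono_of_convex (hX'm.add hY'm) (hXm.add hYm)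
        hSL1 hSL2 hu hIA hIB
    · -- upper bound via the comonotonic coupling
      have hH : ∀ a b : ℝ, μ {ω | X ω ≤ a ∧ Y ω ≤ b} ≤ μ {ω | Xc ω ≤ a ∧ Yc ω ≤ b} :=
        fun a b => joint_le_cm h hc hcom a b
      have hmX : ∀ a, μ {ω | X ω ≤ a} = μ {ω | Xc ω ≤ a} := fun a => by
        rw [h.1.measure_eq a, hc.1.measure_eq a]
      have hmY : ∀ b, μ {ω | Y ω ≤ b} = μ {ω | Yc ω ≤ b} := fun b => by
        rw [h.2.1.measure_eq b, hc.2.1.measure_eq b]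
      obtain ⟨hSL1, hSL2⟩ := CxOrderAux.sl_of_joint hXcm hYcm hXm hYm hmX hmY hH
      refine hρ _ _ (hXm.add hYm) (hXcm.add hYcm) ?_
      intro u hu hIA hIB
      exact CxOrderAux.integral_mono_of_convex (hXm.add hYm) (hXcm.add hYcm)
        hSL1 hSL2 hu hIA hIB
  have hmemInf : ρ (distFun μ (fun ω => X' ω + Y' ω)) ∈
      {r : ℝ | ∃ X Y : Ω → ℝ, OrderedCoupling μ F G X Y ∧
        r = ρ (distFun μ (fun ω => X ω + Y ω))} := ⟨X', Y', hd, rfl⟩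
  have hmemSup : ρ (distFun μ (fun ω => Xc ω + Yc ω)) ∈
      {r : ℝ | ∃ X Y : Ω → ℝ, OrderedCoupling μ F G X Y ∧
        r = ρ (distFun μ (fun ω => X ω + Y ω))} := ⟨Xc, Yc, hc, rfl⟩
  refine ⟨?_, middle, ?_⟩
  · apply le_antisymm
    · refine csInf_le ⟨ρ (distFun μ (fun ω => X' ω + Y' ω)), ?_⟩ hmemInf
      rintro r ⟨X, Y, hXY, rfl⟩
      exact (middle X Y hXY).1
    · refine le_csInf ⟨_, hmemInf⟩ ?_
      rintro r ⟨X, Y, hXY, rfl⟩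
      exact (middle X Y hXY).1
  · apply le_antisymm
    · refine csSup_le ⟨_, hmemSup⟩ ?_
      rintro r ⟨X, Y, hXY, rfl⟩
      exact (middle X Y hXY).2
    · refine le_csSup ⟨ρ (distFun μ (fun ω => Xc ω + Yc ω)), ?_⟩ hmemSup
      rintro r ⟨X, Y, hXY, rfl⟩
      exact (middle X Y hXY).2
end
end

section
/- Let F and G be cumulative distribution functions on ℝ. If G^{-1}(0) = −∞ (i.e., G has unbounded support from below) and F ≤_ss G, then F = G. -/
open MeasureTheory Set Filter

noncomputable section

/-- The essential infimum of a distribution, `G^{-1}(0) = inf {t | G t > 0}`,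
as an extended real (possibly `⊥`). -/
def leftEnd (F : ℝ → ℝ) : EReal :=
  sInf ((fun t : ℝ => (t : EReal)) '' {t : ℝ | 0 < F t})

/-- Strong stochastic order `F ≤_ss G`:
`G(y) − G(x) ≥ F(y) − F(x)` for all `y ≥ x ≥ G^{-1}(0)`. -/
def SSOrder (F G : ℝ → ℝ) : Prop :=
  ∀ x y : ℝ, leftEnd G ≤ (x : EReal) → x ≤ y → F y - F x ≤ G y - G x

theorem Monotone.eq_const_of_tendsto_atBot_atTop {α β : Type*} [TopologicalSpace α]
    [PartialOrder α] [OrderClosedTopology α] [Preorder β] [IsDirectedOrder β]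
    [IsCodirectedOrder β] {f : β → α} {a : α} (hf : Monotone f)
    (hbot : Tendsto f atBot (nhds a)) (htop : Tendsto f atTop (nhds a)) :
    f = fun _ => a :=
  funext fun b => le_antisymm (hf.ge_of_tendsto htop b) (hf.le_of_tendsto hbot b)

theorem SSOrder.monotone_sub_of_leftEnd_eq_bot {F G : ℝ → ℝ} (h : SSOrder F G)
    (h0 : leftEnd G = ⊥) : Monotone (G - F) := fun x y hxy => by
  have := h x y (h0 ▸ bot_le) hxy
  simp only [Pi.sub_apply]
  linarith

/-- If `G` has support unbounded from below, then `F ≤_ss G` forces `F = G`. -/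
theorem ssOrder_eq_of_leftEnd_bot (F G : ℝ → ℝ) (hF : IsCDF F) (hG : IsCDF G)
    (h0 : leftEnd G = ⊥) (h : SSOrder F G) : F = G := by
  have hbot : Tendsto (G - F) atBot (nhds 0) :=
    sub_self (0 : ℝ) ▸ hG.tendsto_atBot.sub hF.tendsto_atBot
  have htop : Tendsto (G - F) atTop (nhds 0) :=
    sub_self (1 : ℝ) ▸ hG.tendsto_atTop.sub hF.tendsto_atTop
  have hzero : G - F = 0 :=
    (h.monotone_sub_of_leftEnd_eq_bot h0).eq_const_of_tendsto_atBot_atTop hbot htop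
  exact (sub_eq_zero.mp hzero).symm
end
end
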